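/- arXiv:2311.11338 — 5 statements merged into one kernel-verified Lean document; each statement's English description precedes it below -/
import Mathlib

section
/- Let (F,μ) be an RDS of continuous maps on a compact metric space (M,D). If (F,μ) is synchronizing, i.e. for every x,y ∈ M and μ^ℕ-almost every i ∈ F^ℕ one has D(X_n^x(i), X_n^y(i)) → 0 as n → ∞, then there is at most one μ-stationary Borel probability measure on M; that is, any two μ-stationary probability measures ν₁ and ν₂ are equal. -/
open MeasureTheory Topology Filter
open scoped Uniformity NNReal

noncomputable section

/-- `rdsIter i n` is the composition `i (n-1) ∘ ⋯ ∘ i 0`, i.e. the random orbit map `f_i^n`. -/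
def rdsIter {M : Type*} [TopologicalSpace M] (i : ℕ → C(M, M)) : ℕ → M → M
  | 0, x => x
  | n + 1, x => i n (rdsIter i n x)

/-- `P` is the infinite product of copies of `μ` (the measure `μ^ℕ`). -/
def IsProductMeasure {Ω : Type*} [MeasurableSpace Ω] (μ : Measure Ω)
    (P : Measure (ℕ → Ω)) : Prop :=
  IsProbabilityMeasure P ∧
    ∀ (n : ℕ) (s : Fin n → Set Ω), (∀ k, MeasurableSet (s k)) →
      P {ω | ∀ k : Fin n, ω (k : ℕ) ∈ s k} = ∏ k : Fin n, μ (s k)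

/-- The topological support of a measure. -/
def measSupp {Ω : Type*} [TopologicalSpace Ω] [MeasurableSpace Ω] (μ : Measure Ω) : Set Ω :=
  {f | ∀ U : Set Ω, IsOpen U → f ∈ U → 0 < μ U}

/-- Property (P): proximality (of `F = supp μ`). -/
def PropP {M : Type*} [MetricSpace M] [CompactSpace M] [MeasurableSpace C(M, M)]
    (μ : Measure C(M, M)) : Prop :=
  ∀ x y : M, ∃ i : ℕ → C(M, M), (∀ n, i n ∈ measSupp μ) ∧
    ∃ φ : ℕ → ℕ, StrictMono φ ∧
      Tendsto (fun k => dist (rdsIter i (φ k) x) (rdsIter i (φ k) y)) atTop (𝓝 0)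

/-- Property (LC): local contraction with rate `q`. -/
def PropLC {M : Type*} [MetricSpace M] [CompactSpace M] [MeasurableSpace C(M, M)]
    (P : Measure (ℕ → C(M, M))) (q : ℝ) : Prop :=
  ∀ x : M, ∀ᵐ i ∂P, ∃ B ∈ 𝓝 x, ∀ n : ℕ, Metric.diam (rdsIter i n '' B) ≤ q ^ n

/-- `ν` is a `μ`-stationary measure. -/
def IsRDSStationary {M : Type*} [MetricSpace M] [CompactSpace M] [MeasurableSpace M]
    [MeasurableSpace C(M, M)] (μ : Measure C(M, M)) (ν : Measure M) : Prop :=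
  ∀ A : Set M, MeasurableSet A → ν A = ∫⁻ f, ν (⇑f ⁻¹' A) ∂μ

namespace StmtAux

/-- Finite iteration of a finite tuple of maps. -/
def iterF {M : Type*} [TopologicalSpace M] : (n : ℕ) → (Fin n → C(M, M)) → M → M
  | 0, _, x => x
  | n + 1, j, x => j (Fin.last n) (iterF n (fun k => j k.castSucc) x)

lemma iterF_succ {M : Type*} [TopologicalSpace M] (n : ℕ) (j : Fin (n+1) → C(M, M)) (x : M) :
    iterF (n + 1) j x = j (Fin.last n) (iterF n (fun k => j k.castSucc) x) := rfl

lemma iterF_insertNth {M : Type*} [TopologicalSpace M] (n : ℕ) (f : C(M, M))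
    (j : Fin n → C(M, M)) (x : M) :
    iterF (n + 1) ((Fin.last n).insertNth f j) x = f (iterF n j x) := by
  rw [iterF_succ, Fin.insertNth_apply_same]
  congr 1
  congr 1
  funext k
  rw [← Fin.succAbove_last, Fin.insertNth_apply_succAbove]

lemma iterF_eq {M : Type*} [TopologicalSpace M] (i : ℕ → C(M, M)) :
    ∀ (n : ℕ) (x : M), iterF n (fun k : Fin n => i k) x = rdsIter i n x := by
  intro n
  induction n with
  | zero => intro x; rfl
  | succ n ih =>
    intro x
    rw [iterF_succ]
    show i (Fin.last n : Fin (n+1)) (iterF n (fun k : Fin n => i (k.castSucc : Fin (n+1))) x)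
        = i n (rdsIter i n x)
    simp only [Fin.coe_castSucc, Fin.val_last]
    rw [ih]

variable {M : Type*} [MetricSpace M] [CompactSpace M]
    [MeasurableSpace M] [BorelSpace M]
    [MeasurableSpace C(M, M)] [BorelSpace C(M, M)]

lemma measurable_ev : Measurable (fun p : C(M, M) × M => p.1 p.2) :=
  ContinuousEval.continuous_eval.measurable

lemma measurable_iterF (n : ℕ) :
    Measurable (fun p : (Fin n → C(M, M)) × M => iterF n p.1 p.2) := by
  induction n with
  | zero => exact measurable_snd
  | succ n ih =>
    simp only [iterF_succ]
    have h1 : Measurable (fun p : (Fin (n+1) → C(M, M)) × M =>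
        ((fun k : Fin n => p.1 k.castSucc, p.2) : (Fin n → C(M, M)) × M)) :=
      (measurable_pi_lambda _ fun k =>
        (measurable_pi_apply _).comp measurable_fst).prodMk measurable_snd
    have h2 : Measurable (fun p : (Fin (n+1) → C(M, M)) × M =>
        iterF n (fun k : Fin n => p.1 k.castSucc) p.2) := ih.comp h1
    have h3 : Measurable (fun p : (Fin (n+1) → C(M, M)) × M => p.1 (Fin.last n)) :=
      (measurable_pi_apply _).comp measurable_fst
    exact measurable_ev.comp (h3.prodMk h2)

lemma measurable_rdsIter (n : ℕ) :
    Measurable (fun p : (ℕ → C(M, M)) × M => rdsIter p.1 n p.2) := by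
  induction n with
  | zero => exact measurable_snd
  | succ n ih =>
    show Measurable fun p : (ℕ → C(M, M)) × M => (p.1 n) (rdsIter p.1 n p.2)
    exact measurable_ev.comp
      (((measurable_pi_apply n).comp measurable_fst).prodMk ih)

variable (μ : Measure C(M, M)) [IsProbabilityMeasure μ]
    (ν : Measure M) [IsProbabilityMeasure ν]

omit [IsProbabilityMeasure μ] in
lemma stationary_map (hsta : IsRDSStationary μ ν) :
    (μ.prod ν).map (fun p : C(M, M) × M => p.1 p.2) = ν := by
  ext A hA
  rw [Measure.map_apply measurable_ev hA, Measure.prod_apply (measurable_ev hA)]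
  exact (hsta A hA).symm

lemma key (hsta : IsRDSStationary μ ν) :
    ∀ n : ℕ, ((Measure.pi (fun _ : Fin n => μ)).prod ν).map
      (fun p : (Fin n → C(M, M)) × M => iterF n p.1 p.2) = ν := by
  intro n
  induction n with
  | zero =>
    have h : (fun p : (Fin 0 → C(M, M)) × M => iterF 0 p.1 p.2) = Prod.snd := rfl
    rw [h, Measure.map_snd_prod]
    simp
  | succ n ih =>
    set Pn := Measure.pi (fun _ : Fin n => μ) with hPn
    set ev : C(M, M) × M → M := fun p => p.1 p.2 with hev
    set Fn : (Fin n → C(M, M)) × M → M := fun p => iterF n p.1 p.2 with hFn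
    set F : (Fin (n+1) → C(M, M)) × M → M := fun p => iterF (n+1) p.1 p.2 with hF
    have hFnm : Measurable Fn := measurable_iterF n
    have hFm : Measurable F := measurable_iterF (n+1)
    set e := MeasurableEquiv.piFinSuccAbove (fun _ : Fin (n+1) => C(M, M)) (Fin.last n) with he
    have hmp : MeasurePreserving e (Measure.pi (fun _ : Fin (n+1) => μ)) (μ.prod Pn) :=
      measurePreserving_piFinSuccAbove (fun _ : Fin (n+1) => μ) (Fin.last n)
    have hmp' : MeasurePreserving e.symm (μ.prod Pn) (Measure.pi (fun _ : Fin (n+1) => μ)) :=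
      hmp.symm e
    have h1 : Measure.pi (fun _ : Fin (n+1) => μ) = (μ.prod Pn).map e.symm := hmp'.map_eq.symm
    have hfun : F ∘ Prod.map (⇑e.symm) id
        = (ev ∘ Prod.map id Fn) ∘ ⇑(MeasurableEquiv.prodAssoc
            (α := C(M, M)) (β := Fin n → C(M, M)) (γ := M)) := by
      funext p
      obtain ⟨⟨f, j⟩, x⟩ := p
      show F (e.symm (f, j), x) = ev (f, Fn (j, x))
      have : e.symm (f, j) = (Fin.last n).insertNth f j := by
        simp [he, MeasurableEquiv.piFinSuccAbove_symm_apply, Fin.insertNthEquiv]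
      rw [this]
      exact iterF_insertNth n f j x
    rw [h1]
    calc (((μ.prod Pn).map e.symm).prod ν).map F
        = (((μ.prod Pn).map e.symm).prod (ν.map id)).map F := by rw [Measure.map_id]
      _ = (((μ.prod Pn).prod ν).map (Prod.map (⇑e.symm) id)).map F := by
            rw [Measure.map_prod_map _ _ e.symm.measurable measurable_id]
      _ = ((μ.prod Pn).prod ν).map (F ∘ Prod.map (⇑e.symm) id) :=
            Measure.map_map hFm (e.symm.measurable.prodMap measurable_id)
      _ = ((μ.prod Pn).prod ν).map ((ev ∘ Prod.map id Fn) ∘ ⇑(MeasurableEquiv.prodAssoc)) := by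
            rw [hfun]
      _ = (((μ.prod Pn).prod ν).map (⇑(MeasurableEquiv.prodAssoc))).map (ev ∘ Prod.map id Fn) :=
            (Measure.map_map (measurable_ev.comp (measurable_id.prodMap hFnm))
              MeasurableEquiv.prodAssoc.measurable).symm
      _ = (μ.prod (Pn.prod ν)).map (ev ∘ Prod.map id Fn) := by rw [Measure.prodAssoc_prod]
      _ = ((μ.prod (Pn.prod ν)).map (Prod.map id Fn)).map ev :=
            (Measure.map_map measurable_ev (measurable_id.prodMap hFnm)).symm
      _ = ((μ.map id).prod ((Pn.prod ν).map Fn)).map ev := by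
            rw [Measure.map_prod_map _ _ measurable_id hFnm]
      _ = (μ.prod ν).map ev := by rw [Measure.map_id, ih]
      _ = ν := stationary_map μ ν hsta

lemma pi_marginal (P : Measure (ℕ → C(M, M))) (hP : IsProductMeasure μ P) (n : ℕ) :
    P.map (fun i (k : Fin n) => i (k : ℕ)) = Measure.pi (fun _ : Fin n => μ) := by
  haveI := hP.1
  have henm : Measurable (fun i : ℕ → C(M, M) => (fun k : Fin n => i (k : ℕ))) :=
    measurable_pi_lambda _ fun k => measurable_pi_apply _
  refine (Measure.pi_eq fun s hs => ?_).symm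
  rw [Measure.map_apply henm (MeasurableSet.univ_pi hs), ← hP.2 n s hs]
  congr 1
  ext i
  simp [Set.mem_univ_pi]

lemma integral_transfer (P : Measure (ℕ → C(M, M))) (hP : IsProductMeasure μ P)
    (hsta : IsRDSStationary μ ν) (n : ℕ) (g : M → ℝ) (hg : Measurable g) :
    ∫ q, g (rdsIter q.1 n q.2) ∂(P.prod ν) = ∫ x, g x ∂ν := by
  haveI := hP.1
  set Fn : (Fin n → C(M, M)) × M → M := fun p => iterF n p.1 p.2 with hFn
  have hFnm : Measurable Fn := measurable_iterF n
  set en : (ℕ → C(M, M)) → (Fin n → C(M, M)) := fun i k => i (k : ℕ) with hen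
  have henm : Measurable en := measurable_pi_lambda _ fun k => measurable_pi_apply _
  have hmap : (P.prod ν).map (Prod.map en (id : M → M))
      = (Measure.pi (fun _ : Fin n => μ)).prod ν := by
    rw [← Measure.map_prod_map _ _ henm measurable_id, pi_marginal μ P hP, Measure.map_id]
  calc ∫ q, g (rdsIter q.1 n q.2) ∂(P.prod ν)
      = ∫ q, (g ∘ Fn) (Prod.map en id q) ∂(P.prod ν) := by
        refine integral_congr_ae (ae_of_all _ fun q => ?_)
        show g (rdsIter q.1 n q.2) = g (iterF n (fun k : Fin n => q.1 k) q.2)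
        rw [iterF_eq]
    _ = ∫ p, (g ∘ Fn) p ∂((P.prod ν).map (Prod.map en id)) :=
        (integral_map (henm.prodMap measurable_id).aemeasurable
          ((hg.comp hFnm).aestronglyMeasurable)).symm
    _ = ∫ p, (g ∘ Fn) p ∂((Measure.pi (fun _ : Fin n => μ)).prod ν) := by rw [hmap]
    _ = ∫ y, g y ∂(((Measure.pi (fun _ : Fin n => μ)).prod ν).map Fn) :=
        (integral_map hFnm.aemeasurable hg.aestronglyMeasurable).symm
    _ = ∫ x, g x ∂ν := by rw [key μ ν hsta n]

end StmtAux

theorem stmt1 {M : Type*} [MetricSpace M] [CompactSpace M]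
    [MeasurableSpace M] [BorelSpace M]
    [MeasurableSpace C(M, M)] [BorelSpace C(M, M)]
    (μ : Measure C(M, M)) [IsProbabilityMeasure μ]
    (P : Measure (ℕ → C(M, M))) (hP : IsProductMeasure μ P)
    (hsync : ∀ x y : M, ∀ᵐ i ∂P,
        Tendsto (fun n => dist (rdsIter i n x) (rdsIter i n y)) atTop (𝓝 0))
    (ν₁ ν₂ : Measure M)
    (hν₁ : IsProbabilityMeasure ν₁) (hsta₁ : IsRDSStationary μ ν₁)
    (hν₂ : IsProbabilityMeasure ν₂) (hsta₂ : IsRDSStationary μ ν₂) :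
    ν₁ = ν₂ := by
  classical
  haveI := hP.1
  haveI := hν₁
  haveI := hν₂
  -- It suffices to test against bounded continuous functions.
  have main : ∀ g : M → ℝ, Continuous g → ∫ x, g x ∂ν₁ = ∫ x, g x ∂ν₂ := by
    intro g hgc
    have hg : Measurable g := hgc.measurable
    -- bound on g
    obtain ⟨C, hC⟩ : ∃ C : ℝ, ∀ x, ‖g x‖ ≤ C :=
      ⟨‖BoundedContinuousFunction.mkOfCompact ⟨g, hgc⟩‖, fun x => by
        simpa using (BoundedContinuousFunction.mkOfCompact ⟨g, hgc⟩).norm_coe_le_norm x⟩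
    set Q : Measure ((M × M) × (ℕ → C(M, M))) := (ν₁.prod ν₂).prod P with hQ
    haveI : IsProbabilityMeasure Q := by infer_instance
    set Φ : ℕ → ((M × M) × (ℕ → C(M, M))) → ℝ :=
      fun n q => g (rdsIter q.2 n q.1.1) - g (rdsIter q.2 n q.1.2) with hΦ
    have hπ₁ : Measurable (fun q : (M × M) × (ℕ → C(M, M)) => ((q.2, q.1.1) : (ℕ → C(M, M)) × M)) :=
      measurable_snd.prodMk (measurable_fst.comp measurable_fst)
    have hπ₂ : Measurable (fun q : (M × M) × (ℕ → C(M, M)) => ((q.2, q.1.2) : (ℕ → C(M, M)) × M)) :=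
      measurable_snd.prodMk (measurable_snd.comp measurable_fst)
    have hQ₁ : Q.map (fun q : (M × M) × (ℕ → C(M, M)) => ((q.2, q.1.1) : (ℕ → C(M, M)) × M))
        = P.prod ν₁ := by
      have hcomp : (fun q : (M × M) × (ℕ → C(M, M)) => ((q.2, q.1.1) : (ℕ → C(M, M)) × M))
          = (Prod.map (id : (ℕ → C(M, M)) → _) (Prod.fst : M × M → M)) ∘ Prod.swap := rfl
      rw [hcomp, ← Measure.map_map (measurable_id.prodMap measurable_fst) measurable_swap,
        hQ, Measure.prod_swap, ← Measure.map_prod_map _ _ measurable_id measurable_fst,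
        Measure.map_id, Measure.map_fst_prod]
      simp
    have hQ₂ : Q.map (fun q : (M × M) × (ℕ → C(M, M)) => ((q.2, q.1.2) : (ℕ → C(M, M)) × M))
        = P.prod ν₂ := by
      have hcomp : (fun q : (M × M) × (ℕ → C(M, M)) => ((q.2, q.1.2) : (ℕ → C(M, M)) × M))
          = (Prod.map (id : (ℕ → C(M, M)) → _) (Prod.snd : M × M → M)) ∘ Prod.swap := rfl
      rw [hcomp, ← Measure.map_map (measurable_id.prodMap measurable_snd) measurable_swap,
        hQ, Measure.prod_swap, ← Measure.map_prod_map _ _ measurable_id measurable_snd,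
        Measure.map_id, Measure.map_snd_prod]
      simp
    -- measurability of the orbit maps
    have hA : ∀ n, Measurable (fun q : (M × M) × (ℕ → C(M, M)) => rdsIter q.2 n q.1.1) :=
      fun n => (StmtAux.measurable_rdsIter n).comp hπ₁
    have hB : ∀ n, Measurable (fun q : (M × M) × (ℕ → C(M, M)) => rdsIter q.2 n q.1.2) :=
      fun n => (StmtAux.measurable_rdsIter n).comp hπ₂
    have hΦm : ∀ n, Measurable (Φ n) := fun n => (hg.comp (hA n)).sub (hg.comp (hB n))
    -- each ∫ Φ n dQ equals the fixed difference of integrals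
    have hint : ∀ n : ℕ, ∫ q, Φ n q ∂Q = ∫ x, g x ∂ν₁ - ∫ x, g x ∂ν₂ := by
      intro n
      have hi1 : Integrable (fun q => g (rdsIter q.2 n q.1.1)) Q :=
        Integrable.mono' (integrable_const C) (hg.comp (hA n)).aestronglyMeasurable
          (ae_of_all _ fun q => hC _)
      have hi2 : Integrable (fun q => g (rdsIter q.2 n q.1.2)) Q :=
        Integrable.mono' (integrable_const C) (hg.comp (hB n)).aestronglyMeasurable
          (ae_of_all _ fun q => hC _)
      rw [hΦ]
      rw [integral_sub hi1 hi2]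
      have e1 : ∫ q, g (rdsIter q.2 n q.1.1) ∂Q = ∫ x, g x ∂ν₁ := by
        calc ∫ q, g (rdsIter q.2 n q.1.1) ∂Q
            = ∫ p, g (rdsIter p.1 n p.2)
                ∂(Q.map (fun q : (M × M) × (ℕ → C(M, M)) => ((q.2, q.1.1) : (ℕ → C(M, M)) × M))) :=
              (integral_map hπ₁.aemeasurable
                ((hg.comp (StmtAux.measurable_rdsIter n)).aestronglyMeasurable)).symm
          _ = ∫ p, g (rdsIter p.1 n p.2) ∂(P.prod ν₁) := by rw [hQ₁]
          _ = ∫ x, g x ∂ν₁ := StmtAux.integral_transfer μ ν₁ P hP hsta₁ n g hg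
      have e2 : ∫ q, g (rdsIter q.2 n q.1.2) ∂Q = ∫ x, g x ∂ν₂ := by
        calc ∫ q, g (rdsIter q.2 n q.1.2) ∂Q
            = ∫ p, g (rdsIter p.1 n p.2)
                ∂(Q.map (fun q : (M × M) × (ℕ → C(M, M)) => ((q.2, q.1.2) : (ℕ → C(M, M)) × M))) :=
              (integral_map hπ₂.aemeasurable
                ((hg.comp (StmtAux.measurable_rdsIter n)).aestronglyMeasurable)).symm
          _ = ∫ p, g (rdsIter p.1 n p.2) ∂(P.prod ν₂) := by rw [hQ₂]
          _ = ∫ x, g x ∂ν₂ := StmtAux.integral_transfer μ ν₂ P hP hsta₂ n g hg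
      rw [e1, e2]
    -- a.e. synchronization on Q
    have hS : MeasurableSet {q : (M × M) × (ℕ → C(M, M)) |
        Tendsto (fun n => dist (rdsIter q.2 n q.1.1) (rdsIter q.2 n q.1.2)) atTop (𝓝 0)} :=
      measurableSet_tendsto (𝓝 0) (fun n => (hA n).dist (hB n))
    have hae : ∀ᵐ q ∂Q,
        Tendsto (fun n => dist (rdsIter q.2 n q.1.1) (rdsIter q.2 n q.1.2)) atTop (𝓝 0) := by
      rw [ae_iff]
      have : {q : (M × M) × (ℕ → C(M, M)) | ¬ Tendsto
          (fun n => dist (rdsIter q.2 n q.1.1) (rdsIter q.2 n q.1.2)) atTop (𝓝 0)}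
          = {q : (M × M) × (ℕ → C(M, M)) | Tendsto
          (fun n => dist (rdsIter q.2 n q.1.1) (rdsIter q.2 n q.1.2)) atTop (𝓝 0)}ᶜ := rfl
      rw [this, hQ, Measure.measure_prod_null hS.compl]
      refine ae_of_all _ fun p => ?_
      have := hsync p.1 p.2
      rw [ae_iff] at this
      exact this
    -- pointwise convergence of Φ n
    have hconv : ∀ᵐ q ∂Q, Tendsto (fun n => Φ n q) atTop (𝓝 0) := by
      filter_upwards [hae] with q hq
      have hu : UniformContinuous g := CompactSpace.uniformContinuous_of_continuous hgc
      have h1 : Tendsto (fun n => ((rdsIter q.2 n q.1.1, rdsIter q.2 n q.1.2) : M × M))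
          atTop (𝓤 M) := tendsto_uniformity_iff_dist_tendsto_zero.2 hq
      have h2 : Tendsto (fun n => ((g (rdsIter q.2 n q.1.1), g (rdsIter q.2 n q.1.2)) : ℝ × ℝ))
          atTop (𝓤 ℝ) := by
        have hu' : Tendsto (fun p : M × M => ((g p.1, g p.2) : ℝ × ℝ)) (𝓤 M) (𝓤 ℝ) := hu
        exact hu'.comp h1
      have h3 : Tendsto (fun n => dist (g (rdsIter q.2 n q.1.1)) (g (rdsIter q.2 n q.1.2)))
          atTop (𝓝 0) := tendsto_uniformity_iff_dist_tendsto_zero.1 h2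
      refine squeeze_zero_norm (fun n => ?_) h3
      rw [Real.norm_eq_abs, Real.dist_eq]
    -- dominated convergence
    have hdom : Tendsto (fun n => ∫ q, Φ n q ∂Q) atTop (𝓝 (∫ _, (0 : ℝ) ∂Q)) := by
      refine tendsto_integral_of_dominated_convergence (fun _ => 2 * C)
        (fun n => (hΦm n).aestronglyMeasurable) (integrable_const _)
        (fun n => ae_of_all _ fun q => ?_) ?_
      · calc ‖Φ n q‖ ≤ ‖g (rdsIter q.2 n q.1.1)‖ + ‖g (rdsIter q.2 n q.1.2)‖ := norm_sub_le _ _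
          _ ≤ C + C := add_le_add (hC _) (hC _)
          _ = 2 * C := by ring
      · simpa using hconv
    rw [integral_zero] at hdom
    have := tendsto_nhds_unique (by simpa [hint] using hdom) (tendsto_const_nhds :
      Tendsto (fun _ : ℕ => ∫ x, g x ∂ν₁ - ∫ x, g x ∂ν₂) atTop (𝓝 (∫ x, g x ∂ν₁ - ∫ x, g x ∂ν₂)))
    linarith [this]
  -- conclude equality of measures
  refine ext_of_forall_lintegral_eq_of_IsFiniteMeasure ?_
  intro f
  have hgc : Continuous fun x => ((f x : NNReal) : ℝ) :=
    NNReal.continuous_coe.comp f.continuous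
  have hib : ∀ (ν : Measure M), IsProbabilityMeasure ν →
      Integrable (fun x => ((f x : NNReal) : ℝ)) ν := by
    intro ν hν
    haveI := hν
    exact hgc.integrable_of_hasCompactSupport ((isClosed_tsupport _).isCompact)
  rw [lintegral_coe_eq_integral _ (hib ν₁ hν₁), lintegral_coe_eq_integral _ (hib ν₂ hν₂),
    main _ hgc]
end
end

section
/- Let (F,μ) be an RDS of continuous maps on a compact metric space (M,D) satisfying properties (P) and (LC), and let ν be the unique μ-stationary probability measure on M. If every map in F is injective, then the following dichotomy holds: either ν is a Dirac measure δ_{x₀} at a point x₀ ∈ M which is a fixed point of f for μ-almost every f ∈ F, or ν has no atoms. -/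
set_option linter.unusedSectionVars false
set_option maxHeartbeats 1000000


open MeasureTheory Topology Filter ENNReal

noncomputable section

/-- `ν` is a `μ`-stationary measure. -/
def IsStationaryRDS {M : Type*} [MetricSpace M] [CompactSpace M] [MeasurableSpace M]
    [MeasurableSpace C(M, M)] (μ : Measure C(M, M)) (ν : Measure M) : Prop :=
  ∀ A : Set M, MeasurableSet A → ν A = ∫⁻ f, ν (⇑f ⁻¹' A) ∂μ

/-! ### basic lemmas -/

section Lemmas

variable {M : Type*} [MetricSpace M] [CompactSpace M]

lemma rdsIter_shift (i : ℕ → C(M, M)) (n : ℕ) (x : M) :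
    rdsIter i (n + 1) x = rdsIter (fun k => i (k + 1)) n (i 0 x) := by
  induction n with
  | zero => rfl
  | succ n ih => show i (n+1) (rdsIter i (n+1) x) = _; rw [ih]; rfl

lemma continuous_rdsIter (n : ℕ) :
    Continuous fun p : (ℕ → C(M, M)) × M => rdsIter p.1 n p.2 := by
  induction n with
  | zero => exact continuous_snd
  | succ n ih =>
    have : Continuous fun p : (ℕ → C(M, M)) × M => ((p.1 n : C(M,M)), rdsIter p.1 n p.2) :=
      ((continuous_apply n).comp continuous_fst).prodMk ih
    exact continuous_eval.comp this

lemma rdsIter_fixed {i : ℕ → C(M, M)} {x₀ : M} (hfix : ∀ n, i n x₀ = x₀) (n : ℕ) :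
    rdsIter i n x₀ = x₀ := by
  induction n with
  | zero => rfl
  | succ n ih => show i n (rdsIter i n x₀) = x₀; rw [ih, hfix]

lemma rdsIter_mem_invariant {i : ℕ → C(M, M)} {S : Set M} {G : Set C(M,M)}
    (hG : ∀ n, i n ∈ G) (hinv : ∀ f ∈ G, ∀ y ∈ S, f y ∈ S) {x : M} (hx : x ∈ S) (n : ℕ) :
    rdsIter i n x ∈ S := by
  induction n with
  | zero => exact hx
  | succ n ih => exact hinv _ (hG n) _ ih

lemma rdsIter_inj {i : ℕ → C(M, M)} (h : ∀ n, Function.Injective (i n)) (n : ℕ) :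
    Function.Injective (fun x => rdsIter i n x) := by
  induction n with
  | zero => exact fun a b hab => hab
  | succ n ih => exact fun a b hab => ih (h n hab)

end Lemmas

/-! ### support lemmas -/

section Supp

variable {Ω : Type*} [TopologicalSpace Ω] [MeasurableSpace Ω]

lemma measSupp_compl_null [SecondCountableTopology Ω] [OpensMeasurableSpace Ω]
    (ρ : Measure Ω) : ρ (measSupp ρ)ᶜ = 0 := by
  have hB := TopologicalSpace.isBasis_countableBasis Ω
  have hsub : (measSupp ρ)ᶜ ⊆ ⋃ V ∈ {V ∈ TopologicalSpace.countableBasis Ω | ρ V = 0}, V := by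
    intro f hf
    simp only [measSupp, Set.mem_compl_iff, Set.mem_setOf_eq, not_forall] at hf
    obtain ⟨U, hUopen, hfU, hU⟩ := hf
    have hU0 : ρ U = 0 := by simpa using hU
    obtain ⟨V, hVB, hfV, hVU⟩ := hB.exists_subset_of_mem_open hfU hUopen
    exact Set.mem_biUnion ⟨hVB, le_antisymm (hU0 ▸ measure_mono hVU) (zero_le)⟩ hfV
  refine measure_mono_null hsub ?_
  exact (measure_biUnion_null_iff ((TopologicalSpace.countable_countableBasis Ω).mono
    (Set.sep_subset _ _))).2 fun V hV => hV.2

lemma measSupp_subset_closed {ρ : Measure Ω} {C : Set Ω} (hC : IsClosed C)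
    (h1 : ρ Cᶜ = 0) : measSupp ρ ⊆ C := by
  intro f hf
  by_contra hfC
  exact absurd (hf Cᶜ hC.isOpen_compl hfC) (by simp [h1])

lemma measSupp_compl_isOpen {ρ : Measure Ω} : IsOpen (measSupp ρ)ᶜ := by
  refine isOpen_iff_mem_nhds.2 fun x hx => ?_
  simp only [measSupp, Set.mem_compl_iff, Set.mem_setOf_eq, not_forall] at hx
  obtain ⟨U, hUopen, hxU, hU⟩ := hx
  refine Filter.mem_of_superset (hUopen.mem_nhds hxU) fun z hz => ?_
  simp only [measSupp, Set.mem_compl_iff, Set.mem_setOf_eq, not_forall]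
  exact ⟨U, hUopen, hz, hU⟩

end Supp

/-! ### product measure lemmas -/

section Prod

variable {Ω : Type*} [MeasurableSpace Ω] {μ : Measure Ω} {P : Measure (ℕ → Ω)}
  [IsProbabilityMeasure μ]

lemma IsProductMeasure.finset_pi (hP : IsProductMeasure μ P) (s : Finset ℕ)
    (t : ℕ → Set Ω) (ht : ∀ i, MeasurableSet (t i)) :
    P ((s : Set ℕ).pi t) = ∏ i ∈ s, μ (t i) := by
  classical
  set n := s.sup id + 1 with hn
  have hsub : ∀ i ∈ s, i < n := fun i hi => Nat.lt_succ_of_le (Finset.le_sup (f := id) hi)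
  have hset : (s : Set ℕ).pi t
      = {ω : ℕ → Ω | ∀ k : Fin n, ω (k : ℕ) ∈ (if (k : ℕ) ∈ s then t k else Set.univ)} := by
    ext ω
    simp only [Set.mem_pi, Finset.mem_coe, Set.mem_setOf_eq]
    constructor
    · intro h k
      split
      · exact h _ ‹_›
      · trivial
    · intro h i hi
      have := h ⟨i, hsub i hi⟩
      simpa [hi] using this
  rw [hset, hP.2 n _ (fun k => by split; exacts [ht _, MeasurableSet.univ])]
  have : ∀ k : Fin n, μ (if (k : ℕ) ∈ s then t (k : ℕ) else Set.univ)
      = if (k : ℕ) ∈ s then μ (t (k : ℕ)) else 1 := by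
    intro k; split <;> simp
  simp_rw [this]
  rw [Fin.prod_univ_eq_prod_range (fun i => if i ∈ s then μ (t i) else 1) n,
    Finset.prod_ite_mem (Finset.range n) s (fun i => μ (t i)),
    Finset.inter_eq_right.mpr fun i hi => Finset.mem_range.2 (hsub i hi)]

lemma IsProductMeasure.coord_full (hP : IsProductMeasure μ P) {G : Set Ω}
    (hG : MeasurableSet G) (hG1 : μ G = 1) : ∀ᵐ i ∂P, ∀ n, i n ∈ G := by
  rw [ae_all_iff]
  intro n
  have h := hP.finset_pi {n} (fun _ => G) (fun _ => hG)
  simp only [Finset.coe_singleton, Set.singleton_pi, Finset.prod_singleton, hG1] at h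
  haveI := hP.1
  rw [← prob_compl_eq_zero_iff ((measurable_pi_apply n) hG)] at h
  rw [ae_iff]; exact h

def rdsSplit {Ω : Type*} : (ℕ → Ω) → Ω × (ℕ → Ω) := fun i => (i 0, fun k => i (k + 1))

lemma measurable_rdsSplit : Measurable (rdsSplit (Ω := Ω)) :=
  (measurable_pi_apply 0).prodMk (measurable_pi_lambda _ fun k => measurable_pi_apply (k + 1))

lemma IsProductMeasure.map_split (hP : IsProductMeasure μ P) :
    P.map rdsSplit = μ.prod P := by
  classical
  haveI := hP.1
  haveI : IsProbabilityMeasure (P.map rdsSplit) :=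
    Measure.isProbabilityMeasure_map measurable_rdsSplit.aemeasurable
  have hCspan : IsCountablySpanning {s : Set Ω | MeasurableSet s} :=
    isCountablySpanning_measurableSet
  have hDspan : IsCountablySpanning
      (squareCylinders fun _ : ℕ => {s : Set Ω | MeasurableSet s}) := by
    refine ⟨fun _ => Set.univ, fun _ => ⟨∅, fun _ => Set.univ, by simp, by simp⟩,
      by simp [Set.iUnion_const]⟩
  have hgen : (inferInstance : MeasurableSpace (Ω × (ℕ → Ω))) = MeasurableSpace.generateFrom
      (Set.image2 (· ×ˢ ·) {s : Set Ω | MeasurableSet s}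
        (squareCylinders fun _ : ℕ => {s : Set Ω | MeasurableSet s})) :=
    (generateFrom_eq_prod MeasurableSpace.generateFrom_measurableSet generateFrom_squareCylinders
      hCspan hDspan).symm
  refine ext_of_generate_finite _ hgen
    (IsPiSystem.prod MeasurableSpace.isPiSystem_measurableSet
      (isPiSystem_squareCylinders (fun _ => MeasurableSpace.isPiSystem_measurableSet)
        (fun _ => .univ))) ?_ ?_
  · rintro _ ⟨u, hu, S, ⟨fs, t, htmem, rfl⟩, rfl⟩
    simp only [Set.mem_setOf_eq] at hu
    have ht : ∀ i, MeasurableSet (t i) := fun i => htmem i (Set.mem_univ i)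
    have hSmeas : MeasurableSet ((fs : Set ℕ).pi t) :=
      MeasurableSet.pi (Finset.countable_toSet _) (fun i _ => ht i)
    rw [Measure.map_apply measurable_rdsSplit (hu.prod hSmeas), Measure.prod_prod]
    have hpre : rdsSplit ⁻¹' (u ×ˢ (fs : Set ℕ).pi t)
        = ((insert 0 (fs.image Nat.succ) : Finset ℕ) : Set ℕ).pi
            (fun k => Nat.casesOn k u (fun j => t j)) := by
      ext i
      simp only [rdsSplit, Set.mem_preimage, Set.mem_prod, Set.mem_pi, Finset.coe_insert,
        Set.mem_insert_iff, Finset.mem_coe, Finset.mem_image]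
      constructor
      · rintro ⟨h0, hr⟩ k hk
        rcases hk with rfl | hk
        · exact h0
        · obtain ⟨j, hj, rfl⟩ := hk
          exact hr j hj
      · intro h
        refine ⟨h 0 (Or.inl rfl), fun j hj => h (j + 1) (Or.inr ⟨j, hj, rfl⟩)⟩
    rw [hpre, hP.finset_pi _ _ (fun k => by cases k; exacts [hu, ht _])]
    rw [Finset.prod_insert (by simp), Finset.prod_image (fun a _ b _ h => Nat.succ_injective h)]
    rw [hP.finset_pi _ _ ht]
    rfl
  · simp

end Prod

/-! ### measurability and iterated stationarity -/

section Main

variable {M : Type*} [MetricSpace M] [CompactSpace M]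
  [MeasurableSpace M] [BorelSpace M]
  [MeasurableSpace C(M, M)] [BorelSpace C(M, M)]

lemma measurable_measure_section {α : Type*} [MeasurableSpace α] (ρ : Measure M)
    [IsFiniteMeasure ρ] {S : Set (α × M)} (hS : MeasurableSet S) :
    Measurable fun a => ρ {y | (a, y) ∈ S} :=
  measurable_measure_prodMk_left hS

lemma measurable_stat_integrand (ρ : Measure M) [IsFiniteMeasure ρ] {A : Set M}
    (hA : MeasurableSet A) : Measurable fun f : C(M, M) => ρ (⇑f ⁻¹' A) :=
  measurable_measure_section ρ
    ((continuous_eval (X := M) (Y := M)).measurable hA)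

lemma measurable_iter_integrand (ρ : Measure M) [IsFiniteMeasure ρ] {A : Set M}
    (hA : MeasurableSet A) (n : ℕ) :
    Measurable fun i : ℕ → C(M, M) => ρ {y | rdsIter i n y ∈ A} :=
  measurable_measure_section ρ ((continuous_rdsIter n).measurable hA)

lemma iter_stationary {μ : Measure C(M, M)} [IsProbabilityMeasure μ]
    {P : Measure (ℕ → C(M, M))} (hP : IsProductMeasure μ P)
    (ρ : Measure M) [IsProbabilityMeasure ρ]
    (hρ : ∀ A : Set M, MeasurableSet A → ρ A = ∫⁻ f, ρ (⇑f ⁻¹' A) ∂μ)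
    {A : Set M} (hA : MeasurableSet A) (n : ℕ) :
    ∫⁻ i, ρ {y | rdsIter i n y ∈ A} ∂P = ρ A := by
  haveI := hP.1
  induction n with
  | zero =>
    have : ∀ i : ℕ → C(M,M), {y | rdsIter i 0 y ∈ A} = A := fun i => rfl
    simp only [this]
    rw [lintegral_const, measure_univ, mul_one]
  | succ n ih =>
    have hG : Measurable fun p : C(M, M) × (ℕ → C(M, M)) =>
        ρ {y | rdsIter p.2 n (p.1 y) ∈ A} := by
      have hc : Continuous fun q : (C(M, M) × (ℕ → C(M, M))) × M =>
          rdsIter q.1.2 n (q.1.1 q.2) := by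
        have h1 : Continuous fun q : (C(M, M) × (ℕ → C(M, M))) × M =>
            ((q.1.2 : ℕ → C(M, M)), q.1.1 q.2) :=
          (continuous_snd.comp continuous_fst).prodMk
            (continuous_eval.comp ((continuous_fst.comp continuous_fst).prodMk continuous_snd))
        exact (continuous_rdsIter n).comp h1
      exact measurable_measure_section ρ (hc.measurable hA)
    calc ∫⁻ i, ρ {y | rdsIter i (n + 1) y ∈ A} ∂P
        = ∫⁻ i, (fun p : C(M, M) × (ℕ → C(M, M)) =>
            ρ {y | rdsIter p.2 n (p.1 y) ∈ A}) (rdsSplit i) ∂P := by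
          refine lintegral_congr fun i => ?_
          have : {y | rdsIter i (n + 1) y ∈ A}
              = {y | rdsIter (fun k => i (k + 1)) n (i 0 y) ∈ A} := by
            ext y; simp [rdsIter_shift]
          rw [this]; rfl
      _ = ∫⁻ p, ρ {y | rdsIter p.2 n (p.1 y) ∈ A} ∂(μ.prod P) := by
          rw [← hP.map_split, lintegral_map hG measurable_rdsSplit]
      _ = ∫⁻ j, ∫⁻ g, ρ {y | rdsIter j n (g y) ∈ A} ∂μ ∂P :=
          lintegral_prod_symm _ hG.aemeasurable
      _ = ∫⁻ j, ρ {y | rdsIter j n y ∈ A} ∂P := by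
          refine lintegral_congr fun j => ?_
          have hBmeas : MeasurableSet {y | rdsIter j n y ∈ A} := by
            have : Continuous fun y => rdsIter j n y :=
              (continuous_rdsIter n).comp (continuous_const.prodMk continuous_id)
            exact this.measurable hA
          exact (hρ _ hBmeas).symm
      _ = ρ A := ih

/-! ### atoms -/

lemma finite_atoms (ν : Measure M) [IsProbabilityMeasure ν] {t : ℝ≥0∞} (ht : t ≠ 0) :
    {x : M | t ≤ ν {x}}.Finite := by
  by_contra hinf
  rw [← Set.Infinite] at hinf
  obtain ⟨n, hn⟩ := ENNReal.exists_inv_nat_lt ht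
  obtain ⟨u, hu_sub, hu_card⟩ := hinf.exists_subset_card_eq (n + 1)
  have hdisj : (↑u : Set M).PairwiseDisjoint (fun x => ({x} : Set M)) :=
    fun x _ y _ hxy => by simp [Set.disjoint_singleton, hxy]
  have hsum := measure_biUnion_finset (μ := ν) hdisj (fun x _ => measurableSet_singleton x)
  have hle : ((n + 1 : ℕ) : ℝ≥0∞) * t ≤ 1 := by
    calc ((n + 1 : ℕ) : ℝ≥0∞) * t = ∑ _x ∈ u, t := by
          rw [Finset.sum_const, nsmul_eq_mul, hu_card]
      _ ≤ ∑ x ∈ u, ν {x} := Finset.sum_le_sum fun x hx => hu_sub hx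
      _ = ν (⋃ x ∈ u, {x}) := hsum.symm
      _ ≤ 1 := prob_le_one
  have hne0 : (n : ℝ≥0∞) ≠ 0 := by
    rintro h0
    rw [h0] at hn
    simp at hn
  have h1lt : (1 : ℝ≥0∞) < ((n + 1 : ℕ) : ℝ≥0∞) * t := by
    calc (1 : ℝ≥0∞) = (n : ℝ≥0∞) * (n : ℝ≥0∞)⁻¹ :=
          (ENNReal.mul_inv_cancel hne0 (ENNReal.natCast_ne_top n)).symm
      _ < (n : ℝ≥0∞) * t := by
          rw [ENNReal.mul_lt_mul_iff_right hne0 (ENNReal.natCast_ne_top n)]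
          exact hn
      _ ≤ ((n + 1 : ℕ) : ℝ≥0∞) * t := by
          refine mul_le_mul_left ?_ t
          exact_mod_cast Nat.le_succ n
  exact absurd hle (not_le.2 h1lt)

lemma exists_fixed_atom
    (μ : Measure C(M, M)) [IsProbabilityMeasure μ]
    (hProx : PropP μ)
    (ν : Measure M) [IsProbabilityMeasure ν] (hsta : IsStationaryRDS μ ν)
    (hinj : ∀ f : C(M, M), f ∈ measSupp μ → Function.Injective f)
    (hatom : ∃ x : M, ν {x} ≠ 0) :
    ∃ x₀ : M, 0 < ν {x₀} ∧ (∀ᵐ f ∂μ, f x₀ = x₀) ∧ (∀ f ∈ measSupp μ, f x₀ = x₀) := by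
  classical
  obtain ⟨a, ha⟩ := hatom
  set m := ⨆ x : M, ν {x} with hm_def
  have hm_pos : m ≠ 0 := fun h0 =>
    ha (le_antisymm (le_trans (le_iSup (fun x : M => ν {x}) a) h0.le) (zero_le))
  have hm_le_one : m ≤ 1 := iSup_le fun x => prob_le_one
  have hm_top : m ≠ ⊤ := ne_top_of_le_ne_top ENNReal.one_ne_top hm_le_one
  have hA_fin : {x : M | m / 2 ≤ ν {x}}.Finite :=
    finite_atoms ν (ENNReal.half_pos hm_pos).ne'
  obtain ⟨b, hb⟩ : ∃ x : M, m / 2 < ν {x} :=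
    lt_iSup_iff.mp (ENNReal.half_lt_self hm_pos hm_top)
  obtain ⟨x₀, hx₀A', hx₀max⟩ := hA_fin.toFinset.exists_max_image (fun x => ν {x})
    ⟨b, hA_fin.mem_toFinset.2 hb.le⟩
  rw [hA_fin.mem_toFinset] at hx₀A'
  have hx₀m : ν {x₀} = m := by
    refine le_antisymm (le_iSup (fun x : M => ν {x}) x₀) (iSup_le fun x => ?_)
    by_cases hx : m / 2 ≤ ν {x}
    · exact hx₀max x (hA_fin.mem_toFinset.2 hx)
    · exact (lt_of_not_ge hx).le.trans hx₀A'
  set S := {x : M | ν {x} = m} with hS_def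
  have hS_fin : S.Finite := hA_fin.subset (fun x hx => by
    rw [Set.mem_setOf_eq] at hx ⊢; rw [hx]; exact ENNReal.half_le_self)
  have hx₀S : x₀ ∈ S := hx₀m
  have hae_supp : ∀ᵐ f ∂μ, f ∈ measSupp μ := by
    have := measSupp_compl_null μ
    rw [ae_iff]
    exact this
  have hkey : ∀ x ∈ S, ∀ᵐ f ∂μ, ∃ y ∈ S, f y = x := by
    intro x hxS
    have hg : Measurable fun f : C(M, M) => ν (⇑f ⁻¹' {x}) :=
      measurable_stat_integrand ν (measurableSet_singleton x)
    have hint : ∫⁻ f, ν (⇑f ⁻¹' {x}) ∂μ = m := by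
      rw [← hsta {x} (measurableSet_singleton x)]; exact hxS
    have hub : ∀ᵐ f : C(M, M) ∂μ, ν (⇑f ⁻¹' {x}) ≤ m := by
      filter_upwards [hae_supp] with f hf
      have hsub : (⇑f ⁻¹' {x}).Subsingleton := fun y hy z hz =>
        hinj f hf (hy.trans hz.symm)
      rcases hsub.eq_empty_or_singleton with he | ⟨y, hy⟩
      · simp [he]
      · rw [hy]; exact le_iSup (fun x : M => ν {x}) y
    have hge : ∀ᵐ f : C(M, M) ∂μ, m ≤ ν (⇑f ⁻¹' {x}) := by
      have hzero : ∫⁻ f, (m - ν (⇑f ⁻¹' {x})) ∂μ = 0 := by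
        rw [lintegral_sub hg (by rw [hint]; exact hm_top) hub]
        rw [lintegral_const, measure_univ, mul_one, hint, tsub_self]
      have := (lintegral_eq_zero_iff (measurable_const.sub hg)).1 hzero
      filter_upwards [this] with f hf
      exact tsub_eq_zero_iff_le.1 hf
    filter_upwards [hub, hge, hae_supp] with f h1 h2 h3
    have hfm : ν (⇑f ⁻¹' {x}) = m := le_antisymm h1 h2
    have hne : (⇑f ⁻¹' {x}).Nonempty := by
      rw [Set.nonempty_iff_ne_empty]
      intro h
      rw [h] at hfm
      simp only [measure_empty] at hfm
      exact hm_pos hfm.symm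
    obtain ⟨y, hy⟩ := hne
    have hset : ⇑f ⁻¹' {x} = {y} :=
      Set.eq_singleton_iff_unique_mem.2 ⟨hy, fun z hz => hinj f h3 (hz.trans hy.symm)⟩
    refine ⟨y, ?_, hy⟩
    show ν {y} = m
    rw [← hset]; exact hfm
  have hae_all : ∀ᵐ f ∂μ, ∀ x ∈ S, ∃ y ∈ S, f y = x :=
    (ae_ball_iff hS_fin.countable).2 hkey
  have hCl_closed : IsClosed {f : C(M, M) | ∀ x ∈ S, ∃ y ∈ S, f y = x} := by
    have heq : {f : C(M, M) | ∀ x ∈ S, ∃ y ∈ S, f y = x}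
        = ⋂ x ∈ S, ⋃ y ∈ S, {f : C(M, M) | f y = x} := by
      ext f
      simp only [Set.mem_setOf_eq, Set.mem_iInter, Set.mem_iUnion]
      exact ⟨fun h x hx => (h x hx).imp fun y hy => ⟨hy.1, hy.2⟩,
        fun h x hx => (h x hx).imp fun y hy => ⟨hy.1, hy.2⟩⟩
    rw [heq]
    refine isClosed_biInter fun x hx => hS_fin.isClosed_biUnion fun y hy => ?_
    exact isClosed_singleton.preimage (continuous_eval_const y)
  have hCl_full : μ {f : C(M, M) | ∀ x ∈ S, ∃ y ∈ S, f y = x}ᶜ = 0 := by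
    rw [ae_iff] at hae_all
    simpa [Set.compl_setOf] using hae_all
  have hsupp_perm : ∀ f ∈ measSupp μ, ∀ y ∈ S, f y ∈ S := by
    intro f hf
    have hfCl : ∀ x ∈ S, ∃ y ∈ S, f y = x :=
      measSupp_subset_closed hCl_closed hCl_full hf
    have hsub : S ⊆ f '' S := fun x hx => by
      obtain ⟨y, hy, hyx⟩ := hfCl x hx
      exact ⟨y, hy, hyx⟩
    have himg : f '' S = S :=
      (Set.eq_of_subset_of_ncard_le hsub
        (le_of_eq (Set.ncard_image_of_injective S (hinj f hf))) (hS_fin.image f)).symm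
    intro y hy
    rw [← himg]
    exact ⟨y, hy, rfl⟩
  have hS_single : ∀ y ∈ S, y = x₀ := by
    intro y hyS
    by_contra hyne
    obtain ⟨i, hi_supp, φ, hφ, hconv⟩ := hProx x₀ y
    have horb : ∀ n, rdsIter i n x₀ ∈ S ∧ rdsIter i n y ∈ S
        ∧ rdsIter i n x₀ ≠ rdsIter i n y := by
      intro n
      refine ⟨rdsIter_mem_invariant hi_supp hsupp_perm hx₀S n,
        rdsIter_mem_invariant hi_supp hsupp_perm hyS n, fun h => ?_⟩
      exact hyne ((rdsIter_inj (fun k => hinj _ (hi_supp k)) n h)).symm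
    set T : Set ℝ := (fun p : M × M => dist p.1 p.2) '' ((S ×ˢ S) ∩ {p | p.1 ≠ p.2}) with hT
    have hT_fin : T.Finite := (((hS_fin.prod hS_fin).inter_of_left _).image _)
    have hT_ne : T.Nonempty :=
      ⟨dist x₀ y, ⟨(x₀, y), ⟨⟨hx₀S, hyS⟩, fun h => hyne h.symm⟩, rfl⟩⟩
    obtain ⟨δ, hδT, hδmin⟩ := hT_fin.toFinset.exists_min_image id
      ⟨_, hT_fin.mem_toFinset.2 hT_ne.some_mem⟩
    rw [hT_fin.mem_toFinset] at hδT
    have hδpos : 0 < δ := by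
      obtain ⟨⟨u, v⟩, ⟨_, huv⟩, rfl⟩ := hδT
      exact dist_pos.2 huv
    have hev := hconv.eventually_lt_const hδpos
    obtain ⟨k, hk⟩ := hev.exists
    have hmem : dist (rdsIter i (φ k) x₀) (rdsIter i (φ k) y) ∈ T :=
      ⟨(rdsIter i (φ k) x₀, rdsIter i (φ k) y),
        ⟨⟨(horb _).1, (horb _).2.1⟩, (horb _).2.2⟩, rfl⟩
    exact absurd hk (not_lt.2 (hδmin _ (hT_fin.mem_toFinset.2 hmem)))
  refine ⟨x₀, ?_, ?_, ?_⟩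
  · rw [hx₀m]; exact pos_iff_ne_zero.2 hm_pos
  · filter_upwards [hkey x₀ hx₀S] with f hf
    obtain ⟨y, hyS, hyx⟩ := hf
    rwa [hS_single y hyS] at hyx
  · intro f hf
    obtain ⟨y, hyS, hyx⟩ := (measSupp_subset_closed hCl_closed hCl_full hf) x₀ hx₀S
    rwa [hS_single y hyS] at hyx

end Main

theorem stmt2 {M : Type*} [MetricSpace M] [CompactSpace M]
    [MeasurableSpace M] [BorelSpace M]
    [MeasurableSpace C(M, M)] [BorelSpace C(M, M)]
    (μ : Measure C(M, M)) [IsProbabilityMeasure μ]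
    (P : Measure (ℕ → C(M, M))) (hP : IsProductMeasure μ P)
    (q : ℝ) (hq : q ∈ Set.Ioo (0 : ℝ) 1)
    (hProx : PropP μ) (hLC : PropLC P q)
    (ν : Measure M) (hν : IsProbabilityMeasure ν) (hsta : IsStationaryRDS μ ν)
    (hinj : ∀ f : C(M, M), f ∈ measSupp μ → Function.Injective f) :
    (∃ x₀ : M, ν = Measure.dirac x₀ ∧ ∀ᵐ f ∂μ, f x₀ = x₀) ∨
    (∀ x : M, ν {x} = 0) := by
  classical
  haveI := hν
  haveI := hP.1
  by_cases hatom : ∀ x : M, ν {x} = 0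
  · exact Or.inr hatom
  · push_neg at hatom
    obtain ⟨x₀, hx₀pos, hfix_ae, hfix_supp⟩ := exists_fixed_atom μ hProx ν hsta hinj hatom
    refine Or.inl ⟨x₀, ?_, hfix_ae⟩
    have hae_supp : ∀ᵐ f ∂μ, f ∈ measSupp μ := by
      have := measSupp_compl_null μ
      rw [ae_iff]
      exact this
    -- the key step : `ν {x₀}ᶜ = 0`
    have hc : ν {x₀}ᶜ = 0 := by
      by_contra hβ
      set β := ν {x₀}ᶜ with hβdef
      set ρ : Measure M := β⁻¹ • ν.restrict {x₀}ᶜ with hρdef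
      have hβ_top : β ≠ ⊤ := ne_top_of_le_ne_top ENNReal.one_ne_top prob_le_one
      have hρ_apply : ∀ A : Set M, MeasurableSet A → ρ A = β⁻¹ * ν (A ∩ {x₀}ᶜ) := by
        intro A hA
        rw [hρdef, Measure.smul_apply, Measure.restrict_apply hA, smul_eq_mul]
      haveI hρ_prob : IsProbabilityMeasure ρ := by
        constructor
        rw [hρ_apply Set.univ MeasurableSet.univ, Set.univ_inter]
        exact ENNReal.inv_mul_cancel hβ hβ_top
      have hg_fix_inj : ∀ᵐ f : C(M, M) ∂μ, Function.Injective f ∧ f x₀ = x₀ := by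
        filter_upwards [hae_supp, hfix_ae] with f h1 h2
        exact ⟨hinj f h1, h2⟩
      have hcompl_meas : MeasurableSet ({x₀}ᶜ : Set M) := (measurableSet_singleton x₀).compl
      have hρ_sta : ∀ A : Set M, MeasurableSet A → ρ A = ∫⁻ f, ρ (⇑f ⁻¹' A) ∂μ := by
        intro A hA
        have h1 : ∀ᵐ f : C(M, M) ∂μ,
            ρ (⇑f ⁻¹' A) = β⁻¹ * ν (⇑f ⁻¹' (A ∩ {x₀}ᶜ)) := by
          filter_upwards [hg_fix_inj] with f hf
          obtain ⟨hfinj, hffix⟩ := hf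
          rw [hρ_apply _ (hA.preimage f.continuous.measurable)]
          have hseteq : ⇑f ⁻¹' A ∩ {x₀}ᶜ = ⇑f ⁻¹' (A ∩ {x₀}ᶜ) := by
            ext y
            simp only [Set.mem_inter_iff, Set.mem_preimage, Set.mem_compl_iff,
              Set.mem_singleton_iff]
            constructor
            · rintro ⟨hyA, hy⟩
              exact ⟨hyA, fun h => hy (hfinj (h.trans hffix.symm))⟩
            · rintro ⟨hyA, hfy⟩
              exact ⟨hyA, fun h => hfy (by rw [h, hffix])⟩
          rw [hseteq]
        rw [lintegral_congr_ae h1,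
          lintegral_const_mul _ (measurable_stat_integrand ν (hA.inter hcompl_meas)),
          ← hsta _ (hA.inter hcompl_meas), hρ_apply A hA]
      -- contraction events
      set G₀ : Set C(M, M) := {f : C(M, M) | f x₀ = x₀} with hG₀def
      have hG₀_closed : IsClosed G₀ :=
        isClosed_singleton.preimage (continuous_eval_const x₀)
      have hG₀_full : μ G₀ = 1 := by
        rw [← prob_compl_eq_zero_iff hG₀_closed.measurableSet]
        rw [ae_iff] at hfix_ae
        simpa [hG₀def, Set.compl_setOf] using hfix_ae
      set E : ℝ → Set (ℕ → C(M, M)) := fun ε =>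
        {i | (∀ n, i n ∈ G₀) ∧
          ∀ n : ℕ, ∀ y : M, dist y x₀ ≤ ε → dist (rdsIter i n y) x₀ ≤ q ^ n} with hEdef
      have hE_closed : ∀ ε : ℝ, IsClosed (E ε) := by
        intro ε
        have h1 : IsClosed {i : ℕ → C(M, M) | ∀ n, i n ∈ G₀} := by
          have : {i : ℕ → C(M, M) | ∀ n, i n ∈ G₀}
              = ⋂ n, (fun i : ℕ → C(M, M) => i n) ⁻¹' G₀ := by
            ext i; simp
          rw [this]
          exact isClosed_iInter fun n => hG₀_closed.preimage (continuous_apply n)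
        have h2 : IsClosed {i : ℕ → C(M, M) |
            ∀ n : ℕ, ∀ y : M, dist y x₀ ≤ ε → dist (rdsIter i n y) x₀ ≤ q ^ n} := by
          have : {i : ℕ → C(M, M) |
              ∀ n : ℕ, ∀ y : M, dist y x₀ ≤ ε → dist (rdsIter i n y) x₀ ≤ q ^ n}
              = ⋂ (n : ℕ), ⋂ (y : M), ⋂ (_ : dist y x₀ ≤ ε),
                  {i : ℕ → C(M, M) | dist (rdsIter i n y) x₀ ≤ q ^ n} := by
            ext i
            simp only [Set.mem_setOf_eq, Set.mem_iInter]
          rw [this]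
          refine isClosed_iInter fun n => isClosed_iInter fun y => isClosed_iInter fun _ => ?_
          have hcont : Continuous fun i : ℕ → C(M, M) => dist (rdsIter i n y) x₀ :=
            (((continuous_rdsIter n).comp
              (continuous_id.prodMk continuous_const)).dist continuous_const)
          exact isClosed_le hcont continuous_const
        exact h1.inter h2
      have hE_mem_ae : ∀ᵐ i ∂P, ∃ k : ℕ, i ∈ E (1 / (k + 1 : ℝ)) := by
        filter_upwards [hLC x₀, hP.coord_full hG₀_closed.measurableSet hG₀_full]
          with i hiLC hifix
        obtain ⟨B, hB, hdiam⟩ := hiLC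
        obtain ⟨r, hr, hball⟩ := Metric.mem_nhds_iff.1 hB
        obtain ⟨k, hk⟩ := exists_nat_one_div_lt hr
        refine ⟨k, hifix, fun n y hy => ?_⟩
        have hyB : y ∈ B := hball (Metric.mem_ball.2 (lt_of_le_of_lt hy hk))
        have hx₀B : x₀ ∈ B := mem_of_mem_nhds hB
        have hfix' : rdsIter i n x₀ = x₀ := rdsIter_fixed hifix n
        have hbd : Bornology.IsBounded (rdsIter i n '' B) :=
          isCompact_univ.isBounded.subset (Set.subset_univ _)
        calc dist (rdsIter i n y) x₀ = dist (rdsIter i n y) (rdsIter i n x₀) := by rw [hfix']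
          _ ≤ Metric.diam (rdsIter i n '' B) :=
              Metric.dist_le_diam_of_mem hbd (Set.mem_image_of_mem _ hyB)
                (Set.mem_image_of_mem _ hx₀B)
          _ ≤ q ^ n := hdiam n
      have hexE : ∃ k : ℕ, P (E (1 / (k + 1 : ℝ))) ≠ 0 := by
        by_contra hall
        push_neg at hall
        have h2 : ∀ᵐ i ∂P, ∀ k : ℕ, i ∉ E (1 / (k + 1 : ℝ)) :=
          ae_all_iff.2 fun k => measure_eq_zero_iff_ae_notMem.1 (hall k)
        obtain ⟨i, hi1, hi2⟩ := (hE_mem_ae.and h2).exists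
        obtain ⟨k, hk⟩ := hi1
        exact hi2 k hk
      obtain ⟨k₁, hc_ne⟩ := hexE
      set ε₁ : ℝ := 1 / (k₁ + 1 : ℝ) with hε₁def
      have hε₁pos : 0 < ε₁ := by positivity
      -- the key quantitative bound
      have hkey : ∀ n : ℕ, ρ (Metric.closedBall x₀ ε₁) * P (E ε₁)
          ≤ ρ (Metric.closedBall x₀ (q ^ n)) := by
        intro n
        rw [← iter_stationary hP ρ hρ_sta (A := Metric.closedBall x₀ (q ^ n)) measurableSet_closedBall n]
        have hpt : ∀ i : ℕ → C(M, M),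
            (E ε₁).indicator (fun _ => ρ (Metric.closedBall x₀ ε₁)) i
            ≤ ρ {y | rdsIter i n y ∈ Metric.closedBall x₀ (q ^ n)} := by
          intro i
          by_cases hi : i ∈ E ε₁
          · rw [Set.indicator_of_mem hi]
            refine measure_mono fun y hy => ?_
            exact Metric.mem_closedBall.2 (hi.2 n y (Metric.mem_closedBall.1 hy))
          · rw [Set.indicator_of_notMem hi]
            exact zero_le
        calc ρ (Metric.closedBall x₀ ε₁) * P (E ε₁)
            = ∫⁻ i, (E ε₁).indicator (fun _ => ρ (Metric.closedBall x₀ ε₁)) i ∂P := by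
              rw [lintegral_indicator_const (hE_closed ε₁).measurableSet]
          _ ≤ ∫⁻ i, ρ {y | rdsIter i n y ∈ Metric.closedBall x₀ (q ^ n)} ∂P :=
              lintegral_mono hpt
      have hInter : (⋂ n : ℕ, Metric.closedBall x₀ (q ^ n)) = {x₀} := by
        ext z
        simp only [Set.mem_iInter, Metric.mem_closedBall, Set.mem_singleton_iff]
        constructor
        · intro h
          have h0 : dist z x₀ ≤ 0 :=
            ge_of_tendsto' (tendsto_pow_atTop_nhds_zero_of_lt_one hq.1.le hq.2) h
          exact dist_le_zero.1 h0
        · rintro rfl n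
          simp [pow_nonneg hq.1.le]
      have hρx₀ : ρ {x₀} = 0 := by
        rw [hρ_apply _ (measurableSet_singleton _)]
        simp
      have htend : Tendsto (fun n : ℕ => ρ (Metric.closedBall x₀ (q ^ n))) atTop
          (𝓝 (ρ (⋂ n : ℕ, Metric.closedBall x₀ (q ^ n)))) := by
        refine tendsto_measure_iInter_atTop
          (fun n => measurableSet_closedBall.nullMeasurableSet) ?_
          ⟨0, measure_ne_top _ _⟩
        intro a b hab
        exact Metric.closedBall_subset_closedBall
          (pow_le_pow_of_le_one hq.1.le hq.2.le hab)
      rw [hInter, hρx₀] at htend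
      have hr0 : ρ (Metric.closedBall x₀ ε₁) * P (E ε₁) ≤ 0 :=
        ge_of_tendsto' htend hkey
      have hrball : ρ (Metric.closedBall x₀ ε₁) = 0 := by
        rcases mul_eq_zero.1 (le_antisymm hr0 (zero_le)) with h | h
        · exact h
        · exact absurd h hc_ne
      -- support of ρ
      set K := measSupp ρ with hKdef
      have hK_null : ρ Kᶜ = 0 := measSupp_compl_null ρ
      have hU_open : IsOpen Kᶜ := measSupp_compl_isOpen
      have hK_ne : K.Nonempty := by
        rw [Set.nonempty_iff_ne_empty]
        intro h
        have h1 : ρ Set.univ = 0 := by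
          rw [← Set.compl_empty, ← h]
          exact hK_null
        rw [measure_univ] at h1
        exact one_ne_zero h1
      have hae0 : ∀ᵐ g : C(M, M) ∂μ, ρ (⇑g ⁻¹' Kᶜ) = 0 := by
        have h1 := hρ_sta Kᶜ hU_open.measurableSet
        rw [hK_null] at h1
        exact (lintegral_eq_zero_iff (measurable_stat_integrand ρ hU_open.measurableSet)).1
          h1.symm
      have hsupp0 : ∀ f₀ ∈ measSupp μ, ρ (⇑f₀ ⁻¹' Kᶜ) = 0 := by
        intro f₀ hf₀
        by_contra h0
        have hUne : (Kᶜ)ᶜ.Nonempty := by rwa [compl_compl]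
        set A : ℕ → Set M := fun k =>
          {y : M | (1 : ℝ) / (k + 1 : ℝ) ≤ Metric.infDist (f₀ y) (Kᶜ)ᶜ} with hAdef
        have hsub : ⇑f₀ ⁻¹' Kᶜ ⊆ ⋃ k : ℕ, A k ∩ ⇑f₀ ⁻¹' Kᶜ := by
          intro y hy
          obtain ⟨r, hr, hball⟩ := Metric.isOpen_iff.1 hU_open (f₀ y) hy
          obtain ⟨k, hk⟩ := exists_nat_one_div_lt hr
          refine Set.mem_iUnion.2 ⟨k, ⟨?_, hy⟩⟩
          show (1 : ℝ) / (k + 1 : ℝ) ≤ Metric.infDist (f₀ y) (Kᶜ)ᶜ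
          by_contra hlt
          push_neg at hlt
          obtain ⟨z, hzU, hz⟩ := (Metric.infDist_lt_iff hUne).1 hlt
          exact hzU (hball (Metric.mem_ball'.2 (lt_trans hz hk)))
        obtain ⟨k, hAk⟩ : ∃ k : ℕ, ρ (A k ∩ ⇑f₀ ⁻¹' Kᶜ) ≠ 0 := by
          by_contra hall
          push_neg at hall
          exact h0 (measure_mono_null hsub (measure_iUnion_null hall))
        have hV : ∀ g : C(M, M), dist g f₀ < (1 : ℝ) / (k + 1 : ℝ) →
            ρ (⇑g ⁻¹' Kᶜ) ≠ 0 := by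
          intro g hg hnull
          refine hAk (measure_mono_null ?_ hnull)
          rintro y ⟨hyA, _⟩
          show g y ∈ Kᶜ
          by_contra hgy
          have h1 : Metric.infDist (f₀ y) (Kᶜ)ᶜ ≤ dist (f₀ y) (g y) :=
            Metric.infDist_le_dist_of_mem hgy
          have h2 : dist (f₀ y) (g y) < (1 : ℝ) / (k + 1 : ℝ) := by
            calc dist (f₀ y) (g y) ≤ dist f₀ g := ContinuousMap.dist_apply_le_dist y
              _ = dist g f₀ := dist_comm _ _
              _ < _ := hg
          have h3 := hyA
          rw [hAdef] at h3
          simp only [Set.mem_setOf_eq] at h3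
          linarith
        have hnull : μ {g : C(M, M) | ρ (⇑g ⁻¹' Kᶜ) ≠ 0} = 0 := by
          rw [ae_iff] at hae0
          simpa using hae0
        have hpos := hf₀ (Metric.ball f₀ ((1 : ℝ) / (k + 1 : ℝ))) Metric.isOpen_ball
          (Metric.mem_ball_self (by positivity))
        have : μ (Metric.ball f₀ ((1 : ℝ) / (k + 1 : ℝ))) = 0 :=
          measure_mono_null (fun g hg => hV g (Metric.mem_ball.1 hg)) hnull
        rw [this] at hpos
        exact lt_irrefl _ hpos
      have hKinv : ∀ f ∈ measSupp μ, ∀ y ∈ K, f y ∈ K := by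
        intro f hf y hyK
        by_contra hfy
        have h1 : ρ (⇑f ⁻¹' Kᶜ) = 0 := hsupp0 f hf
        have h2 := hyK (⇑f ⁻¹' Kᶜ) (hU_open.preimage f.continuous) hfy
        rw [h1] at h2
        exact lt_irrefl _ h2
      -- final contradiction via proximality
      obtain ⟨y₀, hy₀K⟩ := hK_ne
      obtain ⟨i, hi_supp, φ, hφ, hconv⟩ := hProx x₀ y₀
      have hx₀orb : ∀ n, rdsIter i n x₀ = x₀ :=
        fun n => rdsIter_fixed (fun k => hfix_supp _ (hi_supp k)) n
      have hy₀orb : ∀ n, rdsIter i n y₀ ∈ K :=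
        fun n => rdsIter_mem_invariant hi_supp hKinv hy₀K n
      obtain ⟨k, hk⟩ := (hconv.eventually_lt_const hε₁pos).exists
      rw [hx₀orb (φ k)] at hk
      have hzball : rdsIter i (φ k) y₀ ∈ Metric.ball x₀ ε₁ := by
        rw [Metric.mem_ball, dist_comm]
        exact hk
      have hpos := hy₀orb (φ k) _ Metric.isOpen_ball hzball
      have hzero : ρ (Metric.ball x₀ ε₁) = 0 :=
        measure_mono_null Metric.ball_subset_closedBall hrball
      rw [hzero] at hpos
      exact lt_irrefl _ hpos
    -- conclude ν = dirac x₀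
    have h1 : ν {x₀} = 1 := by
      have h2 := measure_add_measure_compl (μ := ν) (measurableSet_singleton x₀)
      rw [hc, add_zero, measure_univ] at h2
      exact h2
    refine Measure.ext fun A hA => ?_
    rw [Measure.dirac_apply' _ hA]
    by_cases hx₀A : x₀ ∈ A
    · rw [Set.indicator_of_mem hx₀A]
      refine le_antisymm prob_le_one ?_
      calc (1 : ℝ≥0∞) = ν {x₀} := h1.symm
        _ ≤ ν A := measure_mono (Set.singleton_subset_iff.2 hx₀A)
    · rw [Set.indicator_of_notMem hx₀A]
      refine measure_mono_null (fun y hy => ?_) hc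
      exact fun h => hx₀A (by rwa [← (Set.mem_singleton_iff.1 h)])
end
end

section
/- Let (F,μ) be an RDS of continuous maps on a compact metric space (M,D) satisfying property (LC) with rate q ∈ (0,1). Then for every δ ∈ (0,1) and every z ∈ M there exists a neighborhood B of z such that μ^ℕ({ i ∈ F^ℕ : diam_D(f_i^n(B)) ≤ q^n for all n ∈ ℕ }) ≥ δ. -/
open MeasureTheory Topology Filter

noncomputable section

theorem stmt3 {M : Type*} [MetricSpace M] [CompactSpace M]
    [MeasurableSpace M] [BorelSpace M]
    [MeasurableSpace C(M, M)] [BorelSpace C(M, M)]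
    (μ : Measure C(M, M)) [IsProbabilityMeasure μ]
    (P : Measure (ℕ → C(M, M))) (hP : IsProductMeasure μ P)
    (q : ℝ) (hq : q ∈ Set.Ioo (0 : ℝ) 1)
    (hLC : PropLC P q) :
    ∀ δ ∈ Set.Ioo (0 : ℝ) 1, ∀ z : M, ∃ B ∈ 𝓝 z,
      ENNReal.ofReal δ ≤
        P {i : ℕ → C(M, M) | ∀ n : ℕ, Metric.diam (rdsIter i n '' B) ≤ q ^ n} := by
  intro δ hδ z
  haveI : IsProbabilityMeasure P := hP.1
  set A : ℕ → Set (ℕ → C(M, M)) := fun k =>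
    {i | ∀ n : ℕ, Metric.diam (rdsIter i n '' Metric.ball z (1 / (k + 1))) ≤ q ^ n} with hA
  have hmono : Monotone A := by
    intro k l hkl i hi n
    refine le_trans (Metric.diam_mono (Set.image_mono (Metric.ball_subset_ball ?_))
      Metric.isBounded_of_compactSpace) (hi n)
    exact one_div_le_one_div_of_le (by positivity) (by exact_mod_cast Nat.succ_le_succ hkl)
  have hae : ∀ᵐ i ∂P, i ∈ ⋃ k, A k := by
    filter_upwards [hLC z] with i hi
    obtain ⟨B, hB, hB2⟩ := hi
    obtain ⟨ε, hε, hball⟩ := Metric.mem_nhds_iff.1 hB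
    obtain ⟨k, hk⟩ := exists_nat_one_div_lt hε
    refine Set.mem_iUnion.2 ⟨k, fun n => le_trans (Metric.diam_mono
      (Set.image_mono (le_trans (Metric.ball_subset_ball hk.le) hball))
      Metric.isBounded_of_compactSpace) (hB2 n)⟩
  have hUnion : P (⋃ k, A k) = 1 := by
    have heq : (⋃ k, A k) =ᵐ[P] Set.univ := by
      rw [Filter.eventuallyEq_set]
      filter_upwards [hae] with i hi
      simp [hi]
    rw [measure_congr heq, measure_univ]
  have htend : Tendsto (fun k => P (A k)) atTop (𝓝 1) := by
    rw [← hUnion]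
    exact tendsto_measure_iUnion_atTop hmono
  have hlt : ENNReal.ofReal δ < 1 := by
    rw [← ENNReal.ofReal_one]
    exact ENNReal.ofReal_lt_ofReal_iff_of_nonneg hδ.1.le |>.2 hδ.2
  have : ∀ᶠ k in atTop, ENNReal.ofReal δ ≤ P (A k) :=
    htend.eventually (eventually_ge_nhds hlt)
  obtain ⟨k, hk⟩ := this.exists
  exact ⟨Metric.ball z (1 / (k + 1)), Metric.ball_mem_nhds z (by positivity), hk⟩
end
end

section
/- Let (F,μ) be an RDS of continuous maps on a compact metric space (M,D) satisfying properties (P) and (LC) with rate q ∈ (0,1). Then for every x,y ∈ M the set Ω^{x,y} := { i ∈ F^ℕ : there exists n ∈ ℕ such that D(X_{n+k}^x(i), X_{n+k}^y(i)) ≤ q^k for all k ≥ 0 } has full measure: μ^ℕ(Ω^{x,y}) = 1. -/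
set_option linter.unusedSectionVars false
set_option linter.unusedVariables false
set_option maxHeartbeats 1000000


open MeasureTheory Topology Filter

noncomputable section

namespace RDSAux

variable {C : Type*} [MeasurableSpace C]

def res (m : ℕ) (i : ℕ → C) : Fin m → C := fun k => i k
def shf (m : ℕ) (i : ℕ → C) : ℕ → C := fun k => i (m + k)
def pairMap (m : ℕ) (i : ℕ → C) : (Fin m → C) × (ℕ → C) := (res m i, shf m i)

lemma measurable_res (m : ℕ) : Measurable (res (C := C) m) :=
  measurable_pi_lambda _ fun k => measurable_pi_apply _

lemma measurable_shf (m : ℕ) : Measurable (shf (C := C) m) :=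
  measurable_pi_lambda _ fun k => measurable_pi_apply _

lemma measurable_pairMap (m : ℕ) : Measurable (pairMap (C := C) m) :=
  (measurable_res m).prodMk (measurable_shf m)

/-- box cylinders -/
def Box (n : ℕ) (s : Fin n → Set C) : Set (ℕ → C) := {ω | ∀ k : Fin n, ω k ∈ s k}

def BoxS : Set (Set (ℕ → C)) :=
  {S | ∃ (n : ℕ) (s : Fin n → Set C), (∀ k, MeasurableSet (s k)) ∧ S = Box n s}

lemma measurableSet_Box {n : ℕ} {s : Fin n → Set C} (hs : ∀ k, MeasurableSet (s k)) :
    MeasurableSet (Box n s) := by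
  have : Box n s = ⋂ k : Fin n, (fun ω : ℕ → C => ω k) ⁻¹' s k := by
    ext ω; simp [Box]
  rw [this]
  exact MeasurableSet.iInter fun k => (measurable_pi_apply _) (hs k)

lemma isPiSystem_BoxS : IsPiSystem (BoxS (C := C)) := by
  rintro S1 ⟨n1, s1, h1, rfl⟩ S2 ⟨n2, s2, h2, rfl⟩ -
  refine ⟨max n1 n2, fun k =>
    (if h : (k : ℕ) < n1 then s1 ⟨k, h⟩ else Set.univ) ∩
    (if h : (k : ℕ) < n2 then s2 ⟨k, h⟩ else Set.univ), fun k => ?_, ?_⟩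
  · refine MeasurableSet.inter ?_ ?_ <;>
    · split
      · apply_assumption
      · exact MeasurableSet.univ
  · ext ω
    simp only [Set.mem_inter_iff, Box, Set.mem_setOf_eq, Set.mem_inter_iff]
    constructor
    · rintro ⟨ha, hb⟩ k
      constructor
      · split
        · exact ha _
        · trivial
      · split
        · exact hb _
        · trivial
    · intro h
      constructor
      · intro k
        have := (h ⟨k, lt_of_lt_of_le k.2 (le_max_left n1 n2)⟩).1
        rwa [dif_pos k.2] at this
      · intro k
        have := (h ⟨k, lt_of_lt_of_le k.2 (le_max_right n1 n2)⟩).2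
        rwa [dif_pos k.2] at this

lemma generateFrom_BoxS :
    MeasurableSpace.generateFrom (BoxS (C := C)) = MeasurableSpace.pi := by
  apply le_antisymm
  · apply MeasurableSpace.generateFrom_le
    rintro S ⟨n, s, hs, rfl⟩
    exact measurableSet_Box hs
  · have hev : ∀ k : ℕ, @Measurable _ _ (MeasurableSpace.generateFrom (BoxS (C := C))) _
        (fun ω : ℕ → C => ω k) := by
      intro k t ht
      apply MeasurableSpace.measurableSet_generateFrom
      refine ⟨k + 1, fun j => if (j : ℕ) = k then t else Set.univ, fun j => ?_, ?_⟩
      · by_cases hj : (j : ℕ) = k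
        · simp only [hj, if_true]; exact ht
        · simp only [hj, if_false]; exact MeasurableSet.univ
      · ext ω
        simp only [Set.mem_preimage, Box, Set.mem_setOf_eq]
        constructor
        · intro h j
          by_cases hj : (j : ℕ) = k
          · simp only [hj, if_true]; exact h
          · simp only [hj, if_false]; trivial
        · intro h
          have := h ⟨k, Nat.lt_succ_self k⟩
          rwa [if_pos rfl] at this
    exact iSup_le fun k => measurable_iff_comap_le.mp (hev k)

/-- two finite measures agreeing on box cylinders agree -/
lemma ext_boxes {P1 P2 : Measure (ℕ → C)} [IsFiniteMeasure P1] [IsFiniteMeasure P2]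
    (h : ∀ (n : ℕ) (s : Fin n → Set C), (∀ k, MeasurableSet (s k)) →
      P1 (Box n s) = P2 (Box n s)) : P1 = P2 := by
  have huniv : P1 Set.univ = P2 Set.univ := by
    have := h 0 (fun _ => Set.univ) (fun k => MeasurableSet.univ)
    have hbox : (Box 0 (fun _ => Set.univ) : Set (ℕ → C)) = Set.univ := by
      ext ω; simp [Box]
    rwa [hbox] at this
  exact ext_of_generate_finite (BoxS (C := C)) generateFrom_BoxS.symm isPiSystem_BoxS
    (by rintro S ⟨n, s, hs, rfl⟩; exact h n s hs) huniv

end RDSAux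

namespace RDSAux
variable {C : Type*} [MeasurableSpace C]

lemma res_box (m : ℕ) (s : Fin m → Set C) :
    res m ⁻¹' Set.univ.pi s = Box m s := by
  ext ω; simp [res, Box, Set.mem_pi]

lemma res_shf_box (m n : ℕ) (s : Fin m → Set C) (t : Fin n → Set C) :
    res m ⁻¹' Set.univ.pi s ∩ shf m ⁻¹' Box n t = Box (m + n) (Fin.append s t) := by
  ext ω
  simp only [Set.mem_inter_iff, Set.mem_preimage, Set.mem_pi, Set.mem_univ, true_implies,
    Box, Set.mem_setOf_eq, res, shf]
  constructor
  · rintro ⟨h1, h2⟩ j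
    refine Fin.addCases (fun k => ?_) (fun k => ?_) j
    · rw [Fin.append_left]
      simpa [Fin.coe_castAdd] using h1 k
    · rw [Fin.append_right]
      simpa [Fin.coe_natAdd] using h2 k
  · intro h
    constructor
    · intro k
      have := h (Fin.castAdd n k)
      rwa [Fin.append_left, Fin.coe_castAdd] at this
    · intro k
      have := h (Fin.natAdd m k)
      rwa [Fin.append_right, Fin.coe_natAdd] at this

variable (μ : Measure C) [IsProbabilityMeasure μ] (P : Measure (ℕ → C))
  [IsProbabilityMeasure P]
  (hPbox : ∀ (n : ℕ) (s : Fin n → Set C), (∀ k, MeasurableSet (s k)) →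
    P (Box n s) = ∏ k, μ (s k))

include hPbox

lemma map_res_eq (m : ℕ) :
    Measure.map (res m) P = Measure.pi (fun _ : Fin m => μ) := by
  refine (Measure.pi_eq fun s hs => ?_).symm
  rw [Measure.map_apply (measurable_res m) (MeasurableSet.univ_pi hs), res_box]
  exact hPbox m s hs

lemma box_prob_le_one (n : ℕ) (s : Fin n → Set C) (hs : ∀ k, MeasurableSet (s k)) :
    P (Box n s) ≠ ⊤ := measure_ne_top P _

lemma step_b (m : ℕ) (s : Fin m → Set C) (hs : ∀ k, MeasurableSet (s k)) :
    ∀ T : Set (ℕ → C), MeasurableSet T →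
      P (res m ⁻¹' Set.univ.pi s ∩ shf m ⁻¹' T) = (∏ k, μ (s k)) * P T := by
  have hres : MeasurableSet (res m ⁻¹' Set.univ.pi s) :=
    (measurable_res m) (MeasurableSet.univ_pi hs)
  set ν1 : Measure (ℕ → C) :=
    Measure.map (shf m) (P.restrict (res m ⁻¹' Set.univ.pi s)) with hν1
  set ν2 : Measure (ℕ → C) := (∏ k, μ (s k)) • P with hν2
  have hν1T : ∀ T : Set (ℕ → C), MeasurableSet T →
      ν1 T = P (res m ⁻¹' Set.univ.pi s ∩ shf m ⁻¹' T) := by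
    intro T hT
    rw [hν1, Measure.map_apply (measurable_shf m) hT,
      Measure.restrict_apply ((measurable_shf m) hT), Set.inter_comm]
  have hfin1 : IsFiniteMeasure ν1 := by
    constructor
    rw [hν1T Set.univ MeasurableSet.univ]
    exact lt_of_le_of_lt (measure_mono (Set.inter_subset_left)) (measure_lt_top P _)
  have hfin2 : IsFiniteMeasure ν2 := by
    constructor
    rw [hν2, Measure.smul_apply, smul_eq_mul]
    have h1 : (∏ k, μ (s k)) ≤ 1 := by
      calc (∏ k, μ (s k)) ≤ ∏ (_ : Fin m), (1 : ENNReal) :=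
            Finset.prod_le_prod' fun k _ => prob_le_one
        _ = 1 := by simp
    calc (∏ k, μ (s k)) * P Set.univ ≤ 1 * 1 := mul_le_mul h1 prob_le_one zero_le zero_le
      _ < ⊤ := by simp
  have key : ν1 = ν2 := by
    refine ext_boxes fun n t ht => ?_
    rw [hν1T _ (measurableSet_Box ht), res_shf_box,
      hPbox (m + n) (Fin.append s t) ?_, hν2, Measure.smul_apply, smul_eq_mul,
      hPbox n t ht]
    · rw [Fin.prod_univ_add]
      simp [Fin.append_left, Fin.append_right]
    · intro j
      refine Fin.addCases (fun k => ?_) (fun k => ?_) j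
      · rw [Fin.append_left]; exact hs k
      · rw [Fin.append_right]; exact ht k
  intro T hT
  rw [← hν1T T hT, key, hν2, Measure.smul_apply, smul_eq_mul]

lemma step_c (m : ℕ) (S : Set (Fin m → C)) (hS : MeasurableSet S)
    (T : Set (ℕ → C)) (hT : MeasurableSet T) :
    P (res m ⁻¹' S ∩ shf m ⁻¹' T) = Measure.pi (fun _ : Fin m => μ) S * P T := by
  by_cases h0 : P T = 0
  · have huniv : P (res m ⁻¹' Set.univ ∩ shf m ⁻¹' T) = P T := by
      have := step_b μ P hPbox m (fun _ => Set.univ) (fun _ => MeasurableSet.univ) T hT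
      simpa [Set.pi_univ] using this
    have hle : P (res m ⁻¹' S ∩ shf m ⁻¹' T) ≤ P T := by
      rw [← huniv]
      exact measure_mono (Set.inter_subset_inter_left _ (Set.preimage_mono (Set.subset_univ S)))
    simp [h0, le_antisymm (hle.trans h0.le) zero_le]
  · set c := P T with hc
    have hct : c ≠ ⊤ := measure_ne_top P T
    set κ : Measure (Fin m → C) := c⁻¹ • Measure.map (res m) (P.restrict (shf m ⁻¹' T)) with hκ
    have hκap : ∀ S' : Set (Fin m → C), MeasurableSet S' →
        κ S' = c⁻¹ * P (res m ⁻¹' S' ∩ shf m ⁻¹' T) := by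
      intro S' hS'
      rw [hκ, Measure.smul_apply, smul_eq_mul,
        Measure.map_apply (measurable_res m) hS',
        Measure.restrict_apply ((measurable_res m) hS')]
    have hpiκ : Measure.pi (fun _ : Fin m => μ) = κ := by
      refine Measure.pi_eq fun s hs => ?_
      rw [hκap _ (MeasurableSet.univ_pi hs), step_b μ P hPbox m s hs T hT]
      rw [← hc, mul_comm (c⁻¹) _, mul_assoc, ENNReal.mul_inv_cancel h0 hct, mul_one]
    rw [hpiκ, hκap S hS, mul_comm (c⁻¹) _, mul_assoc, ENNReal.inv_mul_cancel h0 hct, mul_one]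

lemma map_pair_eq (m : ℕ) :
    Measure.map (pairMap m) P = (Measure.pi fun _ : Fin m => μ).prod P := by
  refine (Measure.prod_eq fun S T hS hT => ?_).symm
  rw [Measure.map_apply (measurable_pairMap m) (hS.prod hT)]
  exact step_c μ P hPbox m S hS T hT

/-- KEY disintegration formula -/
lemma key_fubini (m : ℕ) (W : Set ((Fin m → C) × (ℕ → C))) (hW : MeasurableSet W) :
    P (pairMap m ⁻¹' W) =
      ∫⁻ w, P {j | (w, j) ∈ W} ∂(Measure.pi fun _ : Fin m => μ) := by
  rw [← Measure.map_apply (measurable_pairMap m) hW, map_pair_eq μ P hPbox,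
    Measure.prod_apply hW]
  rfl

lemma lintegral_res (m : ℕ) (g : (Fin m → C) → ENNReal) (hg : Measurable g) :
    ∫⁻ i, g (res m i) ∂P = ∫⁻ w, g w ∂(Measure.pi fun _ : Fin m => μ) := by
  rw [← map_res_eq μ P hPbox m, lintegral_map hg (measurable_res m)]

end RDSAux

namespace RDSAux

variable {M : Type*} [MetricSpace M] [CompactSpace M]

def extW (m : ℕ) (w : Fin m → C(M, M)) : ℕ → C(M, M) :=
  fun k => if h : k < m then w ⟨k, h⟩ else ContinuousMap.id M
def Phi (m : ℕ) (w : Fin m → C(M, M)) (x : M) : M := rdsIter (extW m w) m x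

lemma rdsIter_congr {i j : ℕ → C(M, M)} {m : ℕ} (h : ∀ k < m, i k = j k) (x : M) :
    rdsIter i m x = rdsIter j m x := by
  induction m with
  | zero => rfl
  | succ n ih =>
    show i n _ = j n _
    rw [ih fun k hk => h k (hk.trans n.lt_succ_self), h n n.lt_succ_self]

lemma rdsIter_add (i : ℕ → C(M, M)) (m k : ℕ) (x : M) :
    rdsIter i (m + k) x = rdsIter (shf m i) k (rdsIter i m x) := by
  induction k with
  | zero => rfl
  | succ n ih =>
    show i (m + n) (rdsIter i (m + n) x) = i (m + n) _
    rw [ih]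

lemma Phi_res (m : ℕ) (i : ℕ → C(M, M)) (x : M) : Phi m (res m i) x = rdsIter i m x :=
  rdsIter_congr (fun k hk => by simp [extW, res, hk]) x

lemma continuous_rdsIter (n : ℕ) :
    Continuous fun p : (ℕ → C(M, M)) × M => rdsIter p.1 n p.2 := by
  induction n with
  | zero => exact continuous_snd
  | succ n ih =>
    have h1 : Continuous fun p : (ℕ → C(M, M)) × M => (p.1 n, rdsIter p.1 n p.2) :=
      ((continuous_apply n).comp continuous_fst).prodMk ih
    exact (ContinuousEval.continuous_eval.comp h1 : _)

lemma continuous_Phi (m : ℕ) :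
    Continuous fun p : (Fin m → C(M, M)) × M => Phi m p.1 p.2 := by
  have hext : Continuous fun w : Fin m → C(M, M) => extW m w := by
    refine continuous_pi fun k => ?_
    by_cases h : k < m
    · simpa [extW, h] using (continuous_apply (⟨k, h⟩ : Fin m))
    · simpa [extW, h] using continuous_const
  exact (continuous_rdsIter m).comp ((hext.comp continuous_fst).prodMk continuous_snd)

variable [MeasurableSpace M] [BorelSpace M]
  [MeasurableSpace C(M, M)] [BorelSpace C(M, M)]

lemma measurable_distIter (n : ℕ) :
    Measurable fun p : (M × M) × (ℕ → C(M, M)) =>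
      dist (rdsIter p.2 n p.1.1) (rdsIter p.2 n p.1.2) := by
  have h : Continuous fun p : (M × M) × (ℕ → C(M, M)) =>
      dist (rdsIter p.2 n p.1.1) (rdsIter p.2 n p.1.2) := by
    have hc1 : Continuous fun p : (M × M) × (ℕ → C(M, M)) => (p.2, p.1.1) :=
      continuous_snd.prodMk (continuous_fst.fst)
    have hc2 : Continuous fun p : (M × M) × (ℕ → C(M, M)) => (p.2, p.1.2) :=
      continuous_snd.prodMk (continuous_fst.snd)
    exact ((continuous_rdsIter (M := M) n).comp hc1).dist
      ((continuous_rdsIter (M := M) n).comp hc2)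
  exact h.measurable

/-- sync-from-now event -/
def syncSet (q : ℝ) (u v : M) : Set (ℕ → C(M, M)) :=
  {i | ∀ k : ℕ, dist (rdsIter i k u) (rdsIter i k v) ≤ q ^ k}

/-- eventual sync event -/
def Aset (q : ℝ) (u v : M) : Set (ℕ → C(M, M)) :=
  {i | ∃ n : ℕ, ∀ k : ℕ, dist (rdsIter i (n + k) u) (rdsIter i (n + k) v) ≤ q ^ k}

lemma measurableSet_graph_syncSet (q : ℝ) :
    MeasurableSet {p : (M × M) × (ℕ → C(M, M)) | p.2 ∈ syncSet q p.1.1 p.1.2} := by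
  have : {p : (M × M) × (ℕ → C(M, M)) | p.2 ∈ syncSet q p.1.1 p.1.2} =
      ⋂ k : ℕ, {p | dist (rdsIter p.2 k p.1.1) (rdsIter p.2 k p.1.2) ≤ q ^ k} := by
    ext p; simp [syncSet, Set.mem_iInter]
  rw [this]
  exact MeasurableSet.iInter fun k =>
    measurableSet_le (measurable_distIter k) measurable_const

lemma measurableSet_graph_Aset (q : ℝ) :
    MeasurableSet {p : (M × M) × (ℕ → C(M, M)) | p.2 ∈ Aset q p.1.1 p.1.2} := by
  have : {p : (M × M) × (ℕ → C(M, M)) | p.2 ∈ Aset q p.1.1 p.1.2} =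
      ⋃ n : ℕ, ⋂ k : ℕ,
        {p | dist (rdsIter p.2 (n + k) p.1.1) (rdsIter p.2 (n + k) p.1.2) ≤ q ^ k} := by
    ext p; simp [Aset, Set.mem_iUnion, Set.mem_iInter]
  rw [this]
  exact MeasurableSet.iUnion fun n => MeasurableSet.iInter fun k =>
    measurableSet_le (measurable_distIter (n + k)) measurable_const

lemma measurableSet_syncSet (q : ℝ) (u v : M) : MeasurableSet (syncSet q u v) := by
  have := (measurableSet_graph_syncSet (M := M) q).preimage
    (f := fun i : ℕ → C(M, M) => (((u, v) : M × M), i))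
    (measurable_const.prodMk measurable_id)
  simpa using this

lemma measurableSet_Aset (q : ℝ) (u v : M) : MeasurableSet (Aset q u v) := by
  have := (measurableSet_graph_Aset (M := M) q).preimage
    (f := fun i : ℕ → C(M, M) => (((u, v) : M × M), i))
    (measurable_const.prodMk measurable_id)
  simpa using this

end RDSAux

namespace RDSAux

variable {M : Type*} [MetricSpace M] [CompactSpace M]
  [MeasurableSpace M] [BorelSpace M]
  [MeasurableSpace C(M, M)] [BorelSpace C(M, M)]

/-- the local-contraction event for center `z` and radius `r` -/
def Ectr (q : ℝ) (z : M) (r : ℝ) : Set (ℕ → C(M, M)) :=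
  {i | ∀ n : ℕ, Metric.diam (rdsIter i n '' Metric.ball z r) ≤ q ^ n}

lemma measurableSet_Ectr {q : ℝ} (hq : 0 ≤ q) (z : M) (r : ℝ) :
    MeasurableSet (Ectr q z r) := by
  obtain ⟨D, hDc, hDd⟩ := TopologicalSpace.exists_countable_dense M
  have hEq : Ectr q z r = ⋂ n : ℕ, ⋂ (x ∈ D ∩ Metric.ball z r) (y ∈ D ∩ Metric.ball z r),
      {i | dist (rdsIter i n x) (rdsIter i n y) ≤ q ^ n} := by
    ext i
    simp only [Ectr, Set.mem_setOf_eq, Set.mem_iInter]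
    constructor
    · intro h n x hx y hy
      exact le_trans (Metric.dist_le_diam_of_mem
        (isCompact_univ.isBounded.subset (Set.subset_univ _))
        (Set.mem_image_of_mem _ hx.2) (Set.mem_image_of_mem _ hy.2)) (h n)
    · intro h n
      have hf : Continuous fun x : M => rdsIter i n x :=
        (continuous_rdsIter n).comp (continuous_const.prodMk continuous_id)
      have hK : IsClosed {p : M × M | dist (rdsIter i n p.1) (rdsIter i n p.2) ≤ q ^ n} :=
        isClosed_le ((hf.comp continuous_fst).dist (hf.comp continuous_snd)) continuous_const
      have hsub : closure (D ∩ Metric.ball z r) ×ˢ closure (D ∩ Metric.ball z r) ⊆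
          {p : M × M | dist (rdsIter i n p.1) (rdsIter i n p.2) ≤ q ^ n} := by
        rw [← closure_prod_eq]
        refine hK.closure_subset_iff.mpr ?_
        rintro ⟨a, b⟩ ⟨ha, hb⟩
        exact h n a ha b hb
      refine Metric.diam_le_of_forall_dist_le (pow_nonneg hq n) ?_
      rintro a ⟨xa, hxa, rfl⟩ b ⟨xb, hxb, rfl⟩
      have h1 := hDd.open_subset_closure_inter Metric.isOpen_ball hxa
      have h2 := hDd.open_subset_closure_inter Metric.isOpen_ball hxb
      rw [Set.inter_comm (Metric.ball z r) D] at h1 h2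
      exact hsub (show (xa, xb) ∈ _ ×ˢ _ from ⟨h1, h2⟩)
  rw [hEq]
  refine MeasurableSet.iInter fun n => ?_
  refine MeasurableSet.biInter (hDc.mono Set.inter_subset_left) fun x hx => ?_
  refine MeasurableSet.biInter (hDc.mono Set.inter_subset_left) fun y hy => ?_
  have : Measurable fun i : ℕ → C(M, M) =>
      dist (rdsIter i n x) (rdsIter i n y) :=
    (measurable_distIter n).comp
      ((measurable_const : Measurable fun _ : ℕ → C(M, M) => ((x, y) : M × M)).prodMk
        measurable_id)
  exact measurableSet_le this measurable_const

/-- Step 1: uniform local contraction probability -/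
lemma uniform_sync {q : ℝ} (hq : q ∈ Set.Ioo (0 : ℝ) 1)
    (P : Measure (ℕ → C(M, M))) [IsProbabilityMeasure P]
    (hLC : ∀ x : M, ∀ᵐ i ∂P, ∃ B ∈ 𝓝 x, ∀ n : ℕ,
      Metric.diam (rdsIter i n '' B) ≤ q ^ n) :
    ∃ δ : ℝ, 0 < δ ∧ ∀ u v : M, dist u v < δ →
      (1 / 2 : ENNReal) ≤ P (syncSet q u v) := by
  rcases isEmpty_or_nonempty M with hM | hM
  · exact ⟨1, one_pos, fun u v _ => (IsEmpty.false u).elim⟩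
  have hbdd : ∀ s : Set M, Bornology.IsBounded s :=
    fun s => isCompact_univ.isBounded.subset (Set.subset_univ _)
  have hz : ∀ z : M, ∃ r : ℝ, 0 < r ∧ (1 / 2 : ENNReal) ≤ P (Ectr q z r) := by
    intro z
    have hmono : Monotone fun j : ℕ => Ectr q z (1 / (j + 1 : ℝ)) := by
      intro j j' hjj i hi n
      refine le_trans (Metric.diam_mono (Set.image_mono (Metric.ball_subset_ball
        (one_div_le_one_div_of_le (by positivity)
          (by exact_mod_cast Nat.succ_le_succ hjj)))) (hbdd _)) (hi n)
    have hmem : ∀ᵐ i ∂P, i ∈ ⋃ j : ℕ, Ectr q z (1 / (j + 1 : ℝ)) := by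
      filter_upwards [hLC z] with i hi
      obtain ⟨B, hB, hd⟩ := hi
      obtain ⟨ε, hε, hball⟩ := Metric.mem_nhds_iff.mp hB
      obtain ⟨j, hj⟩ := exists_nat_one_div_lt hε
      refine Set.mem_iUnion.mpr ⟨j, fun n => ?_⟩
      refine le_trans (Metric.diam_mono (Set.image_mono ?_) (hbdd _)) (hd n)
      exact subset_trans (Metric.ball_subset_ball hj.le) hball
    have hSm : MeasurableSet (⋃ j : ℕ, Ectr q z (1 / (j + 1 : ℝ))) :=
      MeasurableSet.iUnion fun j => measurableSet_Ectr hq.1.le z _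
    have hcover : P (⋃ j : ℕ, Ectr q z (1 / (j + 1 : ℝ))) = 1 := by
      refine (prob_compl_eq_zero_iff hSm).mp ?_
      have h0 := ae_iff.mp hmem
      simpa [Set.compl_def] using h0
    have hhalf : ∃ j : ℕ, (1 / 2 : ENNReal) ≤ P (Ectr q z (1 / (j + 1 : ℝ))) := by
      by_contra hcon
      push_neg at hcon
      have hle : P (⋃ j : ℕ, Ectr q z (1 / (j + 1 : ℝ))) ≤ 1 / 2 :=
        le_of_tendsto (tendsto_measure_iUnion_atTop hmono)
          (Filter.Eventually.of_forall fun j => (hcon j).le)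
      rw [hcover] at hle
      have : (1 / 2 : ENNReal) < 1 := by norm_num
      exact absurd (le_trans (le_refl _) hle) (not_le.mpr this)
    obtain ⟨j, hj⟩ := hhalf
    exact ⟨1 / (j + 1 : ℝ), by positivity, hj⟩
  choose r hr0 hr using hz
  obtain ⟨t, ht⟩ := isCompact_univ.elim_finite_subcover
    (fun z : M => Metric.ball z (r z / 2)) (fun z => Metric.isOpen_ball)
    (fun x _ => Set.mem_iUnion.mpr ⟨x, Metric.mem_ball_self (half_pos (hr0 x))⟩)
  have htne : t.Nonempty := by
    obtain ⟨z, hz1, _⟩ := Set.mem_iUnion₂.mp (ht (Set.mem_univ hM.some))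
    exact ⟨z, hz1⟩
  refine ⟨t.inf' htne fun z => r z / 2, ?_, ?_⟩
  · exact (Finset.lt_inf'_iff htne).mpr fun z hz => half_pos (hr0 z)
  · intro u v huv
    obtain ⟨z, hzt, hu⟩ := Set.mem_iUnion₂.mp (ht (Set.mem_univ u))
    have hδz : t.inf' htne (fun z => r z / 2) ≤ r z / 2 := Finset.inf'_le _ hzt
    have hu' : dist u z < r z := lt_of_lt_of_le hu (by linarith [hr0 z])
    have hv : dist v z < r z := by
      have := Metric.mem_ball.mp hu
      calc dist v z ≤ dist v u + dist u z := dist_triangle v u z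
        _ < t.inf' htne (fun z => r z / 2) + r z / 2 := by
            rw [dist_comm v u]; exact add_lt_add (lt_of_lt_of_le huv le_rfl) this
        _ ≤ r z / 2 + r z / 2 := by gcongr
        _ = r z := by ring
    refine le_trans (hr z) (measure_mono fun i hi k => ?_)
    exact le_trans (Metric.dist_le_diam_of_mem (hbdd _)
      (Set.mem_image_of_mem _ hu') (Set.mem_image_of_mem _ hv)) (hi k)

end RDSAux


namespace RDSAux

variable {M : Type*} [MetricSpace M] [CompactSpace M]
  [MeasurableSpace M] [BorelSpace M]
  [MeasurableSpace C(M, M)] [BorelSpace C(M, M)]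

lemma Box_eq_pi_preimage (m : ℕ) (s : Fin m → Set C(M, M)) :
    (Box m s : Set (ℕ → C(M, M))) = res m ⁻¹' Set.univ.pi s := (res_box m s).symm

/-- Step 2: a uniform positive lower bound for the eventual-sync event. -/
lemma exists_pos_lb {q : ℝ} (hq : q ∈ Set.Ioo (0 : ℝ) 1)
    (μ : Measure C(M, M)) [IsProbabilityMeasure μ]
    (P : Measure (ℕ → C(M, M))) [IsProbabilityMeasure P]
    (hPbox : ∀ (n : ℕ) (s : Fin n → Set C(M, M)), (∀ k, MeasurableSet (s k)) →
      P (Box n s) = ∏ k, μ (s k))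
    (hProx : PropP μ) (hLC : PropLC P q) :
    ∃ c : ENNReal, 0 < c ∧ c ≠ ⊤ ∧ ∀ u v : M, c ≤ P (Aset q u v) := by
  rcases isEmpty_or_nonempty M with hM | hM
  · exact ⟨1, zero_lt_one, ENNReal.one_ne_top, fun u v => (IsEmpty.false u).elim⟩
  obtain ⟨δ, hδ, hδsync⟩ := uniform_sync hq P hLC
  -- local data at each pair of points
  have hdata : ∀ p : M × M, ∃ (n : ℕ) (U : Fin n → Set C(M, M)) (V : Set (M × M)),
      IsOpen V ∧ p ∈ V ∧ (∀ k, MeasurableSet (U k)) ∧ 0 < P (Box n U) ∧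
      ∀ w : Fin n → C(M, M), (∀ k, w k ∈ U k) → ∀ p' ∈ V,
        dist (Phi n w p'.1) (Phi n w p'.2) < δ := by
    rintro ⟨u, v⟩
    obtain ⟨istar, hsupp, φ, hφ, hconv⟩ := hProx u v
    obtain ⟨K, hK⟩ := (hconv.eventually_lt_const (half_pos hδ)).exists
    set n := φ K with hn
    have hG : Continuous fun pr : (Fin n → C(M, M)) × (M × M) =>
        dist (Phi n pr.1 pr.2.1) (Phi n pr.1 pr.2.2) := by
      have c1 : Continuous fun pr : (Fin n → C(M, M)) × (M × M) => Phi n pr.1 pr.2.1 :=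
        (continuous_Phi n).comp (continuous_fst.prodMk (continuous_snd.fst))
      have c2 : Continuous fun pr : (Fin n → C(M, M)) × (M × M) => Phi n pr.1 pr.2.2 :=
        (continuous_Phi n).comp (continuous_fst.prodMk (continuous_snd.snd))
      exact c1.dist c2
    have hO : IsOpen {pr : (Fin n → C(M, M)) × (M × M) |
        dist (Phi n pr.1 pr.2.1) (Phi n pr.1 pr.2.2) < δ} :=
      isOpen_lt hG continuous_const
    have hmemO : (res n istar, (u, v)) ∈ {pr : (Fin n → C(M, M)) × (M × M) |
        dist (Phi n pr.1 pr.2.1) (Phi n pr.1 pr.2.2) < δ} := by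
      show dist (Phi n (res n istar) u) (Phi n (res n istar) v) < δ
      rw [Phi_res, Phi_res]
      linarith
    obtain ⟨U0, hU0, V0, hV0, hUV⟩ := mem_nhds_prod_iff.mp (hO.mem_nhds hmemO)
    rw [nhds_pi] at hU0
    obtain ⟨I, hIfin, tt, htt, hsubU⟩ := Filter.mem_pi.mp hU0
    refine ⟨n, fun k => interior (tt k), interior V0, isOpen_interior,
      mem_interior_iff_mem_nhds.mpr hV0, fun k => isOpen_interior.measurableSet, ?_, ?_⟩
    · rw [hPbox n _ fun k => isOpen_interior.measurableSet]
      rw [CanonicallyOrderedAdd.prod_pos]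
      intro k _
      exact hsupp k (interior (tt k)) isOpen_interior
        (mem_interior_iff_mem_nhds.mpr (htt k))
    · intro w hw p' hp'
      have hwU0 : w ∈ U0 := hsubU fun k _ => interior_subset (hw k)
      exact hUV (Set.mk_mem_prod hwU0 (interior_subset hp'))
  choose nn UU VV hVopen hpV hUmeas hPpos hprop using hdata
  obtain ⟨t, ht⟩ := isCompact_univ.elim_finite_subcover VV hVopen
    (fun p _ => Set.mem_iUnion.mpr ⟨p, hpV p⟩)
  have htne : t.Nonempty := by
    obtain ⟨p0, hp1, _⟩ := Set.mem_iUnion₂.mp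
      (ht (Set.mem_univ (hM.some, hM.some)))
    exact ⟨p0, hp1⟩
  set c : ENNReal := (1 / 2) * t.inf' htne (fun p => P (Box (nn p) (UU p))) with hc
  have hcpos : 0 < c := by
    rw [hc]
    refine ENNReal.mul_pos (by norm_num) ?_
    exact ((Finset.lt_inf'_iff htne).mpr fun p hp => hPpos p).ne'
  have hcne : c ≠ ⊤ := by
    rw [hc]
    exact ENNReal.mul_ne_top (by norm_num)
      (ne_top_of_le_ne_top (measure_ne_top P _)
        (Finset.inf'_le _ htne.choose_spec))
  refine ⟨c, hcpos, hcne, fun u v => ?_⟩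
  obtain ⟨p, hpt, hpV'⟩ := Set.mem_iUnion₂.mp (ht (Set.mem_univ (u, v)))
  set m := nn p with hm
  set W : Set ((Fin m → C(M, M)) × (ℕ → C(M, M))) :=
    {wj | (∀ k, wj.1 k ∈ UU p k) ∧
      wj.2 ∈ syncSet q (Phi m wj.1 u) (Phi m wj.1 v)} with hW
  have hWmeas : MeasurableSet W := by
    have h1 : MeasurableSet {wj : (Fin m → C(M, M)) × (ℕ → C(M, M)) |
        ∀ k, wj.1 k ∈ UU p k} := by
      have : {wj : (Fin m → C(M, M)) × (ℕ → C(M, M)) | ∀ k, wj.1 k ∈ UU p k} =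
          (fun wj : (Fin m → C(M, M)) × (ℕ → C(M, M)) => wj.1) ⁻¹' Set.univ.pi (UU p) := by
        ext wj; simp [Set.mem_pi]; rfl
      rw [this]
      exact measurable_fst (MeasurableSet.univ_pi (hUmeas p))
    have h2 : MeasurableSet {wj : (Fin m → C(M, M)) × (ℕ → C(M, M)) |
        wj.2 ∈ syncSet q (Phi m wj.1 u) (Phi m wj.1 v)} := by
      have hmap : Measurable fun wj : (Fin m → C(M, M)) × (ℕ → C(M, M)) =>
          (((Phi m wj.1 u, Phi m wj.1 v) : M × M), wj.2) := by
        have c1 : Continuous fun wj : (Fin m → C(M, M)) × (ℕ → C(M, M)) =>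
            Phi m wj.1 u :=
          (continuous_Phi m).comp (continuous_fst.prodMk continuous_const)
        have c2 : Continuous fun wj : (Fin m → C(M, M)) × (ℕ → C(M, M)) =>
            Phi m wj.1 v :=
          (continuous_Phi m).comp (continuous_fst.prodMk continuous_const)
        exact ((c1.prodMk c2).measurable).prodMk measurable_snd
      exact hmap (measurableSet_graph_syncSet q)
    exact h1.inter h2
  have hsubA : pairMap m ⁻¹' W ⊆ Aset q u v := by
    rintro i ⟨hiU, hisync⟩
    refine ⟨m, fun k => ?_⟩
    have h3 := hisync k
    simp only [pairMap] at h3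
    rwa [Phi_res, Phi_res, ← rdsIter_add, ← rdsIter_add] at h3
  refine le_trans ?_ (measure_mono hsubA)
  rw [key_fubini μ P hPbox m W hWmeas]
  have hlb : ∀ w : Fin m → C(M, M),
      Set.indicator (Set.univ.pi (UU p)) (fun _ => (1 / 2 : ENNReal)) w ≤
        P {j | (w, j) ∈ W} := by
    intro w
    by_cases hw : w ∈ Set.univ.pi (UU p)
    · rw [Set.indicator_of_mem hw]
      have hwU : ∀ k, w k ∈ UU p k := fun k => hw k (Set.mem_univ k)
      have hslice : {j | (w, j) ∈ W} = syncSet q (Phi m w u) (Phi m w v) := by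
        ext j; simp only [hW, Set.mem_setOf_eq]; tauto
      rw [hslice]
      refine hδsync _ _ ?_
      exact hprop p w hwU (u, v) hpV'
    · rw [Set.indicator_of_notMem hw]; exact zero_le
  calc c ≤ (1 / 2 : ENNReal) * P (Box m (UU p)) := by
        rw [hc]
        exact mul_le_mul_right (Finset.inf'_le _ hpt) _
    _ = (1 / 2 : ENNReal) *
        (Measure.pi fun _ : Fin m => μ) (Set.univ.pi (UU p)) := by
        rw [hPbox m _ (hUmeas p), Measure.pi_pi]
    _ = ∫⁻ w, Set.indicator (Set.univ.pi (UU p)) (fun _ => (1 / 2 : ENNReal)) w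
          ∂(Measure.pi fun _ : Fin m => μ) := by
        rw [lintegral_indicator (MeasurableSet.univ_pi (hUmeas p)),
          setLIntegral_const, mul_comm]
    _ ≤ ∫⁻ w, P {j | (w, j) ∈ W} ∂(Measure.pi fun _ : Fin m => μ) :=
        lintegral_mono hlb

end RDSAux


namespace RDSAux

variable {M : Type*} [MetricSpace M] [CompactSpace M]
  [MeasurableSpace M] [BorelSpace M]
  [MeasurableSpace C(M, M)] [BorelSpace C(M, M)]

lemma measurable_hA (q : ℝ) (P : Measure (ℕ → C(M, M))) [SFinite P] :
    Measurable fun p : M × M => P (Aset q p.1 p.2) := by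
  exact measurable_measure_prodMk_left (ν := P) (measurableSet_graph_Aset (M := M) q)

lemma measurable_PhiA (q : ℝ) (P : Measure (ℕ → C(M, M))) [SFinite P] (m : ℕ) (x y : M) :
    Measurable fun w : Fin m → C(M, M) => P (Aset q (Phi m w x) (Phi m w y)) := by
  have c1 : Continuous fun w : Fin m → C(M, M) => Phi m w x :=
    (continuous_Phi m).comp (continuous_id.prodMk continuous_const)
  have c2 : Continuous fun w : Fin m → C(M, M) => Phi m w y :=
    (continuous_Phi m).comp (continuous_id.prodMk continuous_const)
  exact Measurable.comp (g := fun p : M × M => P (Aset q p.1 p.2))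
    (f := fun w : Fin m → C(M, M) => ((Phi m w x, Phi m w y) : M × M))
    (measurable_hA q P) ((c1.prodMk c2).measurable)

lemma measurableSet_shiftGraph (q : ℝ) (m : ℕ) (x y : M) :
    MeasurableSet {wj : (Fin m → C(M, M)) × (ℕ → C(M, M)) |
      wj.2 ∈ Aset q (Phi m wj.1 x) (Phi m wj.1 y)} := by
  have hmap : Measurable fun wj : (Fin m → C(M, M)) × (ℕ → C(M, M)) =>
      (((Phi m wj.1 x, Phi m wj.1 y) : M × M), wj.2) := by
    have c1 : Continuous fun wj : (Fin m → C(M, M)) × (ℕ → C(M, M)) => Phi m wj.1 x :=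
      (continuous_Phi m).comp (continuous_fst.prodMk continuous_const)
    have c2 : Continuous fun wj : (Fin m → C(M, M)) × (ℕ → C(M, M)) => Phi m wj.1 y :=
      (continuous_Phi m).comp (continuous_fst.prodMk continuous_const)
    exact ((c1.prodMk c2).measurable).prodMk measurable_snd
  exact hmap (measurableSet_graph_Aset q)

lemma Aset_shift {q : ℝ} (hq0 : 0 ≤ q) (hq1 : q ≤ 1) (m : ℕ) (x y : M) :
    Aset q x y = pairMap m ⁻¹' {wj : (Fin m → C(M, M)) × (ℕ → C(M, M)) |
      wj.2 ∈ Aset q (Phi m wj.1 x) (Phi m wj.1 y)} := by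
  ext i
  simp only [Set.mem_preimage, pairMap, Set.mem_setOf_eq]
  constructor
  · rintro ⟨n, hn⟩
    refine ⟨n, fun k => ?_⟩
    rw [Phi_res, Phi_res, ← rdsIter_add, ← rdsIter_add]
    have h1 := hn (m + k)
    have he : n + (m + k) = m + (n + k) := by ring
    rw [he] at h1
    exact h1.trans (pow_le_pow_of_le_one hq0 hq1 (Nat.le_add_left k m))
  · rintro ⟨n, hn⟩
    refine ⟨m + n, fun k => ?_⟩
    have h1 := hn k
    rw [Phi_res, Phi_res, ← rdsIter_add, ← rdsIter_add] at h1
    rw [add_assoc]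
    exact h1

variable (μ : Measure C(M, M)) [IsProbabilityMeasure μ] (P : Measure (ℕ → C(M, M)))
  [IsProbabilityMeasure P]
  (hPbox : ∀ (n : ℕ) (s : Fin n → Set C(M, M)), (∀ k, MeasurableSet (s k)) →
    P (Box n s) = ∏ k, μ (s k))

include hPbox

/-- conditional identity: the probability of `Aset` intersected with a cylinder event -/
lemma cond_identity {q : ℝ} (hq0 : 0 ≤ q) (hq1 : q ≤ 1) (m : ℕ) (x y : M)
    (S : Set (Fin m → C(M, M))) (hS : MeasurableSet S) :
    P (res m ⁻¹' S ∩ Aset q x y) =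
      ∫⁻ w in S, P (Aset q (Phi m w x) (Phi m w y)) ∂(Measure.pi fun _ : Fin m => μ) := by
  rw [Aset_shift hq0 hq1 m x y]
  have hset : res m ⁻¹' S ∩ pairMap m ⁻¹' {wj : (Fin m → C(M, M)) × (ℕ → C(M, M)) |
      wj.2 ∈ Aset q (Phi m wj.1 x) (Phi m wj.1 y)} =
      pairMap m ⁻¹' ((S ×ˢ Set.univ) ∩ {wj : (Fin m → C(M, M)) × (ℕ → C(M, M)) |
      wj.2 ∈ Aset q (Phi m wj.1 x) (Phi m wj.1 y)}) := by
    ext i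
    simp only [Set.mem_inter_iff, Set.mem_preimage, pairMap, Set.mem_prod, Set.mem_univ,
      and_true, Set.mem_setOf_eq]
  rw [hset, key_fubini μ P hPbox m _
    ((hS.prod MeasurableSet.univ).inter (measurableSet_shiftGraph q m x y))]
  rw [← lintegral_indicator hS]
  refine lintegral_congr fun w => ?_
  by_cases hw : w ∈ S
  · rw [Set.indicator_of_mem hw]
    congr 1
    ext j
    simp [hw]
  · rw [Set.indicator_of_notMem hw]
    have : {j | (w, j) ∈ (S ×ˢ Set.univ) ∩ {wj : (Fin m → C(M, M)) × (ℕ → C(M, M)) |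
        wj.2 ∈ Aset q (Phi m wj.1 x) (Phi m wj.1 y)}} = ∅ := by
      ext j; simp [hw]
    rw [this, measure_empty]

lemma lint_res_A {q : ℝ} (m : ℕ) (x y : M) (S : Set (Fin m → C(M, M)))
    (hS : MeasurableSet S) [SFinite P] :
    ∫⁻ i in res m ⁻¹' S, P (Aset q (rdsIter i m x) (rdsIter i m y)) ∂P =
      ∫⁻ w in S, P (Aset q (Phi m w x) (Phi m w y)) ∂(Measure.pi fun _ : Fin m => μ) := by
  have hg : Measurable fun w : Fin m → C(M, M) =>
      Set.indicator S (fun w => P (Aset q (Phi m w x) (Phi m w y))) w :=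
    (measurable_PhiA q P m x y).indicator hS
  have h1 := lintegral_res μ P hPbox m _ hg
  rw [lintegral_indicator hS] at h1
  rw [← h1, ← lintegral_indicator ((measurable_res m) hS)]
  refine lintegral_congr fun i => ?_
  by_cases hi : res m i ∈ S
  · rw [Set.indicator_of_mem (show i ∈ res m ⁻¹' S from hi),
      Set.indicator_of_mem hi, Phi_res, Phi_res]
  · rw [Set.indicator_of_notMem (show i ∉ res m ⁻¹' S from hi),
      Set.indicator_of_notMem hi]

end RDSAux

namespace RDSAux

variable {M : Type*} [MetricSpace M] [CompactSpace M]
  [MeasurableSpace M] [BorelSpace M]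
  [MeasurableSpace C(M, M)] [BorelSpace C(M, M)]

lemma measurable_iterPt (n : ℕ) (x : M) : Measurable fun i : ℕ → C(M, M) => rdsIter i n x :=
  ((continuous_rdsIter n).comp (continuous_id.prodMk continuous_const)).measurable

/-- the filtration of the first `m` coordinates -/
def filt (M : Type*) [MetricSpace M] [CompactSpace M] [MeasurableSpace C(M, M)] (m : ℕ) :
    MeasurableSpace (ℕ → C(M, M)) :=
  MeasurableSpace.comap (res m) inferInstance

lemma filt_le (m : ℕ) : filt M m ≤ (inferInstance : MeasurableSpace (ℕ → C(M, M))) :=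
  measurable_iff_comap_le.mp (measurable_res m)

lemma filt_mono : Monotone (filt M) := by
  intro m m' hmm
  have hcomp : res (C := C(M, M)) m =
      (fun w : Fin m' → C(M, M) => fun k : Fin m => w (Fin.castLE hmm k)) ∘ res m' := rfl
  rw [filt, hcomp, ← MeasurableSpace.comap_comp]
  exact MeasurableSpace.comap_mono (measurable_iff_comap_le.mp
    (measurable_pi_lambda _ fun k => measurable_pi_apply _))

lemma filt_iSup :
    (⨆ m, filt M m) = (inferInstance : MeasurableSpace (ℕ → C(M, M))) := by
  refine le_antisymm (iSup_le fun m => filt_le m) ?_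
  refine iSup_le fun k => ?_
  refine le_trans ?_ (le_iSup (filt M) (k + 1))
  have hcomp : (fun i : ℕ → C(M, M) => i k) =
      (fun w : Fin (k + 1) → C(M, M) => w ⟨k, Nat.lt_succ_self k⟩) ∘ res (k + 1) := rfl
  show MeasurableSpace.comap (fun i : ℕ → C(M, M) => i k) _ ≤ filt M (k + 1)
  rw [hcomp, ← MeasurableSpace.comap_comp]
  exact MeasurableSpace.comap_mono (measurable_iff_comap_le.mp (measurable_pi_apply _))

variable (μ : Measure C(M, M)) [IsProbabilityMeasure μ] (P : Measure (ℕ → C(M, M)))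
  [IsProbabilityMeasure P]
  (hPbox : ∀ (n : ℕ) (s : Fin n → Set C(M, M)), (∀ k, MeasurableSet (s k)) →
    P (Box n s) = ∏ k, μ (s k))

include hPbox

lemma condexp_eq {q : ℝ} (hq0 : 0 ≤ q) (hq1 : q ≤ 1) (m : ℕ) (x y : M) :
    (fun i => (P (Aset q (rdsIter i m x) (rdsIter i m y))).toReal) =ᵐ[P]
      P[(Aset q x y).indicator (fun _ => (1 : ℝ)) | filt M m] := by
  have hA : MeasurableSet (Aset q x y) := measurableSet_Aset q x y
  have hmeasf : Measurable fun i => P (Aset q (rdsIter i m x) (rdsIter i m y)) := by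
    refine Measurable.comp (g := fun p : M × M => P (Aset q p.1 p.2))
      (f := fun i : ℕ → C(M, M) => ((rdsIter i m x, rdsIter i m y) : M × M))
      (measurable_hA q P) ?_
    exact (measurable_iterPt m x).prodMk (measurable_iterPt m y)
  have hbd : ∀ i, (P (Aset q (rdsIter i m x) (rdsIter i m y))).toReal ≤ 1 := by
    intro i
    rw [show (1 : ℝ) = (1 : ENNReal).toReal by simp]
    exact ENNReal.toReal_mono ENNReal.one_ne_top prob_le_one
  have hint : Integrable (fun i => (P (Aset q (rdsIter i m x) (rdsIter i m y))).toReal) P := by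
    refine (integrable_const (1 : ℝ)).mono'
      hmeasf.ennreal_toReal.aestronglyMeasurable ?_
    refine Filter.Eventually.of_forall fun i => ?_
    rw [Real.norm_eq_abs, abs_of_nonneg ENNReal.toReal_nonneg]
    exact hbd i
  refine ae_eq_condExp_of_forall_setIntegral_eq (filt_le m)
    ((integrable_const (1 : ℝ)).indicator hA) (fun s _ _ => hint.integrableOn)
    (fun s hs hsfin => ?_) ?_
  · obtain ⟨S, hS, rfl⟩ := hs
    -- RHS: integral of the indicator
    rw [setIntegral_indicator hA, setIntegral_const, smul_eq_mul, mul_one, measureReal_def]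
    -- LHS: via lintegral
    rw [integral_toReal (hmeasf.aemeasurable.restrict)
      (Filter.Eventually.of_forall fun i => measure_lt_top P _)]
    rw [lint_res_A μ P hPbox m x y S hS, ← cond_identity μ P hPbox hq0 hq1 m x y S hS]
  · have hfm : Measurable[filt M m]
        (fun i => (P (Aset q (rdsIter i m x) (rdsIter i m y))).toReal) := by
      have heq : (fun i => (P (Aset q (rdsIter i m x) (rdsIter i m y))).toReal) =
          (fun w => (P (Aset q (Phi m w x) (Phi m w y))).toReal) ∘ res m := by
        funext i
        simp only [Function.comp_apply, Phi_res]
      rw [heq]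
      exact Measurable.comp (((measurable_PhiA q P m x y).ennreal_toReal))
        (measurable_iff_comap_le.mpr le_rfl)
    exact (hfm.stronglyMeasurable).aestronglyMeasurable

end RDSAux

theorem stmt4 {M : Type*} [MetricSpace M] [CompactSpace M]
    [MeasurableSpace M] [BorelSpace M]
    [MeasurableSpace C(M, M)] [BorelSpace C(M, M)]
    (μ : Measure C(M, M)) [IsProbabilityMeasure μ]
    (P : Measure (ℕ → C(M, M))) (hP : IsProductMeasure μ P)
    (q : ℝ) (hq : q ∈ Set.Ioo (0 : ℝ) 1)
    (hProx : PropP μ) (hLC : PropLC P q) :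
    ∀ x y : M,
      P {i : ℕ → C(M, M) | ∃ n : ℕ, ∀ k : ℕ,
          dist (rdsIter i (n + k) x) (rdsIter i (n + k) y) ≤ q ^ k} = 1 := by
  obtain ⟨hPprob, hPbox⟩ := hP
  haveI := hPprob
  intro x y
  have hq0 : 0 ≤ q := hq.1.le
  have hq1 : q ≤ 1 := hq.2.le
  show P (RDSAux.Aset q x y) = 1
  have hPbox' : ∀ (n : ℕ) (s : Fin n → Set C(M, M)), (∀ k, MeasurableSet (s k)) →
      P (RDSAux.Box n s) = ∏ k, μ (s k) := hPbox
  obtain ⟨c, hc0, hcT, hclb⟩ := RDSAux.exists_pos_lb hq μ P hPbox' hProx hLC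
  have hA : MeasurableSet (RDSAux.Aset q x y) := RDSAux.measurableSet_Aset q x y
  set ℱ : Filtration ℕ (inferInstance : MeasurableSpace (ℕ → C(M, M))) :=
    ⟨RDSAux.filt M, RDSAux.filt_mono, RDSAux.filt_le⟩ with hℱ
  set g : (ℕ → C(M, M)) → ℝ := (RDSAux.Aset q x y).indicator (fun _ => (1 : ℝ)) with hg
  have hgint : Integrable g P := (integrable_const 1).indicator hA
  have hgm : StronglyMeasurable[⨆ m, ℱ m] g := by
    have hsup : (⨆ m, ℱ m) = (inferInstance : MeasurableSpace (ℕ → C(M, M))) :=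
      RDSAux.filt_iSup
    rw [hsup]
    exact stronglyMeasurable_const.indicator hA
  have hlevy := hgint.tendsto_ae_condExp hgm
  have hcond : ∀ᵐ i ∂P, ∀ m : ℕ,
      (P (RDSAux.Aset q (rdsIter i m x) (rdsIter i m y))).toReal = (P[g|ℱ m]) i := by
    rw [ae_all_iff]
    intro m
    exact RDSAux.condexp_eq μ P hPbox' hq0 hq1 m x y
  have hae : ∀ᵐ i ∂P, i ∈ RDSAux.Aset q x y := by
    filter_upwards [hlevy, hcond] with i hi hif
    by_contra hnot
    have hgi : g i = 0 := Set.indicator_of_notMem hnot _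
    have hlim : Tendsto
        (fun m => (P (RDSAux.Aset q (rdsIter i m x) (rdsIter i m y))).toReal)
        atTop (𝓝 (g i)) :=
      hi.congr fun m => (hif m).symm
    have hge : c.toReal ≤ g i :=
      ge_of_tendsto hlim (Filter.Eventually.of_forall fun m =>
        ENNReal.toReal_mono (measure_ne_top P _) (hclb _ _))
    rw [hgi] at hge
    exact absurd hge (not_le.mpr (ENNReal.toReal_pos hc0.ne' hcT))
  exact (prob_compl_eq_zero_iff hA).mp (by simpa [Set.compl_def] using ae_iff.mp hae)
end
end

section
/- Let (F,μ) be an RDS of continuous maps on a compact metric space (M,D) satisfying properties (P) and (LC), and let ν be the unique μ-stationary probability measure. Then for every continuous function φ : M → ℝ, lim_{n→∞} sup_{x ∈ M} | ∫ φ(X_n^x(i)) dμ^ℕ(i) − ∫ φ dν | = 0; equivalently, the distribution of X_n^x converges weakly to ν, uniformly in x. -/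
open MeasureTheory Topology Filter
open scoped ENNReal
set_option linter.unusedSectionVars false
set_option linter.unusedVariables false
set_option maxHeartbeats 1000000

noncomputable section

/-- `ν` is a `μ`-stationary measure. -/
def IsMuStationary {M : Type*} [MetricSpace M] [CompactSpace M] [MeasurableSpace M]
    [MeasurableSpace C(M, M)] (μ : Measure C(M, M)) (ν : Measure M) : Prop :=
  ∀ A : Set M, MeasurableSet A → ν A = ∫⁻ f, ν (⇑f ⁻¹' A) ∂μ

namespace RDSaux

variable {M : Type*} [MetricSpace M] [CompactSpace M]
  [MeasurableSpace M] [BorelSpace M]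
  [MeasurableSpace C(M, M)] [BorelSpace C(M, M)]

lemma iter_congr {i j : ℕ → C(M, M)} {n : ℕ} (h : ∀ k < n, i k = j k) (x : M) :
    rdsIter i n x = rdsIter j n x := by
  induction n with
  | zero => rfl
  | succ n ih =>
      simp only [rdsIter]
      rw [ih (fun k hk => h k (Nat.lt_succ_of_lt hk)), h n (Nat.lt_succ_self n)]

lemma iter_shift (i : ℕ → C(M, M)) (m t : ℕ) (x : M) :
    rdsIter i (m + t) x = rdsIter (fun k => i (m + k)) t (rdsIter i m x) := by
  induction t with
  | zero => rfl
  | succ t ih =>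
      rw [Nat.add_succ]
      simp only [rdsIter]
      rw [ih]

lemma iter_continuous (i : ℕ → C(M, M)) (n : ℕ) : Continuous fun x => rdsIter i n x := by
  induction n with
  | zero => exact continuous_id
  | succ n ih => exact (i n).continuous.comp ih

lemma measurable_eval : Measurable fun p : C(M, M) × M => p.1 p.2 :=
  ContinuousEval.continuous_eval.measurable

lemma measurable_iter_pair (n : ℕ) :
    Measurable fun p : M × (ℕ → C(M, M)) => rdsIter p.2 n p.1 := by
  induction n with
  | zero => exact measurable_fst
  | succ n ih =>
      have : (fun p : M × (ℕ → C(M, M)) => rdsIter p.2 (n+1) p.1)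
          = (fun q : C(M, M) × M => q.1 q.2) ∘
            (fun p : M × (ℕ → C(M, M)) => (p.2 n, rdsIter p.2 n p.1)) := rfl
      rw [this]
      exact measurable_eval.comp (((measurable_pi_apply n).comp measurable_snd).prodMk ih)

lemma measurable_iter (n : ℕ) (x : M) : Measurable fun i : ℕ → C(M, M) => rdsIter i n x :=
  (measurable_iter_pair n).comp ((measurable_const (a := x)).prodMk measurable_id)

/-- restriction to the first `n` coordinates -/
def res (n : ℕ) (i : ℕ → C(M, M)) : Fin n → C(M, M) := fun k => i k

lemma measurable_res (n : ℕ) : Measurable (res (M := M) n) :=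
  measurable_pi_lambda _ (fun k => measurable_pi_apply _)

/-- shift by `m` -/
def shf (m : ℕ) (i : ℕ → C(M, M)) : ℕ → C(M, M) := fun k => i (m + k)

lemma measurable_shf (m : ℕ) : Measurable (shf (M := M) m) :=
  measurable_pi_lambda _ (fun k => measurable_pi_apply _)

/-- extension of a finite word -/
def ext (n : ℕ) (ω : Fin n → C(M, M)) : ℕ → C(M, M) :=
  fun k => if h : k < n then ω ⟨k, h⟩ else ContinuousMap.id M

lemma measurable_ext (n : ℕ) : Measurable (ext (M := M) n) := by
  apply measurable_pi_lambda
  intro k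
  by_cases h : k < n
  · simp only [ext, dif_pos h]; exact measurable_pi_apply _
  · simp only [ext, dif_neg h]; exact measurable_const

lemma ext_res (n : ℕ) (i : ℕ → C(M, M)) (m : ℕ) (hm : m ≤ n) (x : M) :
    rdsIter (ext n (res n i)) m x = rdsIter i m x :=
  iter_congr (fun k hk => by simp [ext, res, dif_pos (lt_of_lt_of_le hk hm)]) x

/-- finite iteration function of a word of length `n`, evaluated after `m ≤ n` steps -/
def iterF (n : ℕ) (ω : Fin n → C(M, M)) (m : ℕ) (x : M) : M := rdsIter (ext n ω) m x

lemma measurable_iterF_pair (n m : ℕ) :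
    Measurable fun p : M × (Fin n → C(M, M)) => iterF n p.2 m p.1 :=
  (measurable_iter_pair m).comp (measurable_fst.prodMk ((measurable_ext n).comp measurable_snd))

lemma measurable_iterF (n m : ℕ) (x : M) :
    Measurable fun ω : Fin n → C(M, M) => iterF n ω m x :=
  (measurable_iterF_pair n m).comp ((measurable_const (a := x)).prodMk measurable_id)

def split (m : ℕ) (i : ℕ → C(M, M)) : (Fin m → C(M, M)) × (ℕ → C(M, M)) :=
  (res m i, shf m i)

lemma measurable_split (m : ℕ) : Measurable (split (M := M) m) :=
  (measurable_res m).prodMk (measurable_shf m)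

variable (μ : Measure C(M, M)) [IsProbabilityMeasure μ]

/-- finite product measure -/
noncomputable def Q (n : ℕ) : Measure (Fin n → C(M, M)) := Measure.pi fun _ => μ

instance (n : ℕ) : IsProbabilityMeasure (Q μ n) := by
  unfold Q; infer_instance

variable (P : Measure (ℕ → C(M, M))) (hP : IsProductMeasure μ P)
include hP

lemma map_res (n : ℕ) : Measure.map (res n) P = Q μ n := by
  haveI := hP.1
  refine (Measure.pi_eq fun s hs => ?_).symm
  rw [Measure.map_apply (measurable_res n) (MeasurableSet.univ_pi hs)]
  have : res (M := M) n ⁻¹' Set.univ.pi s = {ω | ∀ k : Fin n, ω (k : ℕ) ∈ s k} := by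
    ext i; simp [res, Set.mem_pi]
  rw [this, hP.2 n s hs]

lemma cyl_apply (l : ℕ) {T : Set (Fin l → C(M, M))} (hT : MeasurableSet T) :
    P (res l ⁻¹' T) = Q μ l T := by
  rw [← map_res μ P hP l, Measure.map_apply (measurable_res l) hT]

/-- cylinder sets -/
def CYL : Set (Set (ℕ → C(M, M))) :=
  {A | ∃ (l : ℕ) (T : Set (Fin l → C(M, M))), MeasurableSet T ∧ A = res l ⁻¹' T}

omit hP in
lemma res_lift {l L : ℕ} (h : l ≤ L) (T : Set (Fin l → C(M, M))) :
    res l ⁻¹' T = res L ⁻¹' ((fun ω (k : Fin l) => ω (Fin.castLE h k)) ⁻¹' T) := by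
  ext i
  simp only [Set.mem_preimage]
  have : (fun k : Fin l => res L i (Fin.castLE h k)) = res l i := by
    funext k; simp [res]
  rw [this]

omit hP in
lemma isPiSystem_CYL : IsPiSystem (CYL (M := M)) := by
  rintro A ⟨l, T, hT, rfl⟩ B ⟨l', T', hT', rfl⟩ -
  refine ⟨max l l',
    ((fun ω (k : Fin l) => ω (Fin.castLE (le_max_left l l') k)) ⁻¹' T) ∩
    ((fun ω (k : Fin l') => ω (Fin.castLE (le_max_right l l') k)) ⁻¹' T'), ?_, ?_⟩
  · exact ((measurable_pi_lambda _ fun _ => measurable_pi_apply _) hT).inter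
      ((measurable_pi_lambda _ fun _ => measurable_pi_apply _) hT')
  · rw [Set.preimage_inter, ← res_lift (le_max_left l l') T,
      ← res_lift (le_max_right l l') T']

omit hP in
lemma genCYL : (MeasurableSpace.pi : MeasurableSpace (ℕ → C(M, M)))
    = MeasurableSpace.generateFrom (CYL (M := M)) := by
  refine le_antisymm ?_ (MeasurableSpace.generateFrom_le ?_)
  · rw [MeasurableSpace.pi]
    refine iSup_le fun k => ?_
    intro s hs
    obtain ⟨t, ht, rfl⟩ := hs
    apply MeasurableSpace.measurableSet_generateFrom
    refine ⟨k + 1, {ω : Fin (k+1) → C(M, M) | ω ⟨k, Nat.lt_succ_self k⟩ ∈ t},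
      (measurable_pi_apply _) ht, ?_⟩
    ext i; simp [res]
  · rintro A ⟨l, T, hT, rfl⟩
    exact measurable_res l hT

def G (m l : ℕ) : (Fin (m + l) → C(M, M)) → (Fin m → C(M, M)) × (Fin l → C(M, M)) :=
  fun ω => (fun k => ω (Fin.castAdd l k), fun j => ω (Fin.natAdd m j))

omit hP in
lemma G_eq (m l : ℕ) : G (M := M) m l =
    (MeasurableEquiv.sumPiEquivProdPi (fun _ : Fin m ⊕ Fin l => C(M, M))) ∘
      (MeasurableEquiv.piCongrLeft (fun _ : Fin (m + l) => C(M, M)) finSumFinEquiv).symm := by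
  funext ω
  refine Prod.ext ?_ ?_ <;> funext k <;>
    simp [G, MeasurableEquiv.sumPiEquivProdPi, MeasurableEquiv.piCongrLeft,
      Equiv.piCongrLeft_symm_apply]

omit hP in
lemma measurePreserving_G (m l : ℕ) :
    MeasurePreserving (G (M := M) m l) (Q μ (m + l)) ((Q μ m).prod (Q μ l)) := by
  rw [G_eq]
  exact (measurePreserving_sumPiEquivProdPi (fun _ : Fin m ⊕ Fin l => μ)).comp
    ((measurePreserving_piCongrLeft (fun _ : Fin (m + l) => μ) finSumFinEquiv).symm _)

omit hP in
lemma split_cyl_eq (m l : ℕ) (s : Set (Fin m → C(M, M))) (T : Set (Fin l → C(M, M))) :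
    res m ⁻¹' s ∩ shf m ⁻¹' (res l ⁻¹' T)
      = res (m + l) ⁻¹' (G m l ⁻¹' (s ×ˢ T)) := by
  ext i
  have h1 : (fun k : Fin m => res (m + l) i (Fin.castAdd l k)) = res m i := by
    funext k; simp [res]
  have h2 : (fun j : Fin l => res (m + l) i (Fin.natAdd m j)) = res l (shf m i) := by
    funext j; simp [res, shf]
  simp only [Set.mem_inter_iff, Set.mem_preimage, G, Set.mem_prod, h1, h2]

lemma map_split (m : ℕ) : Measure.map (split m) P = (Q μ m).prod P := by
  haveI := hP.1
  refine (Measure.prod_eq fun s t hs ht => ?_).symm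
  rw [Measure.map_apply (measurable_split m) (hs.prod ht)]
  have hsp : split (M := M) m ⁻¹' (s ×ˢ t) = res m ⁻¹' s ∩ shf m ⁻¹' t := by
    ext i; simp [split, Set.mem_prod]
  rw [hsp]
  set ρ₁ : Measure (ℕ → C(M, M)) := Measure.map (shf m) (P.restrict (res m ⁻¹' s)) with hρ₁def
  have hres : MeasurableSet (res m ⁻¹' s) := measurable_res m hs
  have hρ₁ : ∀ t' : Set (ℕ → C(M, M)), MeasurableSet t' →
      ρ₁ t' = P (res m ⁻¹' s ∩ shf m ⁻¹' t') := by
    intro t' ht'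
    rw [hρ₁def, Measure.map_apply (measurable_shf m) ht',
      Measure.restrict_apply (measurable_shf m ht'), Set.inter_comm]
  haveI : IsFiniteMeasure ρ₁ := by
    constructor
    rw [hρ₁ Set.univ MeasurableSet.univ]
    exact lt_of_le_of_lt (measure_mono (Set.subset_univ _)) (measure_lt_top P _)
  have hext : ρ₁ = (Q μ m s) • P := by
    refine ext_of_generate_finite CYL genCYL isPiSystem_CYL ?_ ?_
    · rintro A ⟨l, T, hT, rfl⟩
      rw [hρ₁ _ (measurable_res l hT), split_cyl_eq,
        cyl_apply μ P hP (m + l) ((measurePreserving_G μ m l).measurable (hs.prod hT)),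
        (measurePreserving_G μ m l).measure_preimage (hs.prod hT).nullMeasurableSet,
        Measure.prod_prod, Measure.smul_apply, smul_eq_mul, cyl_apply μ P hP l hT]
    · rw [hρ₁ Set.univ MeasurableSet.univ]
      simp only [Set.preimage_univ, Set.inter_univ, Measure.smul_apply, smul_eq_mul]
      rw [cyl_apply μ P hP m hs, measure_univ, mul_one]
  rw [← hρ₁ t ht, hext, Measure.smul_apply, smul_eq_mul]

lemma split_apply (m : ℕ) {S : Set ((Fin m → C(M, M)) × (ℕ → C(M, M)))}
    (hS : MeasurableSet S) :
    P (split m ⁻¹' S) = ∫⁻ ω₁, P (Prod.mk ω₁ ⁻¹' S) ∂(Q μ m) := by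
  haveI := hP.1
  rw [← Measure.map_apply (measurable_split m) hS, map_split μ P hP, Measure.prod_apply hS]

/-! ### integrability helpers -/

omit hP in
lemma integrable_bdd {α : Type*} [MeasurableSpace α] (m : Measure α) [IsFiniteMeasure m]
    {g : α → ℝ} (hg : Measurable g) (c : ℝ) (hc : ∀ a, |g a| ≤ c) : Integrable g m :=
  Integrable.mono' (integrable_const c) hg.aestronglyMeasurable
    (Filter.Eventually.of_forall (fun a => by simpa [Real.norm_eq_abs] using hc a))

/-! ### the Markov operator -/

noncomputable def T (φf : C(M, ℝ)) (P : Measure (ℕ → C(M, M))) (n : ℕ) (x : M) : ℝ :=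
  ∫ i, φf (rdsIter i n x) ∂P

variable (φf : C(M, ℝ))

omit hP in
lemma measurable_phi_iter (n : ℕ) :
    Measurable fun p : M × (ℕ → C(M, M)) => φf (rdsIter p.2 n p.1) :=
  φf.continuous.measurable.comp (measurable_iter_pair n)

omit hP in
lemma abs_phi_le (z : M) : |φf z| ≤ ‖φf‖ := by
  simpa [Real.norm_eq_abs] using φf.norm_coe_le_norm z

omit hP in
lemma measurable_T [SFinite P] (n : ℕ) : Measurable fun x => T φf P n x := by
  have : StronglyMeasurable fun p : M × (ℕ → C(M, M)) => φf (rdsIter p.2 n p.1) :=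
    (measurable_phi_iter φf n).stronglyMeasurable
  exact (this.integral_prod_right').measurable

omit hP in
lemma abs_T_le [IsProbabilityMeasure P] (n : ℕ) (x : M) : |T φf P n x| ≤ ‖φf‖ := by
  have h1 : |T φf P n x| ≤ ∫ i, |φf (rdsIter i n x)| ∂P := by
    simpa [Real.norm_eq_abs, T] using
      norm_integral_le_integral_norm (μ := P) (f := fun i => φf (rdsIter i n x))
  refine le_trans h1 ?_
  have h2 : ∫ i, |φf (rdsIter i n x)| ∂P ≤ ∫ _i, ‖φf‖ ∂P := by
    apply integral_mono
    · exact (integrable_bdd P ((measurable_phi_iter φf n).comp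
        ((measurable_const (a := x)).prodMk measurable_id)) ‖φf‖
        (fun a => abs_phi_le φf _)).abs
    · exact integrable_const _
    · exact fun i => abs_phi_le φf _
  simpa using h2

lemma T_succ (n : ℕ) (x : M) :
    T φf P (n + 1) x = ∫ f, T φf P n (f x) ∂μ := by
  haveI := hP.1
  have hrw : ∀ i : ℕ → C(M, M), rdsIter i (n + 1) x = rdsIter (shf 1 i) n ((i 0) x) := by
    intro i
    have := iter_shift i 1 n x
    rw [Nat.add_comm 1 n] at this
    exact this
  have hF : Measurable fun p : (Fin 1 → C(M, M)) × (ℕ → C(M, M)) =>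
      φf (rdsIter p.2 n ((p.1 0) x)) := by
    have he0 : Measurable fun p : (Fin 1 → C(M, M)) × (ℕ → C(M, M)) => (p.1 0, x) :=
      ((measurable_pi_apply 0).comp measurable_fst).prodMk measurable_const
    have he : Measurable fun p : (Fin 1 → C(M, M)) × (ℕ → C(M, M)) => (p.1 0) x :=
      measurable_eval.comp he0
    have h0 : Measurable fun p : (Fin 1 → C(M, M)) × (ℕ → C(M, M)) => ((p.1 0) x, p.2) :=
      he.prodMk measurable_snd
    have h1 : Measurable fun p : (Fin 1 → C(M, M)) × (ℕ → C(M, M)) =>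
        rdsIter p.2 n ((p.1 0) x) := (measurable_iter_pair n).comp h0
    exact φf.continuous.measurable.comp h1
  have step1 : T φf P (n + 1) x
      = ∫ p, φf (rdsIter p.2 n ((p.1 0) x)) ∂((Q μ 1).prod P) := by
    rw [← map_split μ P hP 1]
    rw [integral_map (measurable_split 1).aemeasurable hF.aestronglyMeasurable]
    unfold T
    congr 1
    funext i
    rw [hrw i]
    rfl
  rw [step1]
  rw [integral_prod _ (integrable_bdd _ hF ‖φf‖ (fun p => abs_phi_le φf _))]
  have step2 : ∀ ω₁ : Fin 1 → C(M, M),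
      (∫ ω₂, φf (rdsIter ω₂ n ((ω₁ 0) x)) ∂P) = T φf P n ((ω₁ 0) x) := fun _ => rfl
  simp only [step2]
  have hmp := measurePreserving_funUnique μ (Fin 1)
  have := hmp.integral_comp (MeasurableEquiv.funUnique (Fin 1) C(M, M)).measurableEmbedding
    (fun f => T φf P n (f x))
  rw [← this]
  rfl

variable (ν : Measure M) [IsProbabilityMeasure ν]

omit hP in
lemma stat_map (hsta : ∀ A : Set M, MeasurableSet A → ν A = ∫⁻ f, ν (⇑f ⁻¹' A) ∂μ) :
    ν = Measure.map (fun p : C(M, M) × M => p.1 p.2) (μ.prod ν) := by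
  refine Measure.ext fun A hA => ?_
  rw [Measure.map_apply measurable_eval hA, Measure.prod_apply (measurable_eval hA)]
  exact hsta A hA

omit hP in
lemma stat_int (hsta : ∀ A : Set M, MeasurableSet A → ν A = ∫⁻ f, ν (⇑f ⁻¹' A) ∂μ)
    {ψ : M → ℝ} (hψ : Measurable ψ) (c : ℝ) (hc : ∀ z, |ψ z| ≤ c) :
    ∫ x, ∫ f, ψ (f x) ∂μ ∂ν = ∫ z, ψ z ∂ν := by
  have hj : Measurable fun p : C(M, M) × M => ψ (p.1 p.2) := hψ.comp measurable_eval
  have hint : Integrable (fun p : C(M, M) × M => ψ (p.1 p.2)) (μ.prod ν) :=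
    integrable_bdd _ hj c (fun a => hc _)
  have hswap : Integrable (Function.uncurry fun (x : M) (f : C(M, M)) => ψ (f x))
      (ν.prod μ) := by
    have hj2 : Measurable fun p : M × C(M, M) => ψ (p.2 p.1) :=
      hψ.comp (measurable_eval.comp (measurable_snd.prodMk measurable_fst))
    exact integrable_bdd _ hj2 c (fun a => hc _)
  have hC : ∫ p, ψ (p.1 p.2) ∂(μ.prod ν) = ∫ z, ψ z ∂ν := by
    rw [← integral_map measurable_eval.aemeasurable hψ.aestronglyMeasurable,
      ← stat_map μ ν hsta]
  calc ∫ x, ∫ f, ψ (f x) ∂μ ∂ν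
      = ∫ f, ∫ x, ψ (f x) ∂ν ∂μ := integral_integral_swap hswap
    _ = ∫ p, ψ (p.1 p.2) ∂(μ.prod ν) := (integral_prod _ hint).symm
    _ = ∫ z, ψ z ∂ν := hC

lemma T_integral (hsta : ∀ A : Set M, MeasurableSet A → ν A = ∫⁻ f, ν (⇑f ⁻¹' A) ∂μ)
    (n : ℕ) : ∫ x, T φf P n x ∂ν = ∫ z, φf z ∂ν := by
  haveI := hP.1
  induction n with
  | zero =>
      have h0 : ∀ x, T φf P 0 x = φf x := by
        intro x
        simp [T, rdsIter, integral_const, measure_univ]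
      simp only [h0]
  | succ n ih =>
      have hs : ∀ x, T φf P (n + 1) x = ∫ f, T φf P n (f x) ∂μ := T_succ μ P hP φf n
      simp only [hs]
      rw [stat_int μ ν hsta (measurable_T P φf n) ‖φf‖ (fun z => abs_T_le P φf n z)]
      exact ih


/-! ### perturbation lemma -/

omit hP in
lemma pert (w : ℕ → C(M, M)) : ∀ (m : ℕ) (e : ℝ), 0 < e →
    ∃ η > 0, ∀ i : ℕ → C(M, M), (∀ k < m, dist (i k) (w k) < η) →
      ∀ a : M, dist (rdsIter i m a) (rdsIter w m a) ≤ e := by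
  intro m
  induction m with
  | zero =>
      intro e he
      exact ⟨1, one_pos, fun i _ a => by simpa [rdsIter] using he.le⟩
  | succ m ih =>
      intro e he
      obtain ⟨d2, hd2, hwm⟩ := Metric.uniformContinuous_iff.1
        (CompactSpace.uniformContinuous_of_continuous (w m).continuous) (e / 2) (half_pos he)
      obtain ⟨η, hη, hI⟩ := ih (d2 / 2) (half_pos hd2)
      refine ⟨min η (e / 2), lt_min hη (half_pos he), fun i hi a => ?_⟩
      have hd : dist (rdsIter i m a) (rdsIter w m a) ≤ d2 / 2 :=
        hI i (fun k hk => lt_of_lt_of_le (hi k (Nat.lt_succ_of_lt hk)) (min_le_left _ _)) a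
      have h1 : dist ((i m) (rdsIter i m a)) ((w m) (rdsIter i m a)) ≤ e / 2 := by
        refine le_trans (ContinuousMap.dist_apply_le_dist _) ?_
        exact le_trans (le_of_lt (hi m (Nat.lt_succ_self m))) (min_le_right _ _)
      have h2 : dist ((w m) (rdsIter i m a)) ((w m) (rdsIter w m a)) < e / 2 :=
        hwm (lt_of_le_of_lt hd (by linarith))
      calc dist (rdsIter i (m + 1) a) (rdsIter w (m + 1) a)
          ≤ dist ((i m) (rdsIter i m a)) ((w m) (rdsIter i m a))
            + dist ((w m) (rdsIter i m a)) ((w m) (rdsIter w m a)) := dist_triangle _ _ _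
        _ ≤ e / 2 + e / 2 := add_le_add h1 h2.le
        _ = e := by ring

/-! ### local contraction: uniform delta -/

variable (q : ℝ)

/-- contraction event over a dense-set skeleton -/
def Ev (D : Set M) (x : M) (ρ : ℝ) : Set (ℕ → C(M, M)) :=
  {i | ∀ t : ℕ, ∀ u ∈ D ∩ Metric.ball x ρ, ∀ v ∈ D ∩ Metric.ball x ρ,
    dist (rdsIter i t u) (rdsIter i t v) ≤ q ^ t}

omit hP in
lemma Ev_measurable {D : Set M} (hD : D.Countable) (x : M) (ρ : ℝ) :
    MeasurableSet (Ev (M := M) q D x ρ) := by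
  have : Ev (M := M) q D x ρ = ⋂ (t : ℕ), ⋂ (u ∈ D ∩ Metric.ball x ρ),
      ⋂ (v ∈ D ∩ Metric.ball x ρ),
        {i | dist (rdsIter i t u) (rdsIter i t v) ≤ q ^ t} := by
    ext i; simp only [Ev, Set.mem_setOf_eq, Set.mem_iInter, Set.mem_inter_iff,
      Metric.mem_ball]
  rw [this]
  refine MeasurableSet.iInter fun t => ?_
  refine MeasurableSet.biInter (hD.mono Set.inter_subset_left) fun u _ => ?_
  refine MeasurableSet.biInter (hD.mono Set.inter_subset_left) fun v _ => ?_
  exact measurableSet_le (((measurable_iter t u).dist (measurable_iter t v))) measurable_const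

omit hP in
lemma Ev_strong {D : Set M} (hDd : Dense D) {x : M} {ρ : ℝ} {i : ℕ → C(M, M)}
    (hi : i ∈ Ev (M := M) q D x ρ) {u v : M} (hu : u ∈ Metric.ball x ρ)
    (hv : v ∈ Metric.ball x ρ) (t : ℕ) :
    dist (rdsIter i t u) (rdsIter i t v) ≤ q ^ t := by
  refine le_of_forall_pos_le_add fun e he => ?_
  have hcont := iter_continuous i t
  obtain ⟨r1, hr1, hr1p⟩ := Metric.continuous_iff.1 hcont u (e / 2) (half_pos he)
  obtain ⟨r2, hr2, hr2p⟩ := Metric.continuous_iff.1 hcont v (e / 2) (half_pos he)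
  have hru : 0 < min r1 (ρ - dist u x) := lt_min hr1 (by simpa [Metric.mem_ball] using hu)
  have hrv : 0 < min r2 (ρ - dist v x) := lt_min hr2 (by simpa [Metric.mem_ball] using hv)
  obtain ⟨u', hu'⟩ := Metric.dense_iff.1 hDd u _ hru
  obtain ⟨v', hv'⟩ := Metric.dense_iff.1 hDd v _ hrv
  have hu'D : u' ∈ D ∩ Metric.ball x ρ := by
    refine ⟨hu'.2, ?_⟩
    have h1 : dist u' u < ρ - dist u x := lt_of_lt_of_le hu'.1 (min_le_right _ _)
    have := dist_triangle u' u x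
    simp only [Metric.mem_ball]
    linarith
  have hv'D : v' ∈ D ∩ Metric.ball x ρ := by
    refine ⟨hv'.2, ?_⟩
    have h1 : dist v' v < ρ - dist v x := lt_of_lt_of_le hv'.1 (min_le_right _ _)
    have := dist_triangle v' v x
    simp only [Metric.mem_ball]
    linarith
  have h1 : dist (rdsIter i t u) (rdsIter i t u') < e / 2 := by
    rw [dist_comm]
    exact hr1p u' (lt_of_lt_of_le hu'.1 (min_le_left _ _))
  have h2 : dist (rdsIter i t v') (rdsIter i t v) < e / 2 :=
    hr2p v' (lt_of_lt_of_le hv'.1 (min_le_left _ _))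
  have h3 : dist (rdsIter i t u') (rdsIter i t v') ≤ q ^ t := hi t u' hu'D v' hv'D
  calc dist (rdsIter i t u) (rdsIter i t v)
      ≤ dist (rdsIter i t u) (rdsIter i t u') + dist (rdsIter i t u') (rdsIter i t v')
        + dist (rdsIter i t v') (rdsIter i t v) := dist_triangle4 _ _ _ _
    _ ≤ q ^ t + e := by linarith

lemma LC_delta [Nonempty M]
    (hLC : ∀ x : M, ∀ᵐ i ∂P, ∃ B ∈ 𝓝 x, ∀ n : ℕ, Metric.diam (rdsIter i n '' B) ≤ q ^ n)
    {εE : ℝ≥0∞} (hε : 0 < εE) :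
    ∃ δ : ℝ, 0 < δ ∧ ∀ u v : M, dist u v ≤ δ →
      P {i | ¬ ∀ t : ℕ, dist (rdsIter i t u) (rdsIter i t v) ≤ q ^ t} ≤ εE := by
  haveI := hP.1
  obtain ⟨D, hDc, hDd⟩ := TopologicalSpace.exists_countable_dense M
  -- for every x there is a good radius
  have hpoint : ∀ x : M, ∃ ρ : ℝ, 0 < ρ ∧ 1 - εE < P (Ev (M := M) q D x ρ) := by
    intro x
    have hmono : Monotone fun m : ℕ => Ev (M := M) q D x (1 / (m + 1)) := by
      intro a b hab i hi t u hu v hv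
      have hsub : Metric.ball x (1 / (b + 1)) ⊆ Metric.ball x (1 / (a + 1)) := by
        apply Metric.ball_subset_ball
        apply one_div_le_one_div_of_le
        · positivity
        · have : (a : ℝ) ≤ b := Nat.cast_le.2 hab
          linarith
      exact hi t u ⟨hu.1, hsub hu.2⟩ v ⟨hv.1, hsub hv.2⟩
    have hU : ∀ᵐ i ∂P, i ∈ ⋃ m : ℕ, Ev (M := M) q D x (1 / (m + 1)) := by
      refine (hLC x).mono fun i hi => ?_
      obtain ⟨B, hB, hc⟩ := hi
      obtain ⟨ρ', hρ', hball⟩ := Metric.mem_nhds_iff.1 hB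
      obtain ⟨m, hm⟩ := exists_nat_one_div_lt hρ'
      refine Set.mem_iUnion.2 ⟨m, fun t u hu v hv => ?_⟩
      have hu' : rdsIter i t u ∈ rdsIter i t '' B :=
        Set.mem_image_of_mem _ (hball (Metric.ball_subset_ball hm.le hu.2))
      have hv' : rdsIter i t v ∈ rdsIter i t '' B :=
        Set.mem_image_of_mem _ (hball (Metric.ball_subset_ball hm.le hv.2))
      exact le_trans (Metric.dist_le_diam_of_mem Metric.isBounded_of_compactSpace hu' hv')
        (hc t)
    have hUmeas : ∀ m : ℕ, MeasurableSet (Ev (M := M) q D x (1 / (m + 1))) :=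
      fun m => Ev_measurable q hDc x _
    have hP1 : P (⋃ m : ℕ, Ev (M := M) q D x (1 / (m + 1))) = 1 := by
      rw [← prob_compl_eq_zero_iff (MeasurableSet.iUnion hUmeas)]
      exact ae_iff.1 hU
    have htend := tendsto_measure_iUnion_atTop (μ := P) hmono
    rw [hP1] at htend
    have hlt : (1 : ℝ≥0∞) - εE < 1 := ENNReal.sub_lt_self ENNReal.one_ne_top one_ne_zero hε.ne'
    obtain ⟨m, hm⟩ := (htend.eventually (eventually_gt_nhds hlt)).exists
    exact ⟨1 / (m + 1), by positivity, hm⟩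
  choose ρx hρx hPx using hpoint
  obtain ⟨t, ht⟩ := isCompact_univ.elim_finite_subcover
    (fun x : M => Metric.ball x (ρx x / 2))
    (fun x => Metric.isOpen_ball)
    (fun x _ => Set.mem_iUnion.2 ⟨x, Metric.mem_ball_self (by linarith [hρx x])⟩)
  have htne : t.Nonempty := by
    obtain ⟨x⟩ := ‹Nonempty M›
    obtain ⟨j, hj, _⟩ := Set.mem_iUnion₂.1 (ht (Set.mem_univ x))
    exact ⟨j, hj⟩
  refine ⟨t.inf' htne (fun j => ρx j / 2), ?_, ?_⟩
  · rw [Finset.lt_inf'_iff]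
    intro j _
    linarith [hρx j]
  · intro u v huv
    obtain ⟨j, hj, hujball⟩ := Set.mem_iUnion₂.1 (ht (Set.mem_univ u))
    have hδj : t.inf' htne (fun j => ρx j / 2) ≤ ρx j / 2 := Finset.inf'_le _ hj
    have huball : u ∈ Metric.ball j (ρx j) := by
      refine Metric.ball_subset_ball ?_ hujball
      linarith [hρx j]
    have hvball : v ∈ Metric.ball j (ρx j) := by
      simp only [Metric.mem_ball] at hujball ⊢
      have := dist_triangle v u j
      have h1 : dist v u ≤ ρx j / 2 := le_trans (by rw [dist_comm]; exact huv) hδj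
      linarith
    have hsub : {i : ℕ → C(M, M) | ¬ ∀ t : ℕ, dist (rdsIter i t u) (rdsIter i t v) ≤ q ^ t}
        ⊆ (Ev (M := M) q D j (ρx j))ᶜ := by
      intro i hi hiEv
      exact hi (fun t => Ev_strong q hDd hiEv huball hvball t)
    refine le_trans (measure_mono hsub) ?_
    rw [measure_compl (Ev_measurable q hDc j _) (measure_ne_top P _), measure_univ]
    rcases le_total 1 εE with h1 | h1
    · exact le_trans tsub_le_self h1
    · have := (hPx j).le
      calc (1 : ℝ≥0∞) - P (Ev (M := M) q D j (ρx j)) ≤ 1 - (1 - εE) :=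
            tsub_le_tsub_left this 1
        _ = εE := by
            rw [ENNReal.sub_sub_cancel ENNReal.one_ne_top h1]

lemma prox_Nr [Nonempty M]
    (hProx : ∀ x y : M, ∃ i : ℕ → C(M, M), (∀ n, i n ∈ measSupp μ) ∧
      ∃ φ : ℕ → ℕ, StrictMono φ ∧
        Tendsto (fun k => dist (rdsIter i (φ k) x) (rdsIter i (φ k) y)) atTop (𝓝 0))
    {δ : ℝ} (hδ : 0 < δ) :
    ∃ (N : ℕ) (r : ℝ≥0∞), 0 < r ∧ ∀ u v : M, ∃ m ≤ N, ∃ cyl : Set (ℕ → C(M, M)),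
      MeasurableSet cyl ∧ r ≤ P cyl ∧
        ∀ i ∈ cyl, dist (rdsIter i m u) (rdsIter i m v) ≤ δ := by
  haveI := hP.1
  have hpoint : ∀ p : M × M, ∃ (m : ℕ) (cyl : Set (ℕ → C(M, M))) (U : Set (M × M)),
      IsOpen U ∧ p ∈ U ∧ MeasurableSet cyl ∧ 0 < P cyl ∧
        ∀ ab ∈ U, ∀ i ∈ cyl, dist (rdsIter i m ab.1) (rdsIter i m ab.2) ≤ δ := by
    rintro ⟨u, v⟩
    obtain ⟨w, hwsupp, φm, hφm, hconv⟩ := hProx u v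
    have hev : ∀ᶠ k in atTop,
        dist (rdsIter w (φm k) u) (rdsIter w (φm k) v) < δ / 4 :=
      hconv.eventually_lt_const (by linarith)
    obtain ⟨k, hk⟩ := hev.exists
    set m := φm k with hm
    obtain ⟨η, hη, hpert⟩ := pert w m (δ / 4) (by linarith)
    refine ⟨m, {i | ∀ j : Fin m, i (j : ℕ) ∈ Metric.ball (w j) η},
      {ab : M × M | dist (rdsIter w m ab.1) (rdsIter w m ab.2) < δ / 2}, ?_, ?_, ?_, ?_, ?_⟩
    · exact isOpen_lt (Continuous.dist
        ((iter_continuous w m).comp continuous_fst)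
        ((iter_continuous w m).comp continuous_snd)) continuous_const
    · simpa using lt_trans hk (by linarith)
    · have hset : {i : ℕ → C(M, M) | ∀ j : Fin m, i (j : ℕ) ∈ Metric.ball (w j) η}
          = ⋂ j : Fin m, (fun i : ℕ → C(M, M) => i (j : ℕ)) ⁻¹' Metric.ball (w j) η := by
        ext i; simp
      rw [hset]
      exact MeasurableSet.iInter fun j => measurable_pi_apply (j : ℕ) measurableSet_ball
    · rw [hP.2 m (fun j => Metric.ball (w j) η) (fun j => measurableSet_ball)]
      rw [pos_iff_ne_zero, Finset.prod_ne_zero_iff]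
      intro j _
      exact (hwsupp j _ Metric.isOpen_ball (Metric.mem_ball_self hη)).ne'
    · rintro ⟨a, b⟩ hab i hi
      have hia : dist (rdsIter i m a) (rdsIter w m a) ≤ δ / 4 :=
        hpert i (fun k hk' => by simpa [Metric.mem_ball] using hi ⟨k, hk'⟩) a
      have hib : dist (rdsIter i m b) (rdsIter w m b) ≤ δ / 4 :=
        hpert i (fun k hk' => by simpa [Metric.mem_ball] using hi ⟨k, hk'⟩) b
      have hab' : dist (rdsIter w m a) (rdsIter w m b) < δ / 2 := hab
      calc dist (rdsIter i m a) (rdsIter i m b)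
          ≤ dist (rdsIter i m a) (rdsIter w m a) + dist (rdsIter w m a) (rdsIter w m b)
            + dist (rdsIter w m b) (rdsIter i m b) := dist_triangle4 _ _ _ _
        _ ≤ δ / 4 + δ / 2 + δ / 4 := by
            refine add_le_add (add_le_add hia hab'.le) ?_
            rw [dist_comm]; exact hib
        _ = δ := by ring
  choose mF cylF UF hUopen hUmem hcylmeas hcylpos hprop using hpoint
  obtain ⟨t, ht⟩ := isCompact_univ.elim_finite_subcover UF hUopen
    (fun p _ => Set.mem_iUnion.2 ⟨p, hUmem p⟩)
  have htne : t.Nonempty := by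
    obtain ⟨x⟩ := ‹Nonempty M›
    obtain ⟨j, hj, _⟩ := Set.mem_iUnion₂.1 (ht (Set.mem_univ (x, x)))
    exact ⟨j, hj⟩
  refine ⟨t.sup mF, t.inf' htne (fun p => P (cylF p)), ?_, ?_⟩
  · rw [Finset.lt_inf'_iff]
    exact fun p _ => hcylpos p
  · intro u v
    obtain ⟨p, hp, hpU⟩ := Set.mem_iUnion₂.1 (ht (Set.mem_univ (u, v)))
    exact ⟨mF p, Finset.le_sup hp, cylF p, hcylmeas p, Finset.inf'_le _ hp,
      fun i hi => hprop p (u, v) hpU i hi⟩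


/-! ### the hitting / synchronization events -/

def dd (u v : M) (m : ℕ) (i : ℕ → C(M, M)) : ℝ := dist (rdsIter i m u) (rdsIter i m v)

def ddF (K : ℕ) (u v : M) (m : ℕ) (ω : Fin K → C(M, M)) : ℝ :=
  dist (iterF K ω m u) (iterF K ω m v)

omit hP in
lemma measurable_dd (u v : M) (m : ℕ) : Measurable (dd (M := M) u v m) :=
  (measurable_iter m u).dist (measurable_iter m v)

omit hP in
lemma measurable_ddF (K : ℕ) (u v : M) (m : ℕ) : Measurable (ddF (M := M) K u v m) :=
  (measurable_iterF K m u).dist (measurable_iterF K m v)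

omit hP in
lemma ddF_res (K : ℕ) (u v : M) {m : ℕ} (hm : m ≤ K) (i : ℕ → C(M, M)) :
    ddF K u v m (res K i) = dd u v m i := by
  unfold ddF dd iterF
  rw [ext_res K i m hm u, ext_res K i m hm v]

def NH (δ : ℝ) (u v : M) (K : ℕ) : Set (ℕ → C(M, M)) :=
  {i | ∀ m < K, ¬ dd u v m i ≤ δ}

def FH (δ : ℝ) (u v : M) (m : ℕ) : Set (ℕ → C(M, M)) :=
  {i | dd u v m i ≤ δ ∧ ∀ m' < m, ¬ dd u v m' i ≤ δ}

def Sy (q : ℝ) (u v : M) (m : ℕ) : Set (ℕ → C(M, M)) :=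
  {i | ∀ t : ℕ, dist (rdsIter (shf m i) t (rdsIter i m u))
    (rdsIter (shf m i) t (rdsIter i m v)) ≤ q ^ t}

omit hP in
lemma measurable_NH (δ : ℝ) (u v : M) (K : ℕ) : MeasurableSet (NH (M := M) δ u v K) := by
  have : NH (M := M) δ u v K = ⋂ m < K, {i | ¬ dd u v m i ≤ δ} := by
    ext i; simp [NH]
  rw [this]
  exact MeasurableSet.biInter (Set.to_countable _) fun m _ =>
    (measurableSet_le (measurable_dd u v m) measurable_const).compl

omit hP in
lemma measurable_FH (δ : ℝ) (u v : M) (m : ℕ) : MeasurableSet (FH (M := M) δ u v m) := by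
  have : FH (M := M) δ u v m = {i | dd u v m i ≤ δ} ∩ NH (M := M) δ u v m := by
    ext i; simp [FH, NH]
  rw [this]
  exact (measurableSet_le (measurable_dd u v m) measurable_const).inter
    (measurable_NH δ u v m)

omit hP in
lemma measurable_SyC (q : ℝ) (u v : M) (m : ℕ) (t : ℕ) :
    Measurable fun i : ℕ → C(M, M) =>
      dist (rdsIter (shf m i) t (rdsIter i m u)) (rdsIter (shf m i) t (rdsIter i m v)) := by
  have h1 : Measurable fun i : ℕ → C(M, M) => rdsIter (shf m i) t (rdsIter i m u) :=
    (measurable_iter_pair t).comp ((measurable_iter m u).prodMk (measurable_shf m))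
  have h2 : Measurable fun i : ℕ → C(M, M) => rdsIter (shf m i) t (rdsIter i m v) :=
    (measurable_iter_pair t).comp ((measurable_iter m v).prodMk (measurable_shf m))
  exact h1.dist h2

omit hP in
lemma measurable_Sy (q : ℝ) (u v : M) (m : ℕ) : MeasurableSet (Sy (M := M) q u v m) := by
  have : Sy (M := M) q u v m = ⋂ t : ℕ, {i | dist (rdsIter (shf m i) t (rdsIter i m u))
      (rdsIter (shf m i) t (rdsIter i m v)) ≤ q ^ t} := by
    ext i; simp [Sy]
  rw [this]
  exact MeasurableSet.iInter fun t =>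
    measurableSet_le (measurable_SyC q u v m t) measurable_const

/-! ### peeling lemmas -/

lemma NH_peel {δ : ℝ} {N : ℕ} {r : ℝ≥0∞}
    (hNr : ∀ u v : M, ∃ m ≤ N, ∃ cyl : Set (ℕ → C(M, M)),
      MeasurableSet cyl ∧ r ≤ P cyl ∧
        ∀ i ∈ cyl, dist (rdsIter i m u) (rdsIter i m v) ≤ δ)
    (u v : M) (K : ℕ) :
    P (NH (M := M) δ u v (K + (N + 1))) ≤ (1 - r) * P (NH (M := M) δ u v K) := by
  haveI := hP.1
  set pre : Set (Fin K → C(M, M)) := {ω | ∀ m < K, ¬ ddF K u v m ω ≤ δ} with hpre_def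
  have hpre_meas : MeasurableSet pre := by
    have : pre = ⋂ m < K, {ω : Fin K → C(M, M) | ¬ ddF K u v m ω ≤ δ} := by
      ext ω; simp [hpre_def]
    rw [this]
    exact MeasurableSet.biInter (Set.to_countable _) fun m _ =>
      (measurableSet_le (measurable_ddF K u v m) measurable_const).compl
  set S : Set ((Fin K → C(M, M)) × (ℕ → C(M, M))) :=
    {p | p.1 ∈ pre ∧ ∀ m' ≤ N, ¬ dist (rdsIter p.2 m' (iterF K p.1 K u))
      (rdsIter p.2 m' (iterF K p.1 K v)) ≤ δ} with hS_def
  have hfu : ∀ m', Measurable fun p : (Fin K → C(M, M)) × (ℕ → C(M, M)) =>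
      dist (rdsIter p.2 m' (iterF K p.1 K u)) (rdsIter p.2 m' (iterF K p.1 K v)) := by
    intro m'
    have h1 : Measurable fun p : (Fin K → C(M, M)) × (ℕ → C(M, M)) =>
        rdsIter p.2 m' (iterF K p.1 K u) :=
      (measurable_iter_pair m').comp
        (((measurable_iterF K K u).comp measurable_fst).prodMk measurable_snd)
    have h2 : Measurable fun p : (Fin K → C(M, M)) × (ℕ → C(M, M)) =>
        rdsIter p.2 m' (iterF K p.1 K v) :=
      (measurable_iter_pair m').comp
        (((measurable_iterF K K v).comp measurable_fst).prodMk measurable_snd)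
    exact h1.dist h2
  have hS_meas : MeasurableSet S := by
    have hS2 : MeasurableSet {p : (Fin K → C(M, M)) × (ℕ → C(M, M)) |
        ∀ m' ≤ N, ¬ dist (rdsIter p.2 m' (iterF K p.1 K u))
          (rdsIter p.2 m' (iterF K p.1 K v)) ≤ δ} := by
      have : {p : (Fin K → C(M, M)) × (ℕ → C(M, M)) |
          ∀ m' ≤ N, ¬ dist (rdsIter p.2 m' (iterF K p.1 K u))
            (rdsIter p.2 m' (iterF K p.1 K v)) ≤ δ}
          = ⋂ m' ≤ N, {p : (Fin K → C(M, M)) × (ℕ → C(M, M)) |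
              ¬ dist (rdsIter p.2 m' (iterF K p.1 K u))
                (rdsIter p.2 m' (iterF K p.1 K v)) ≤ δ} := by
        ext p; simp
      rw [this]
      exact MeasurableSet.biInter (Set.to_countable _) fun m' _ =>
        (measurableSet_le (hfu m') measurable_const).compl
    exact (hpre_meas.preimage measurable_fst).inter hS2
  have hsplit : split K ⁻¹' S = NH (M := M) δ u v (K + (N + 1)) := by
    ext i
    have hdd : ∀ m ≤ K, ddF K u v m (res K i) = dd u v m i := fun m hm => ddF_res K u v hm i
    have hfut : ∀ m' : ℕ, dist (rdsIter (shf K i) m' (iterF K (res K i) K u))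
        (rdsIter (shf K i) m' (iterF K (res K i) K v)) = dd u v (K + m') i := by
      intro m'
      unfold iterF dd
      rw [ext_res K i K le_rfl u, ext_res K i K le_rfl v,
        iter_shift i K m' u, iter_shift i K m' v]
      rfl
    simp only [Set.mem_preimage, hS_def, Set.mem_setOf_eq, split, hpre_def, NH]
    constructor
    · rintro ⟨h1, h2⟩ m hm
      rcases Nat.lt_or_ge m K with hmK | hmK
      · rw [← hdd m hmK.le]; exact h1 m hmK
      · have hm' : m - K ≤ N := by omega
        have := h2 (m - K) hm'
        rw [hfut (m - K)] at this
        have hKm : K + (m - K) = m := by omega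
        rwa [hKm] at this
    · intro h
      refine ⟨fun m hm => ?_, fun m' hm' => ?_⟩
      · rw [hdd m hm.le]; exact h m (by omega)
      · rw [hfut m']; exact h (K + m') (by omega)
  have hQpre : Q μ K pre = P (NH (M := M) δ u v K) := by
    have : res K ⁻¹' pre = NH (M := M) δ u v K := by
      ext i
      simp only [Set.mem_preimage, hpre_def, Set.mem_setOf_eq, NH]
      constructor
      · intro h m hm; rw [← ddF_res K u v hm.le i]; exact h m hm
      · intro h m hm; rw [ddF_res K u v hm.le i]; exact h m hm
    rw [← this, cyl_apply μ P hP K hpre_meas]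
  rw [← hsplit, split_apply μ P hP K hS_meas]
  have hsec : ∀ ω₁ : Fin K → C(M, M), P (Prod.mk ω₁ ⁻¹' S)
      ≤ (1 - r) * pre.indicator (fun _ => 1) ω₁ := by
    intro ω₁
    by_cases hω : ω₁ ∈ pre
    · rw [Set.indicator_of_mem hω, mul_one]
      obtain ⟨m', hm'N, cyl, hcylmeas, hcylP, hcylprop⟩ :=
        hNr (iterF K ω₁ K u) (iterF K ω₁ K v)
      have hsub : Prod.mk ω₁ ⁻¹' S ⊆ cylᶜ := by
        intro ω₂ hω₂ hcyl
        exact (hω₂.2 m' hm'N) (hcylprop ω₂ hcyl)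
      refine le_trans (measure_mono hsub) ?_
      rw [measure_compl hcylmeas (measure_ne_top P _), measure_univ]
      exact tsub_le_tsub_left hcylP 1
    · have hsub : Prod.mk ω₁ ⁻¹' S = ∅ := by
        ext ω₂
        simp only [Set.mem_preimage, hS_def, Set.mem_setOf_eq, Set.mem_empty_iff_false,
          iff_false]
        intro hc; exact hω hc.1
      rw [hsub, Set.indicator_of_notMem hω, measure_empty, mul_zero]
  calc ∫⁻ ω₁, P (Prod.mk ω₁ ⁻¹' S) ∂(Q μ K)
      ≤ ∫⁻ ω₁, (1 - r) * pre.indicator (fun _ => 1) ω₁ ∂(Q μ K) := lintegral_mono hsec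
    _ = (1 - r) * ∫⁻ ω₁, pre.indicator (fun _ => 1) ω₁ ∂(Q μ K) := by
        rw [lintegral_const_mul _ (measurable_const.indicator hpre_meas)]
    _ = (1 - r) * P (NH (M := M) δ u v K) := by
        rw [lintegral_indicator_const hpre_meas, one_mul, hQpre]


lemma FH_peel {δ : ℝ} {εE : ℝ≥0∞}
    (hδprop : ∀ u' v' : M, dist u' v' ≤ δ →
      P {j | ¬ ∀ t : ℕ, dist (rdsIter j t u') (rdsIter j t v') ≤ q ^ t} ≤ εE)
    (u v : M) (m : ℕ) :
    P (FH (M := M) δ u v m ∩ (Sy (M := M) q u v m)ᶜ) ≤ εE * P (FH (M := M) δ u v m) := by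
  haveI := hP.1
  set pre : Set (Fin m → C(M, M)) :=
    {ω | ddF m u v m ω ≤ δ ∧ ∀ m' < m, ¬ ddF m u v m' ω ≤ δ} with hpre_def
  have hpre_meas : MeasurableSet pre := by
    have : pre = {ω : Fin m → C(M, M) | ddF m u v m ω ≤ δ}
        ∩ ⋂ m' < m, {ω : Fin m → C(M, M) | ¬ ddF m u v m' ω ≤ δ} := by
      ext ω; simp [hpre_def]
    rw [this]
    exact (measurableSet_le (measurable_ddF m u v m) measurable_const).inter
      (MeasurableSet.biInter (Set.to_countable _) fun m' _ =>
        (measurableSet_le (measurable_ddF m u v m') measurable_const).compl)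
  set S : Set ((Fin m → C(M, M)) × (ℕ → C(M, M))) :=
    {p | p.1 ∈ pre ∧ ¬ ∀ t : ℕ, dist (rdsIter p.2 t (iterF m p.1 m u))
      (rdsIter p.2 t (iterF m p.1 m v)) ≤ q ^ t} with hS_def
  have hfu : ∀ t : ℕ, Measurable fun p : (Fin m → C(M, M)) × (ℕ → C(M, M)) =>
      dist (rdsIter p.2 t (iterF m p.1 m u)) (rdsIter p.2 t (iterF m p.1 m v)) := by
    intro t
    have h1 : Measurable fun p : (Fin m → C(M, M)) × (ℕ → C(M, M)) =>
        rdsIter p.2 t (iterF m p.1 m u) :=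
      (measurable_iter_pair t).comp
        (((measurable_iterF m m u).comp measurable_fst).prodMk measurable_snd)
    have h2 : Measurable fun p : (Fin m → C(M, M)) × (ℕ → C(M, M)) =>
        rdsIter p.2 t (iterF m p.1 m v) :=
      (measurable_iter_pair t).comp
        (((measurable_iterF m m v).comp measurable_fst).prodMk measurable_snd)
    exact h1.dist h2
  have hS_meas : MeasurableSet S := by
    have hS2 : MeasurableSet {p : (Fin m → C(M, M)) × (ℕ → C(M, M)) |
        ∀ t : ℕ, dist (rdsIter p.2 t (iterF m p.1 m u))
          (rdsIter p.2 t (iterF m p.1 m v)) ≤ q ^ t} := by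
      have : {p : (Fin m → C(M, M)) × (ℕ → C(M, M)) |
          ∀ t : ℕ, dist (rdsIter p.2 t (iterF m p.1 m u))
            (rdsIter p.2 t (iterF m p.1 m v)) ≤ q ^ t}
          = ⋂ t : ℕ, {p : (Fin m → C(M, M)) × (ℕ → C(M, M)) |
              dist (rdsIter p.2 t (iterF m p.1 m u))
                (rdsIter p.2 t (iterF m p.1 m v)) ≤ q ^ t} := by
        ext p; simp
      rw [this]
      exact MeasurableSet.iInter fun t => measurableSet_le (hfu t) measurable_const
    exact (hpre_meas.preimage measurable_fst).inter hS2.compl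
  have hsplit : split m ⁻¹' S = FH (M := M) δ u v m ∩ (Sy (M := M) q u v m)ᶜ := by
    ext i
    have hdd : ∀ m'' ≤ m, ddF m u v m'' (res m i) = dd u v m'' i :=
      fun m'' hm'' => ddF_res m u v hm'' i
    have hfut : ∀ t : ℕ, dist (rdsIter (shf m i) t (iterF m (res m i) m u))
        (rdsIter (shf m i) t (iterF m (res m i) m v))
        = dist (rdsIter (shf m i) t (rdsIter i m u)) (rdsIter (shf m i) t (rdsIter i m v)) := by
      intro t
      unfold iterF
      rw [ext_res m i m le_rfl u, ext_res m i m le_rfl v]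
    simp only [Set.mem_preimage, hS_def, Set.mem_setOf_eq, split, hpre_def,
      Set.mem_inter_iff, Set.mem_compl_iff, FH, Sy]
    constructor
    · rintro ⟨⟨h1, h2⟩, h3⟩
      refine ⟨⟨?_, ?_⟩, ?_⟩
      · rw [← hdd m le_rfl]; exact h1
      · intro m' hm'; rw [← hdd m' hm'.le]; exact h2 m' hm'
      · intro hc; exact h3 (fun t => by rw [hfut t]; exact hc t)
    · rintro ⟨⟨h1, h2⟩, h3⟩
      refine ⟨⟨?_, ?_⟩, ?_⟩
      · rw [hdd m le_rfl]; exact h1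
      · intro m' hm'; rw [hdd m' hm'.le]; exact h2 m' hm'
      · intro hc; exact h3 (fun t => by rw [← hfut t]; exact hc t)
  have hQpre : Q μ m pre = P (FH (M := M) δ u v m) := by
    have : res m ⁻¹' pre = FH (M := M) δ u v m := by
      ext i
      simp only [Set.mem_preimage, hpre_def, Set.mem_setOf_eq, FH]
      constructor
      · rintro ⟨h1, h2⟩
        exact ⟨by rw [← ddF_res m u v le_rfl i]; exact h1,
          fun m' hm' => by rw [← ddF_res m u v hm'.le i]; exact h2 m' hm'⟩
      · rintro ⟨h1, h2⟩
        exact ⟨by rw [ddF_res m u v le_rfl i]; exact h1,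
          fun m' hm' => by rw [ddF_res m u v hm'.le i]; exact h2 m' hm'⟩
    rw [← this, cyl_apply μ P hP m hpre_meas]
  rw [← hsplit, split_apply μ P hP m hS_meas]
  have hsec : ∀ ω₁ : Fin m → C(M, M), P (Prod.mk ω₁ ⁻¹' S)
      ≤ εE * pre.indicator (fun _ => 1) ω₁ := by
    intro ω₁
    by_cases hω : ω₁ ∈ pre
    · rw [Set.indicator_of_mem hω, mul_one]
      have hdistδ : dist (iterF m ω₁ m u) (iterF m ω₁ m v) ≤ δ := hω.1
      have hsub : Prod.mk ω₁ ⁻¹' S ⊆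
          {j | ¬ ∀ t : ℕ, dist (rdsIter j t (iterF m ω₁ m u))
            (rdsIter j t (iterF m ω₁ m v)) ≤ q ^ t} :=
        fun ω₂ hω₂ => hω₂.2
      exact le_trans (measure_mono hsub) (hδprop _ _ hdistδ)
    · have hsub : Prod.mk ω₁ ⁻¹' S = ∅ := by
        ext ω₂
        simp only [Set.mem_preimage, hS_def, Set.mem_setOf_eq, Set.mem_empty_iff_false,
          iff_false]
        intro hc; exact hω hc.1
      rw [hsub, Set.indicator_of_notMem hω, measure_empty, mul_zero]
  calc ∫⁻ ω₁, P (Prod.mk ω₁ ⁻¹' S) ∂(Q μ m)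
      ≤ ∫⁻ ω₁, εE * pre.indicator (fun _ => 1) ω₁ ∂(Q μ m) := lintegral_mono hsec
    _ = εE * ∫⁻ ω₁, pre.indicator (fun _ => 1) ω₁ ∂(Q μ m) := by
        rw [lintegral_const_mul _ (measurable_const.indicator hpre_meas)]
    _ = εE * P (FH (M := M) δ u v m) := by
        rw [lintegral_indicator_const hpre_meas, one_mul, hQpre]

lemma NH_pow {δ : ℝ} {N : ℕ} {r : ℝ≥0∞}
    (hNr : ∀ u v : M, ∃ m ≤ N, ∃ cyl : Set (ℕ → C(M, M)),
      MeasurableSet cyl ∧ r ≤ P cyl ∧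
        ∀ i ∈ cyl, dist (rdsIter i m u) (rdsIter i m v) ≤ δ)
    (u v : M) (k : ℕ) :
    P (NH (M := M) δ u v (k * (N + 1))) ≤ (1 - r) ^ k := by
  haveI := hP.1
  induction k with
  | zero => simpa using prob_le_one
  | succ k ih =>
      have hstep := NH_peel μ P hP hNr u v (k * (N + 1))
      have harr : (k + 1) * (N + 1) = k * (N + 1) + (N + 1) := by ring
      rw [harr]
      calc P (NH (M := M) δ u v (k * (N + 1) + (N + 1)))
          ≤ (1 - r) * P (NH (M := M) δ u v (k * (N + 1))) := hstep
        _ ≤ (1 - r) * (1 - r) ^ k := mul_le_mul_right ih _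
        _ = (1 - r) ^ (k + 1) := by rw [pow_succ, mul_comm]

lemma main_est {δ : ℝ} {N : ℕ} {r εE : ℝ≥0∞} (hq : q ∈ Set.Ioo (0 : ℝ) 1)
    (hNr : ∀ u v : M, ∃ m ≤ N, ∃ cyl : Set (ℕ → C(M, M)),
      MeasurableSet cyl ∧ r ≤ P cyl ∧
        ∀ i ∈ cyl, dist (rdsIter i m u) (rdsIter i m v) ≤ δ)
    (hδprop : ∀ u' v' : M, dist u' v' ≤ δ →
      P {j | ¬ ∀ t : ℕ, dist (rdsIter j t u') (rdsIter j t v') ≤ q ^ t} ≤ εE)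
    (u v : M) (k n₀ n : ℕ) (hn : k * (N + 1) + n₀ ≤ n) :
    P {i | ¬ dd (M := M) u v n i ≤ q ^ n₀} ≤ (1 - r) ^ k + εE := by
  haveI := hP.1
  classical
  set K := k * (N + 1) with hK
  have hsub : {i : ℕ → C(M, M) | ¬ dd (M := M) u v n i ≤ q ^ n₀}
      ⊆ NH (M := M) δ u v K ∪ ⋃ m ∈ Finset.range K,
        (FH (M := M) δ u v m ∩ (Sy (M := M) q u v m)ᶜ) := by
    intro i hi
    by_contra hno
    rw [Set.mem_union] at hno
    push_neg at hno
    obtain ⟨hnNH, hnFH⟩ := hno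
    have hexK : ∃ m, m < K ∧ dd (M := M) u v m i ≤ δ := by
      by_contra hc
      push_neg at hc
      exact hnNH (fun m hm hle => (hc m hm).not_ge hle)
    obtain ⟨mw, hmwK, hmw⟩ := hexK
    have hex : ∃ m, dd (M := M) u v m i ≤ δ := ⟨mw, hmw⟩
    set m₀ := Nat.find hex with hm₀
    have hm₀K : m₀ < K := lt_of_le_of_lt (Nat.find_min' hex hmw) hmwK
    have hFH : i ∈ FH (M := M) δ u v m₀ :=
      ⟨Nat.find_spec hex, fun m' hm' => Nat.find_min hex hm'⟩
    have hSy : i ∈ Sy (M := M) q u v m₀ := by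
      by_contra hSy
      exact hnFH (Set.mem_iUnion₂.2 ⟨m₀, Finset.mem_range.2 hm₀K, hFH, hSy⟩)
    apply hi
    have h1 : rdsIter i n u = rdsIter (shf m₀ i) (n - m₀) (rdsIter i m₀ u) := by
      conv_lhs => rw [show n = m₀ + (n - m₀) by omega]
      exact iter_shift i m₀ (n - m₀) u
    have h2 : rdsIter i n v = rdsIter (shf m₀ i) (n - m₀) (rdsIter i m₀ v) := by
      conv_lhs => rw [show n = m₀ + (n - m₀) by omega]
      exact iter_shift i m₀ (n - m₀) v
    have h3 : dd (M := M) u v n i ≤ q ^ (n - m₀) := by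
      unfold dd
      rw [h1, h2]
      exact hSy (n - m₀)
    refine le_trans h3 ?_
    exact pow_le_pow_of_le_one hq.1.le hq.2.le (by omega)
  refine le_trans (measure_mono hsub) ?_
  refine le_trans (measure_union_le _ _) ?_
  refine add_le_add (NH_pow μ P hP hNr u v k) ?_
  have hdisj : (↑(Finset.range K) : Set ℕ).PairwiseDisjoint (FH (M := M) δ u v) := by
    intro a _ b _ hab
    refine Set.disjoint_left.2 fun i hia hib => ?_
    rcases Nat.lt_or_ge a b with h | h
    · exact (hib.2 a h) hia.1
    · exact (hia.2 b (lt_of_le_of_ne h (Ne.symm hab))) hib.1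
  refine le_trans (measure_biUnion_finset_le _ _) ?_
  calc ∑ m ∈ Finset.range K, P (FH (M := M) δ u v m ∩ (Sy (M := M) q u v m)ᶜ)
      ≤ ∑ m ∈ Finset.range K, εE * P (FH (M := M) δ u v m) :=
        Finset.sum_le_sum fun m _ => FH_peel μ P hP q hδprop u v m
    _ = εE * ∑ m ∈ Finset.range K, P (FH (M := M) δ u v m) := by rw [Finset.mul_sum]
    _ = εE * P (⋃ m ∈ Finset.range K, FH (M := M) δ u v m) := by
        rw [measure_biUnion_finset hdisj (fun m _ => measurable_FH δ u v m)]
    _ ≤ εE * 1 := mul_le_mul_right prob_le_one _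
    _ = εE := mul_one _


omit hP in
lemma abs_int {α : Type*} [MeasurableSpace α] (m : Measure α) (f : α → ℝ) :
    |∫ a, f a ∂m| ≤ ∫ a, |f a| ∂m := by
  simpa [Real.norm_eq_abs] using norm_integral_le_integral_norm (μ := m) f

end RDSaux

theorem stmt6 {M : Type*} [MetricSpace M] [CompactSpace M]
    [MeasurableSpace M] [BorelSpace M]
    [MeasurableSpace C(M, M)] [BorelSpace C(M, M)]
    (μ : Measure C(M, M)) [IsProbabilityMeasure μ]
    (P : Measure (ℕ → C(M, M))) (hP : IsProductMeasure μ P)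
    (q : ℝ) (hq : q ∈ Set.Ioo (0 : ℝ) 1)
    (hProx : PropP μ) (hLC : PropLC P q)
    (ν : Measure M) (hν : IsProbabilityMeasure ν) (hsta : IsMuStationary μ ν) :
    ∀ φ : C(M, ℝ),
      Tendsto (fun n : ℕ =>
          ⨆ x : M, |(∫ i, φ (rdsIter i n x) ∂P) - ∫ z, φ z ∂ν|)
        atTop (𝓝 0) := by
  intro φ
  haveI := hP.1
  haveI := hν
  have hMne : Nonempty M := by
    by_contra h
    rw [not_nonempty_iff] at h
    have h0 : ν Set.univ = 0 := by
      rw [Set.univ_eq_empty_iff.2 h]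
      exact measure_empty
    rw [measure_univ] at h0
    exact one_ne_zero h0
  have hIsup : ∀ n x, (∫ i, φ (rdsIter i n x) ∂P) = RDSaux.T φ P n x := fun n x => rfl
  rw [Metric.tendsto_atTop]
  intro ε hε
  set Cφ := ‖φ‖ with hCφdef
  have hCφ : 0 ≤ Cφ := norm_nonneg _
  set ε₂ : ℝ := ε / (8 * (Cφ + 1)) with hε₂def
  have hε₂ : 0 < ε₂ := by positivity
  set εE : ℝ≥0∞ := ENNReal.ofReal ε₂ with hεEdef
  have hεE : 0 < εE := ENNReal.ofReal_pos.2 hε₂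
  obtain ⟨δ, hδ, hδprop⟩ := RDSaux.LC_delta μ P hP q hLC hεE
  obtain ⟨N, r, hr, hNr⟩ := RDSaux.prox_Nr μ P hP hProx hδ
  obtain ⟨dφ, hdφpos, hdφ⟩ := Metric.uniformContinuous_iff.1
    (CompactSpace.uniformContinuous_of_continuous φ.continuous) (ε / 4) (by linarith)
  have hqto : Tendsto (fun n : ℕ => q ^ n) atTop (𝓝 0) :=
    tendsto_pow_atTop_nhds_zero_of_lt_one hq.1.le hq.2
  obtain ⟨n₀, hn₀⟩ := (hqto.eventually_lt_const hdφpos).exists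
  have h1r : (1 : ℝ≥0∞) - r < 1 := ENNReal.sub_lt_self ENNReal.one_ne_top one_ne_zero hr.ne'
  obtain ⟨k₀, hk₀⟩ :=
    ((ENNReal.tendsto_pow_atTop_nhds_zero_of_lt_one h1r).eventually
      (eventually_lt_nhds hεE)).exists
  refine ⟨k₀ * (N + 1) + n₀, fun n hn => ?_⟩
  -- pair estimate
  have hpair : ∀ u v : M, |RDSaux.T φ P n u - RDSaux.T φ P n v| ≤ ε / 4 + ε / 2 := by
    intro u v
    have hbad := RDSaux.main_est μ P hP q hq hNr hδprop u v k₀ n₀ n hn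
    set Bad : Set (ℕ → C(M, M)) := {i | ¬ RDSaux.dd u v n i ≤ q ^ n₀} with hBaddef
    have hBadmeas : MeasurableSet Bad :=
      (measurableSet_le (RDSaux.measurable_dd u v n) measurable_const).compl
    have hmeasu : Measurable fun i : ℕ → C(M, M) => φ (rdsIter i n u) :=
      φ.continuous.measurable.comp (RDSaux.measurable_iter n u)
    have hmeasv : Measurable fun i : ℕ → C(M, M) => φ (rdsIter i n v) :=
      φ.continuous.measurable.comp (RDSaux.measurable_iter n v)
    have hintu : Integrable (fun i => φ (rdsIter i n u)) P :=
      RDSaux.integrable_bdd P hmeasu Cφ (fun a => RDSaux.abs_phi_le φ _)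
    have hintv : Integrable (fun i => φ (rdsIter i n v)) P :=
      RDSaux.integrable_bdd P hmeasv Cφ (fun a => RDSaux.abs_phi_le φ _)
    have hptw : ∀ i, |φ (rdsIter i n u) - φ (rdsIter i n v)|
        ≤ ε / 4 + Bad.indicator (fun _ => 2 * Cφ) i := by
      intro i
      by_cases hib : i ∈ Bad
      · rw [Set.indicator_of_mem hib]
        have h1 : |φ (rdsIter i n u) - φ (rdsIter i n v)|
            ≤ |φ (rdsIter i n u)| + |φ (rdsIter i n v)| := abs_sub _ _
        have h2 := RDSaux.abs_phi_le φ (rdsIter i n u)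
        have h3 := RDSaux.abs_phi_le φ (rdsIter i n v)
        linarith
      · rw [Set.indicator_of_notMem hib, add_zero]
        have hd : RDSaux.dd u v n i ≤ q ^ n₀ := not_not.1 (fun hc => hib hc)
        have hlt : dist (rdsIter i n u) (rdsIter i n v) < dφ := lt_of_le_of_lt hd hn₀
        have := hdφ hlt
        rw [Real.dist_eq] at this
        exact this.le
    have hint1 : Integrable (fun i => |φ (rdsIter i n u) - φ (rdsIter i n v)|) P :=
      (hintu.sub hintv).abs
    have hintind : Integrable (fun i => Bad.indicator (fun _ => 2 * Cφ) i) P :=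
      (integrable_const (2 * Cφ)).indicator hBadmeas
    have hint2 : Integrable (fun i => ε / 4 + Bad.indicator (fun _ => 2 * Cφ) i) P :=
      (integrable_const (ε / 4)).add hintind
    have hPB : (P Bad).toReal ≤ 2 * ε₂ := by
      have h2 : P Bad ≤ εE + εE := le_trans hbad (add_le_add hk₀.le le_rfl)
      have h3 : (εE + εE).toReal = ε₂ + ε₂ := by
        rw [ENNReal.toReal_add ENNReal.ofReal_ne_top ENNReal.ofReal_ne_top,
          ENNReal.toReal_ofReal hε₂.le]
      calc (P Bad).toReal ≤ (εE + εE).toReal :=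
            ENNReal.toReal_mono (by finiteness) h2
        _ = 2 * ε₂ := by rw [h3]; ring
    have hmul : 2 * Cφ * (P Bad).toReal ≤ ε / 2 := by
      have h4 : 2 * Cφ * (P Bad).toReal ≤ 2 * Cφ * (2 * ε₂) :=
        mul_le_mul_of_nonneg_left hPB (by linarith)
      refine le_trans h4 ?_
      have hkey : ε / 2 - 2 * Cφ * (2 * (ε / (8 * (Cφ + 1)))) = ε / (2 * (Cφ + 1)) := by
        field_simp
        ring
      have hpos : 0 < ε / (2 * (Cφ + 1)) := by positivity
      rw [hε₂def]
      linarith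
    calc |RDSaux.T φ P n u - RDSaux.T φ P n v|
        = |∫ i, (φ (rdsIter i n u) - φ (rdsIter i n v)) ∂P| := by
          unfold RDSaux.T
          rw [integral_sub hintu hintv]
      _ ≤ ∫ i, |φ (rdsIter i n u) - φ (rdsIter i n v)| ∂P :=
          RDSaux.abs_int _ _
      _ ≤ ∫ i, (ε / 4 + Bad.indicator (fun _ => 2 * Cφ) i) ∂P :=
          integral_mono hint1 hint2 hptw
      _ = ε / 4 + (P Bad).toReal * (2 * Cφ) := by
          rw [integral_add (integrable_const _) hintind, integral_const, probReal_univ,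
            integral_indicator_const _ hBadmeas]
          simp [smul_eq_mul, measureReal_def]
      _ ≤ ε / 4 + ε / 2 := by
          have : (P Bad).toReal * (2 * Cφ) = 2 * Cφ * (P Bad).toReal := by ring
          rw [this]
          linarith
  -- sup estimate
  have hTint : Integrable (RDSaux.T φ P n) ν :=
    RDSaux.integrable_bdd ν (RDSaux.measurable_T P φ n) Cφ
      (fun x => RDSaux.abs_T_le P φ n x)
  have hTb : ∀ x : M, |RDSaux.T φ P n x - ∫ z, φ z ∂ν| ≤ ε / 4 + ε / 2 := by
    intro x
    have hTν := RDSaux.T_integral μ P hP φ ν hsta n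
    have hrw : RDSaux.T φ P n x - ∫ z, φ z ∂ν
        = ∫ z, (RDSaux.T φ P n x - RDSaux.T φ P n z) ∂ν := by
      rw [integral_sub (integrable_const _) hTint, integral_const, probReal_univ, hTν]
      simp
    rw [hrw]
    have h1 : |∫ z, (RDSaux.T φ P n x - RDSaux.T φ P n z) ∂ν|
        ≤ ∫ z, |RDSaux.T φ P n x - RDSaux.T φ P n z| ∂ν := RDSaux.abs_int _ _
    refine le_trans h1 ?_
    have h2 : ∫ z, |RDSaux.T φ P n x - RDSaux.T φ P n z| ∂ν
        ≤ ∫ _z, (ε / 4 + ε / 2) ∂ν := by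
      apply integral_mono ((integrable_const _).sub hTint).abs (integrable_const _)
      exact fun z => hpair x z
    refine le_trans h2 ?_
    simp
  have hsup_le : (⨆ x : M, |RDSaux.T φ P n x - ∫ z, φ z ∂ν|) ≤ ε / 4 + ε / 2 :=
    Real.iSup_le (fun x => hTb x) (by linarith)
  have hsup_nonneg : 0 ≤ ⨆ x : M, |RDSaux.T φ P n x - ∫ z, φ z ∂ν| :=
    Real.iSup_nonneg (fun x => abs_nonneg _)
  simp only [hIsup]
  rw [Real.dist_eq, sub_zero, abs_of_nonneg hsup_nonneg]
  linarith
end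
end
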